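/- arXiv:2603.08010 — 4 statements merged into one kernel-verified Lean document; each statement's English description precedes it below -/
import Mathlib

section
/- Let g : ℕ → ℕ be limit computable via a primitive recursive approximation: there is a primitive recursive g* : ℕ → ℕ → ℕ (Primrec₂ g*) such that for every x there is s₀ with g* x s = g x for all s ≥ s₀. Then there exist injective primitive recursive functions f_A, f_B : ℕ → ℕ such that every orbit of f_A is an ω-chain, f_A has infinitely many orbits, (ℕ, f_A) and (ℕ, f_B) are isomorphic, and for every isomorphism h from (ℕ, f_A) to (ℕ, f_B), the function g is Turing reducible to h, i.e., g (viewed as a partial function ℕ →. ℕ) is partial recursive relative to the oracle h. -/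
/-- The orbit of `a` under `f`. -/
def Orbit (f : ℕ → ℕ) (a : ℕ) : Set ℕ := {b : ℕ | ∃ m n : ℕ, f^[m] a = f^[n] b}

/-- `h` is an isomorphism from the injection structure `(ℕ, f)` to `(ℕ, g)`. -/
def IsInjIso (f g h : ℕ → ℕ) : Prop :=
  Function.Bijective h ∧ ∀ n : ℕ, h (f n) = g (h n)

/-- The orbit of `a` under `f` is an ω-chain. -/
def IsOmegaChain (f : ℕ → ℕ) (a : ℕ) : Prop :=
  (Orbit f a).Infinite ∧ ∃ b ∈ Orbit f a, b ∉ Set.range f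

/-- Partial recursiveness relative to an oracle `g` (Mathlib's `Nat.Partrec`
augmented with an oracle clause); this is Mathlib's later `RecursiveIn`. -/
inductive RecursiveIn' (g : ℕ →. ℕ) : (ℕ →. ℕ) → Prop
  | zero : RecursiveIn' g (pure 0)
  | succ : RecursiveIn' g ↑Nat.succ
  | left : RecursiveIn' g ↑fun n : ℕ => n.unpair.1
  | right : RecursiveIn' g ↑fun n : ℕ => n.unpair.2
  | oracle : RecursiveIn' g g
  | pair {f h : ℕ →. ℕ} : RecursiveIn' g f → RecursiveIn' g h →
      RecursiveIn' g fun n => Nat.pair <$> f n <*> h n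
  | comp {f h : ℕ →. ℕ} : RecursiveIn' g f → RecursiveIn' g h →
      RecursiveIn' g fun n => h n >>= f
  | prec {f h : ℕ →. ℕ} : RecursiveIn' g f → RecursiveIn' g h →
      RecursiveIn' g (Nat.unpaired fun a n =>
        n.rec (f a) fun y IH => do let i ← IH; h (Nat.pair a (Nat.pair y i)))
  | rfind {f : ℕ →. ℕ} : RecursiveIn' g f →
      RecursiveIn' g fun a => Nat.rfind fun n => (fun m => m = 0) <$> f (Nat.pair a n)

/-- `f` is Turing reducible to `g`. -/
def TuringReducible' (f g : ℕ →. ℕ) : Prop := RecursiveIn' g f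

namespace PRC

variable (gs : ℕ → ℕ → ℕ)

/-- there is a "change" at stage `s` in row `x`. -/
def Chg (x s : ℕ) : Prop := 1 ≤ s ∧ gs x (s + 1) ≠ gs x s

instance (x s : ℕ) : Decidable (Chg gs x s) := by unfold Chg; infer_instance

/-- previous change before `s` (0 if none). -/
def pv (x s : ℕ) : ℕ := Nat.rec 0 (fun t ih => if Chg gs x t then t else ih) s

lemma pv_succ (x s : ℕ) : pv gs x (s + 1) = if Chg gs x s then s else pv gs x s := rfl

lemma pv_lt (x : ℕ) : ∀ s, s ≠ 0 → pv gs x s < s := by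
  intro s hs
  induction s with
  | zero => omega
  | succ t ih =>
    rw [pv_succ]
    split
    · omega
    · rcases Nat.eq_zero_or_pos t with h | h
      · subst h; simp [pv]
      · exact Nat.lt_succ_of_lt (ih (by omega))

lemma pv_le_of_chg {x c : ℕ} (hc : Chg gs x c) : ∀ {s}, c < s → c ≤ pv gs x s := by
  intro s
  induction s with
  | zero => omega
  | succ t ih =>
    intro hcs
    rw [pv_succ]
    split
    · omega
    · rename_i hnc
      have : c ≠ t := fun h => hnc (h ▸ hc)
      exact ih (by omega)

lemma pv_chg_or_zero (x s : ℕ) : Chg gs x (pv gs x s) ∨ pv gs x s = 0 := by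
  induction s with
  | zero => right; rfl
  | succ t ih =>
    rw [pv_succ]
    split
    · left; assumption
    · exact ih

/-- the successor function inside row `x` of structure B. -/
def fBr (x k : ℕ) : ℕ :=
  if k % 2 = 0 then
    if Chg gs x (k / 2) then 2 * pv gs x (k / 2) else k + 1
  else
    if Chg gs x (k / 2 + 1) then k + 2 else k + 1

lemma fBr_even (x s : ℕ) :
    fBr gs x (2 * s) = if Chg gs x s then 2 * pv gs x s else 2 * s + 1 := by
  have h1 : (2 * s) % 2 = 0 := by omega
  have h2 : (2 * s) / 2 = s := by omega
  simp [fBr, h1, h2]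

lemma fBr_odd (x s : ℕ) :
    fBr gs x (2 * s + 1) = if Chg gs x (s + 1) then 2 * s + 3 else 2 * s + 2 := by
  have h1 : ¬((2 * s + 1) % 2 = 0) := by omega
  have h2 : (2 * s + 1) / 2 = s := by omega
  simp [fBr, h1, h2]

lemma pv_mono {x s s' : ℕ} (hs : Chg gs x s) (hs' : Chg gs x s') (h : s < s') :
    pv gs x s < pv gs x s' :=
  lt_of_lt_of_le (pv_lt gs x s (Nat.one_le_iff_ne_zero.mp hs.1)) (pv_le_of_chg gs hs h)

lemma fBr_inj (x : ℕ) : Function.Injective (fBr gs x) := by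
  intro j j' e
  obtain ⟨s, rfl | rfl⟩ := Nat.even_or_odd' j <;>
    obtain ⟨s', rfl | rfl⟩ := Nat.even_or_odd' j'
  · rw [fBr_even, fBr_even] at e
    split_ifs at e with h1 h2 h2
    · rcases lt_trichotomy s s' with h | h | h
      · have := pv_mono gs h1 h2 h; omega
      · omega
      · have := pv_mono gs h2 h1 h; omega
    · omega
    · omega
    · omega
  · rw [fBr_even, fBr_odd] at e
    split_ifs at e with h1 h2 h2
    · omega
    · rcases pv_chg_or_zero gs x s with hc | hz
      · have : Chg gs x (s' + 1) := by
          have : pv gs x s = s' + 1 := by omega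
          rwa [this] at hc
        exact absurd this h2
      · omega
    · have hss : s = s' + 1 := by omega
      rw [hss] at h1
      exact absurd h2 h1
    · omega
  · rw [fBr_odd, fBr_even] at e
    split_ifs at e with h1 h2 h2
    · omega
    · have hss : s' = s + 1 := by omega
      rw [hss] at h2
      exact absurd h1 h2
    · rcases pv_chg_or_zero gs x s' with hc | hz
      · have : Chg gs x (s + 1) := by
          have : pv gs x s' = s + 1 := by omega
          rwa [this] at hc
        exact absurd this h1
      · omega
    · omega
  · rw [fBr_odd, fBr_odd] at e
    split_ifs at e with h1 h2 h2 <;> omega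


section Base

variable {gs : ℕ → ℕ → ℕ} {x L : ℕ}
  (hL : Chg gs x L ∨ L = 0) (hLmax : ∀ c, Chg gs x c → c ≤ L)

include hL hLmax in
lemma fBr_ne_base : ∀ j, fBr gs x j ≠ 2 * L := by
  intro j
  obtain ⟨s, rfl | rfl⟩ := Nat.even_or_odd' j
  · rw [fBr_even]
    split_ifs with h1
    · intro e
      have h2 : pv gs x s = L := by omega
      have h3 : s ≤ L := hLmax s h1
      have h4 : pv gs x s < s := pv_lt gs x s (Nat.one_le_iff_ne_zero.mp h1.1)
      omega
    · omega
  · rw [fBr_odd]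
    split_ifs with h1
    · omega
    · intro e
      have h2 : L = s + 1 := by omega
      rcases hL with hc | hz
      · rw [h2] at hc; exact h1 hc
      · omega

include hL hLmax in
lemma pv_next {c : ℕ} (hc : Chg gs x c ∨ c = 0) (hlt : c < L) :
    ∃ s, Chg gs x s ∧ c < s ∧ s ≤ L ∧ pv gs x s = c := by
  have hcL : Chg gs x L := by
    rcases hL with h | h
    · exact h
    · omega
  have hex : ∃ s, Chg gs x s ∧ c < s := ⟨L, hcL, hlt⟩
  classical
  set s₀ := Nat.find hex with hs₀
  obtain ⟨hchg, hcs⟩ := Nat.find_spec hex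
  refine ⟨s₀, hchg, hcs, Nat.find_min' hex ⟨hcL, hlt⟩, ?_⟩
  have hle : c ≤ pv gs x s₀ := by
    rcases hc with h | h
    · exact pv_le_of_chg gs h hcs
    · omega
  rcases Nat.lt_or_ge c (pv gs x s₀) with h | h
  · exfalso
    have hlt' : pv gs x s₀ < s₀ := pv_lt gs x s₀ (Nat.one_le_iff_ne_zero.mp hchg.1)
    have hchg' : Chg gs x (pv gs x s₀) := by
      rcases pv_chg_or_zero gs x s₀ with h' | h'
      · exact h'
      · omega
    exact Nat.find_min hex hlt' ⟨hchg', h⟩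
  · omega

include hL hLmax in
lemma fBr_in_range {k : ℕ} (hk : k ≠ 2 * L) : ∃ j, fBr gs x j = k := by
  obtain ⟨c, rfl | rfl⟩ := Nat.even_or_odd' k
  · -- k = 2 c, c ≠ L
    by_cases hc : Chg gs x c ∨ c = 0
    · have hlt : c < L := by
        rcases hc with h | h
        · have := hLmax c h; omega
        · omega
      obtain ⟨s, hchg, _, _, hpv⟩ := pv_next hL hLmax hc hlt
      exact ⟨2 * s, by rw [fBr_even, if_pos hchg, hpv]⟩
    · push_neg at hc
      obtain ⟨hnc, hc0⟩ := hc
      obtain ⟨d, rfl⟩ : ∃ d, c = d + 1 := ⟨c - 1, by omega⟩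
      exact ⟨2 * d + 1, by rw [fBr_odd, if_neg hnc]; omega⟩
  · -- k = 2 c + 1
    by_cases hc : Chg gs x c
    · obtain ⟨d, rfl⟩ : ∃ d, c = d + 1 := ⟨c - 1, by have := hc.1; omega⟩
      exact ⟨2 * d + 1, by rw [fBr_odd, if_pos hc]; omega⟩
    · exact ⟨2 * c, by rw [fBr_even, if_neg hc]⟩

include hL hLmax in
lemma reach_chg : ∀ d c, Chg gs x c → L - c ≤ d → ∃ m, (fBr gs x)^[m] (2 * L) = 2 * c := by
  intro d
  induction d with
  | zero =>
    intro c hc hd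
    have : c = L := le_antisymm (hLmax c hc) (by omega)
    exact ⟨0, by rw [this]; rfl⟩
  | succ d ih =>
    intro c hc hd
    rcases Nat.eq_or_lt_of_le (hLmax c hc) with h | h
    · exact ⟨0, by rw [h]; rfl⟩
    · obtain ⟨s, hchg, hcs, hsL, hpv⟩ := pv_next hL hLmax (Or.inl hc) h
      obtain ⟨m, hm⟩ := ih s hchg (by omega)
      refine ⟨m + 1, ?_⟩
      rw [Function.iterate_succ_apply', hm, fBr_even, if_pos hchg, hpv]

include hL hLmax in
lemma reach_zero : ∃ m, (fBr gs x)^[m] (2 * L) = 0 := by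
  rcases Nat.eq_zero_or_pos L with h | h
  · exact ⟨0, by rw [h]; simp⟩
  · obtain ⟨s, hchg, _, _, hpv⟩ := pv_next hL hLmax (Or.inr rfl) h
    obtain ⟨m, hm⟩ := reach_chg hL hLmax (L - s) s hchg le_rfl
    refine ⟨m + 1, ?_⟩
    rw [Function.iterate_succ_apply', hm, fBr_even, if_pos hchg, hpv]

include hL hLmax in
lemma reach : ∀ k, ∃ m, (fBr gs x)^[m] (2 * L) = k := by
  intro k
  induction k using Nat.strong_induction_on with
  | _ k ih =>
    obtain ⟨c, rfl | rfl⟩ := Nat.even_or_odd' k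
    · by_cases hc : Chg gs x c
      · exact reach_chg hL hLmax (L - c) c hc le_rfl
      · rcases Nat.eq_zero_or_pos c with h0 | h0
        · subst h0; exact reach_zero hL hLmax
        · obtain ⟨d, rfl⟩ : ∃ d, c = d + 1 := ⟨c - 1, by omega⟩
          obtain ⟨m, hm⟩ := ih (2 * d + 1) (by omega)
          refine ⟨m + 1, ?_⟩
          rw [Function.iterate_succ_apply', hm, fBr_odd, if_neg hc]
          omega
    · by_cases hc : Chg gs x c
      · obtain ⟨d, rfl⟩ : ∃ d, c = d + 1 := ⟨c - 1, by have := hc.1; omega⟩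
        obtain ⟨m, hm⟩ := ih (2 * d + 1) (by omega)
        refine ⟨m + 1, ?_⟩
        rw [Function.iterate_succ_apply', hm, fBr_odd, if_pos hc]
        omega
      · obtain ⟨m, hm⟩ := ih (2 * c) (by omega)
        refine ⟨m + 1, ?_⟩
        rw [Function.iterate_succ_apply', hm, fBr_even, if_neg hc]

end Base



/-- structure A: successor in each row. -/
def fA (n : ℕ) : ℕ := Nat.pair n.unpair.1 (n.unpair.2 + 1)

/-- structure B. -/
def fB (gs : ℕ → ℕ → ℕ) (n : ℕ) : ℕ :=
  Nat.pair n.unpair.1 (fBr gs n.unpair.1 n.unpair.2)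

lemma fA_pair (x k : ℕ) : fA (Nat.pair x k) = Nat.pair x (k + 1) := by
  simp [fA]

lemma fB_pair (gs : ℕ → ℕ → ℕ) (x k : ℕ) :
    fB gs (Nat.pair x k) = Nat.pair x (fBr gs x k) := by
  simp [fB]

lemma fA_iter (x : ℕ) : ∀ m k, fA^[m] (Nat.pair x k) = Nat.pair x (k + m) := by
  intro m
  induction m with
  | zero => simp
  | succ m ih =>
    intro k
    rw [Function.iterate_succ_apply', ih, fA_pair]
    ring_nf

lemma fA_inj : Function.Injective fA := by
  intro a b e
  simp only [fA] at e
  rw [Nat.pair_eq_pair] at e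
  have : a.unpair = b.unpair := Prod.ext e.1 (by omega)
  have h2 := congrArg (fun p : ℕ × ℕ => Nat.pair p.1 p.2) this
  simpa [Nat.pair_unpair] using h2

lemma fB_inj (gs : ℕ → ℕ → ℕ) : Function.Injective (fB gs) := by
  intro a b e
  simp only [fB] at e
  rw [Nat.pair_eq_pair] at e
  obtain ⟨h1, h2⟩ := e
  rw [h1] at h2
  have h3 := fBr_inj gs b.unpair.1 h2
  have : a.unpair = b.unpair := Prod.ext h1 h3
  have h4 := congrArg (fun p : ℕ × ℕ => Nat.pair p.1 p.2) this
  simpa [Nat.pair_unpair] using h4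

lemma mem_range_fA {n : ℕ} : n ∈ Set.range fA ↔ n.unpair.2 ≠ 0 := by
  constructor
  · rintro ⟨m, rfl⟩
    simp [fA]
  · intro hn
    refine ⟨Nat.pair n.unpair.1 (n.unpair.2 - 1), ?_⟩
    rw [fA_pair]
    have : n.unpair.2 - 1 + 1 = n.unpair.2 := by omega
    rw [this, Nat.pair_unpair]

lemma iterate_base_inj {f : ℕ → ℕ} (hf : Function.Injective f) {z : ℕ}
    (hz : z ∉ Set.range f) : Function.Injective fun m => f^[m] z := by
  have key : ∀ a b, a < b → f^[a] z = f^[b] z → False := by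
    intro a b hab e
    have hb : b = a + (b - a) := by omega
    rw [hb, Function.iterate_add_apply] at e
    have e2 : z = f^[b - a] z := hf.iterate a e
    obtain ⟨t, ht⟩ : ∃ t, b - a = t + 1 := ⟨b - a - 1, by omega⟩
    rw [ht, Function.iterate_succ_apply'] at e2
    exact hz ⟨f^[t] z, e2.symm⟩
  intro a b e
  rcases lt_trichotomy a b with h | h | h
  · exact absurd (key a b h e) (fun h => h)
  · exact h
  · exact absurd (key b a h e.symm) (fun h => h)

section PrimrecProofs

variable {gs : ℕ → ℕ → ℕ} (hgs : Primrec₂ gs)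

lemma fA_primrec : Primrec fA :=
  Primrec₂.natPair.comp (Primrec.fst.comp Primrec.unpair)
    (Primrec.succ.comp (Primrec.snd.comp Primrec.unpair))

include hgs

lemma chg_primrec : PrimrecPred fun p : ℕ × ℕ => Chg gs p.1 p.2 := by
  have h1 : PrimrecPred fun p : ℕ × ℕ => 1 ≤ p.2 :=
    Primrec.nat_le.comp (Primrec.const 1) Primrec.snd
  have h2 : PrimrecPred fun p : ℕ × ℕ => ¬(gs p.1 (p.2 + 1) = gs p.1 p.2) :=
    PrimrecPred.not
      (Primrec.eq.comp (hgs.comp Primrec.fst (Primrec.succ.comp Primrec.snd))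
        (hgs.comp Primrec.fst Primrec.snd))
  exact h1.and h2

lemma pv_primrec : Primrec₂ (pv gs) := by
  have hg : Primrec₂ fun (a : ℕ) (p : ℕ × ℕ) => if Chg gs a p.1 then p.1 else p.2 := by
    refine Primrec.ite ?_ (Primrec.fst.comp Primrec.snd) (Primrec.snd.comp Primrec.snd)
    exact (chg_primrec hgs).comp (Primrec.pair Primrec.fst (Primrec.fst.comp Primrec.snd))
  exact Primrec.nat_rec (Primrec.const 0) hg

lemma fBr_primrec : Primrec₂ (fBr gs) := by
  have hdiv : Primrec fun p : ℕ × ℕ => p.2 / 2 :=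
    Primrec.nat_div.comp Primrec.snd (Primrec.const 2)
  have hmod : PrimrecPred fun p : ℕ × ℕ => p.2 % 2 = 0 :=
    Primrec.eq.comp (Primrec.nat_mod.comp Primrec.snd (Primrec.const 2)) (Primrec.const 0)
  have hc1 : PrimrecPred fun p : ℕ × ℕ => Chg gs p.1 (p.2 / 2) :=
    (chg_primrec hgs).comp (Primrec.pair Primrec.fst hdiv)
  have hc2 : PrimrecPred fun p : ℕ × ℕ => Chg gs p.1 (p.2 / 2 + 1) :=
    (chg_primrec hgs).comp (Primrec.pair Primrec.fst (Primrec.succ.comp hdiv))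
  have hbr1 : Primrec fun p : ℕ × ℕ => 2 * pv gs p.1 (p.2 / 2) :=
    Primrec.nat_mul.comp (Primrec.const 2) ((pv_primrec hgs).comp Primrec.fst hdiv)
  have hs1 : Primrec fun p : ℕ × ℕ => p.2 + 1 := Primrec.succ.comp Primrec.snd
  have hs2 : Primrec fun p : ℕ × ℕ => p.2 + 2 :=
    Primrec.succ.comp (Primrec.succ.comp Primrec.snd)
  exact Primrec.ite hmod (Primrec.ite hc1 hbr1 hs1) (Primrec.ite hc2 hs2 hs1)

lemma fB_primrec : Primrec (fB gs) :=
  Primrec₂.natPair.comp (Primrec.fst.comp Primrec.unpair)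
    ((fBr_primrec hgs).comp (Primrec.fst.comp Primrec.unpair)
      (Primrec.snd.comp Primrec.unpair))

end PrimrecProofs


section Reduction

lemma recIn_of_partrec {o f : ℕ →. ℕ} (hf : Nat.Partrec f) : RecursiveIn' o f := by
  induction hf with
  | zero => exact .zero
  | succ => exact .succ
  | left => exact .left
  | right => exact .right
  | pair _ _ ih1 ih2 => exact .pair ih1 ih2
  | comp _ _ ih1 ih2 => exact .comp ih1 ih2
  | prec _ _ ih1 ih2 => exact .prec ih1 ih2
  | rfind _ ih => exact .rfind ih

lemma recIn_of_primrec {o : ℕ →. ℕ} {f : ℕ → ℕ} (hf : Primrec f) : RecursiveIn' o ↑f :=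
  recIn_of_partrec (Nat.Partrec.of_primrec (Primrec.nat_iff.1 hf))

lemma recIn_comp_primrec {o F : ℕ →. ℕ} (hF : RecursiveIn' o F) {k : ℕ → ℕ}
    (hk : Primrec k) : RecursiveIn' o fun n => F (k n) := by
  have h := RecursiveIn'.comp hF (recIn_of_primrec (o := o) hk)
  have e : (fun n => (↑k : ℕ →. ℕ) n >>= F) = fun n => F (k n) := by
    funext n
    rw [PFun.coe_val]
    exact Part.bind_some _ F
  rwa [e] at h

end Reduction

end PRC

theorem prcat_delta2_turing (g : ℕ → ℕ) (gs : ℕ → ℕ → ℕ)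
    (hgs : Primrec₂ gs) (hlim : ∀ x : ℕ, ∃ s₀ : ℕ, ∀ s ≥ s₀, gs x s = g x) :
    ∃ fA fB : ℕ → ℕ,
      Primrec fA ∧ Primrec fB ∧ Function.Injective fA ∧ Function.Injective fB ∧
      (∀ n : ℕ, IsOmegaChain fA n) ∧
      {O : Set ℕ | ∃ n : ℕ, O = Orbit fA n}.Infinite ∧
      (∃ h : ℕ → ℕ, IsInjIso fA fB h) ∧
      (∀ h : ℕ → ℕ, IsInjIso fA fB h → TuringReducible' ↑g ↑h) := by
  classical
  -- the modulus and the (limit) last-change point of each row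
  set M : ℕ → ℕ := fun x => (hlim x).choose with hMdef
  have hM : ∀ x s, M x ≤ s → gs x s = g x := fun x s hs => (hlim x).choose_spec s hs
  set L : ℕ → ℕ := fun x => PRC.pv gs x (M x + 1) with hLdef
  have hL : ∀ x, PRC.Chg gs x (L x) ∨ L x = 0 := fun x => PRC.pv_chg_or_zero gs x (M x + 1)
  have hLmax : ∀ x c, PRC.Chg gs x c → c ≤ L x := by
    intro x c hc
    have hcM : c < M x := by
      by_contra hco
      push_neg at hco
      exact hc.2 (by rw [hM x (c + 1) (by omega), hM x c hco])
    exact PRC.pv_le_of_chg gs hc (by omega)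
  have hdec : ∀ x, gs x (L x + 1) = g x := by
    intro x
    have step : ∀ d, gs x (L x + 1 + d) = gs x (L x + 1) := by
      intro d
      induction d with
      | zero => rfl
      | succ d ih =>
        have hnc : ¬ PRC.Chg gs x (L x + 1 + d) := fun hc => by
          have := hLmax x _ hc; omega
        have he : gs x (L x + 1 + d + 1) = gs x (L x + 1 + d) := by
          by_contra hne
          exact hnc ⟨by omega, hne⟩
        rw [show L x + 1 + (d + 1) = L x + 1 + d + 1 from rfl, he, ih]
    calc gs x (L x + 1) = gs x (L x + 1 + M x) := (step (M x)).symm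
      _ = g x := hM x _ (by omega)
  have hbase_notin : ∀ x, Nat.pair x (2 * L x) ∉ Set.range (PRC.fB gs) := by
    rintro x ⟨m, hm⟩
    rw [show m = Nat.pair m.unpair.1 m.unpair.2 from (Nat.pair_unpair m).symm,
      PRC.fB_pair, Nat.pair_eq_pair] at hm
    obtain ⟨hm1, hm2⟩ := hm
    rw [hm1] at hm2
    exact PRC.fBr_ne_base (hL x) (hLmax x) m.unpair.2 hm2
  have hrange : ∀ x k, k ≠ 2 * L x → Nat.pair x k ∈ Set.range (PRC.fB gs) := by
    intro x k hk
    obtain ⟨j, hj⟩ := PRC.fBr_in_range (hL x) (hLmax x) hk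
    exact ⟨Nat.pair x j, by rw [PRC.fB_pair, hj]⟩
  have hnotrange_eq : ∀ x k, Nat.pair x k ∉ Set.range (PRC.fB gs) → k = 2 * L x := by
    intro x k hk
    by_contra hne
    exact hk (hrange x k hne)
  have hbr_notrange : ∀ x, 2 * L x ∉ Set.range (PRC.fBr gs x) := by
    rintro x ⟨j, hj⟩
    exact PRC.fBr_ne_base (hL x) (hLmax x) j hj
  refine ⟨PRC.fA, PRC.fB gs, PRC.fA_primrec, PRC.fB_primrec hgs, PRC.fA_inj,
    PRC.fB_inj gs, ?_, ?_, ?_, ?_⟩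
  · -- every orbit of fA is an ω-chain
    intro n
    constructor
    · refine Set.infinite_of_injective_forall_mem
        (f := fun j : ℕ => Nat.pair n.unpair.1 (n.unpair.2 + j)) ?_ ?_
      · intro a b e
        rw [Nat.pair_eq_pair] at e
        omega
      · intro j
        refine ⟨j, 0, ?_⟩
        rw [show n = Nat.pair n.unpair.1 n.unpair.2 from (Nat.pair_unpair n).symm,
          PRC.fA_iter]
        simp
    · refine ⟨Nat.pair n.unpair.1 0, ⟨0, n.unpair.2, ?_⟩, ?_⟩
      · rw [PRC.fA_iter]
        simp [Nat.pair_unpair]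
      · intro hr
        exact (PRC.mem_range_fA.1 hr) (by simp)
  · -- infinitely many orbits
    refine Set.infinite_of_injective_forall_mem
      (f := fun x : ℕ => Orbit PRC.fA (Nat.pair x 0)) ?_ ?_
    · intro x y e
      have e' : Orbit PRC.fA (Nat.pair x 0) = Orbit PRC.fA (Nat.pair y 0) := e
      have hx : Nat.pair x 0 ∈ Orbit PRC.fA (Nat.pair x 0) := ⟨0, 0, rfl⟩
      rw [e'] at hx
      obtain ⟨m, m', hm⟩ := hx
      rw [PRC.fA_iter, PRC.fA_iter] at hm
      rw [Nat.pair_eq_pair] at hm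
      exact hm.1.symm
    · exact fun x => ⟨Nat.pair x 0, rfl⟩
  · -- there is an isomorphism
    refine ⟨fun n => Nat.pair n.unpair.1 ((PRC.fBr gs n.unpair.1)^[n.unpair.2]
      (2 * L n.unpair.1)), ⟨?_, ?_⟩, ?_⟩
    · intro a b e
      simp only [Nat.pair_eq_pair] at e
      obtain ⟨h1, h2⟩ := e
      rw [h1] at h2
      have h3 := PRC.iterate_base_inj (PRC.fBr_inj gs b.unpair.1)
        (hbr_notrange b.unpair.1) h2
      have : a.unpair = b.unpair := Prod.ext h1 h3
      have h4 := congrArg (fun p : ℕ × ℕ => Nat.pair p.1 p.2) this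
      simpa [Nat.pair_unpair] using h4
    · intro t
      obtain ⟨m, hm⟩ := PRC.reach (hL t.unpair.1) (hLmax t.unpair.1) t.unpair.2
      refine ⟨Nat.pair t.unpair.1 m, ?_⟩
      simp only [Nat.unpair_pair]
      rw [hm, Nat.pair_unpair]
    · intro n
      simp only [PRC.fA, Nat.unpair_pair]
      rw [Function.iterate_succ_apply', PRC.fB_pair]
  · -- every isomorphism computes g
    intro h hIso
    obtain ⟨⟨hinj, hsurj⟩, hcomm⟩ := hIso
    have hmap : ∀ n, n ∉ Set.range PRC.fA → h n ∉ Set.range (PRC.fB gs) := by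
      rintro n hn ⟨b, hb⟩
      obtain ⟨b', rfl⟩ := hsurj b
      rw [← hcomm b'] at hb
      exact hn ⟨b', hinj hb⟩
    -- primitive recursive ingredients
    set tst : ℕ → ℕ := fun w =>
      if w.unpair.2 = Nat.pair (w.unpair.1.unpair.1) (2 * w.unpair.1.unpair.2.unpair.2) ∧
         (w.unpair.1.unpair.2.unpair.1).unpair.2 = 0 then 0 else 1 with htstdef
    have u1 : Primrec fun w : ℕ => w.unpair.1 := Primrec.fst.comp Primrec.unpair
    have u2 : Primrec fun w : ℕ => w.unpair.2 := Primrec.snd.comp Primrec.unpair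
    have htst : Primrec tst := by
      refine Primrec.ite (PrimrecPred.and ?_ ?_) (Primrec.const 0) (Primrec.const 1)
      · exact Primrec.eq.comp u2
          (Primrec₂.natPair.comp (u1.comp u1)
            (Primrec.nat_mul.comp (Primrec.const 2) (u2.comp (u2.comp u1))))
      · exact Primrec.eq.comp (u2.comp (u1.comp (u2.comp u1))) (Primrec.const 0)
    set D : ℕ → ℕ := fun w => gs w.unpair.1 (w.unpair.2.unpair.2 + 1) with hDdef
    have hD : Primrec D := hgs.comp u1 (Primrec.succ.comp (u2.comp u2))
    set pre : ℕ →. ℕ := fun q =>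
      Nat.pair <$> (↑(id : ℕ → ℕ) : ℕ →. ℕ) q <*> (↑h : ℕ →. ℕ) (q.unpair.2.unpair.1)
      with hpredef
    have hpre : RecursiveIn' (↑h) pre :=
      RecursiveIn'.pair (PRC.recIn_of_primrec Primrec.id)
        (PRC.recIn_comp_primrec RecursiveIn'.oracle (u1.comp u2))
    set F : ℕ →. ℕ := fun q => pre q >>= (↑tst : ℕ →. ℕ) with hFdef
    have hF : RecursiveIn' (↑h) F := RecursiveIn'.comp (PRC.recIn_of_primrec htst) hpre
    set Φ : ℕ →. ℕ := fun a =>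
      (Nat.pair <$> (↑(id : ℕ → ℕ) : ℕ →. ℕ) a <*>
        Nat.rfind fun n => (fun m => m = 0) <$> F (Nat.pair a n)) >>= (↑D : ℕ →. ℕ) with hΦdef
    have hΦ : RecursiveIn' (↑h) Φ :=
      RecursiveIn'.comp (PRC.recIn_of_primrec hD)
        (RecursiveIn'.pair (PRC.recIn_of_primrec Primrec.id) (RecursiveIn'.rfind hF))
    have key : (↑g : ℕ →. ℕ) = Φ := by
      funext x
      have hFeval : ∀ n : ℕ,
          F (Nat.pair x n) = Part.some (tst (Nat.pair (Nat.pair x n) (h n.unpair.1))) := by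
        intro n
        rw [hFdef, hpredef]
        simp [Seq.seq, Nat.unpair_pair, PFun.coe_val]
        exact Part.bind_some _ _
      have hp : ∀ n : ℕ, ((fun m => m = 0) <$> F (Nat.pair x n) : Part Bool)
          = Part.some (decide (tst (Nat.pair (Nat.pair x n) (h n.unpair.1)) = 0)) := by
        intro n
        rw [hFeval n]
        simp
      -- witness for the search
      obtain ⟨nb, hnb⟩ := hsurj (Nat.pair x (2 * L x))
      have hnb0 : nb.unpair.2 = 0 := by
        by_contra hne
        obtain ⟨w, rfl⟩ := PRC.mem_range_fA.2 hne
        rw [hcomm w] at hnb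
        exact hbase_notin x ⟨h w, hnb⟩
      have hw : tst (Nat.pair (Nat.pair x (Nat.pair nb (L x))) (h nb)) = 0 := by
        simp [htstdef, Nat.unpair_pair, hnb, hnb0]
      have hdom : (Nat.rfind fun n => (fun m => m = 0) <$> F (Nat.pair x n)).Dom := by
        apply Nat.rfind_dom'.2
        refine ⟨Nat.pair nb (L x), ?_, fun {m} _ => ?_⟩
        · rw [hp]
          simp [hw]
        · rw [hp m]
          trivial
      set m₀ := (Nat.rfind fun n => (fun m => m = 0) <$> F (Nat.pair x n)).get hdom
        with hm₀def
      have hm₀ : m₀ ∈ Nat.rfind fun n => (fun m => m = 0) <$> F (Nat.pair x n) :=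
        Part.get_mem hdom
      have htrue := Nat.rfind_spec hm₀
      rw [hp m₀] at htrue
      have hzero : tst (Nat.pair (Nat.pair x m₀) (h m₀.unpair.1)) = 0 := by
        simpa using htrue
      have hcond : h m₀.unpair.1 = Nat.pair x (2 * m₀.unpair.2) ∧
          (m₀.unpair.1).unpair.2 = 0 := by
        rw [htstdef] at hzero
        simp only [Nat.unpair_pair] at hzero
        by_contra hC
        rw [if_neg hC] at hzero
        exact one_ne_zero hzero
      obtain ⟨hc1, hc2⟩ := hcond
      have hnrA : m₀.unpair.1 ∉ Set.range PRC.fA := fun hr => (PRC.mem_range_fA.1 hr) hc2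
      have hnrB : Nat.pair x (2 * m₀.unpair.2) ∉ Set.range (PRC.fB gs) :=
        hc1 ▸ hmap _ hnrA
      have hceq : m₀.unpair.2 = L x := by
        have := hnotrange_eq x _ hnrB
        omega
      have hmem : g x ∈ Φ x := by
        rw [hΦdef]
        refine Part.mem_bind_iff.2 ⟨Nat.pair x m₀, ?_, ?_⟩
        · have hseq : (Nat.pair <$> (↑(id : ℕ → ℕ) : ℕ →. ℕ) x <*>
              Nat.rfind fun n => (fun m => m = 0) <$> F (Nat.pair x n))
              = Part.map (Nat.pair x)
                (Nat.rfind fun n => (fun m => m = 0) <$> F (Nat.pair x n)) := by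
            simp [Seq.seq, PFun.coe_val]
          rw [hseq]
          exact (Part.mem_map_iff _).2 ⟨m₀, hm₀, rfl⟩
        · rw [PFun.coe_val, hDdef]
          simp only [Nat.unpair_pair]
          rw [hceq, hdec x]
          exact Part.mem_some _
      rw [PFun.coe_val]
      exact (Part.eq_some_iff.2 hmem).symm
    rw [TuringReducible', key]
    exact hΦ
end

section
/- Let g* : ℕ → ℕ → ℕ be primitive recursive (Primrec₂ g*) such that for every y the sequence s ↦ g* y s is eventually constant. For x : ℕ let s_x be the least s such that g* y t = g* y s for all y ≤ x and all t ≥ s. Then there exists an injective primitive recursive function f : ℕ → ℕ such that every orbit of f is an ω-chain, f has infinitely many orbits, and for every x the set {b : ℕ | b ∉ Set.range f ∧ b < s_x} has at most x + 1 elements. (A punctual structure made of ω-chains whose chain-heads are sparse below the stabilization stages of the approximation.) -/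
namespace SHBS

/-- Boolean membership in a list. -/
def memB (L : List ℕ) (b : ℕ) : Bool := L.foldr (fun a s => (a == b) || s) false

theorem memB_iff {L : List ℕ} {b : ℕ} : memB L b = true ↔ b ∈ L := by
  induction L with
  | nil => simp [memB]
  | cons a l ih =>
    simp only [memB, List.foldr] at ih ⊢
    rw [Bool.or_eq_true, ih, List.mem_cons, beq_iff_eq]
    constructor
    · rintro (h | h)
      · exact Or.inl h.symm
      · exact Or.inr h
    · rintro (h | h)
      · exact Or.inl h.symm
      · exact Or.inr h

/-- bounded stabilization check: `∀ y ≤ x, ∀ t, s ≤ t → t ≤ n → gs y t = gs y s`. -/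
def stabB (gs : ℕ → ℕ → ℕ) (x n s : ℕ) : Bool :=
  (List.range ((x+1)*(n+1))).foldr
    (fun c acc => acc && (!(decide (s ≤ c % (n+1))) || (gs (c / (n+1)) (c % (n+1)) == gs (c / (n+1)) s))) true

theorem foldr_and_iff (p : ℕ → Bool) (l : List ℕ) :
    (l.foldr (fun c acc => acc && p c) true = true) ↔ ∀ c ∈ l, p c = true := by
  induction l with
  | nil => simp
  | cons a l ih =>
    simp only [List.foldr, Bool.and_eq_true, ih, List.mem_cons]
    constructor
    · rintro ⟨h1, h2⟩ c hc
      rcases hc with rfl | hc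
      · exact h2
      · exact h1 c hc
    · intro h
      exact ⟨fun c hc => h c (Or.inr hc), h a (Or.inl rfl)⟩

theorem stabB_iff {gs : ℕ → ℕ → ℕ} {x n s : ℕ} :
    stabB gs x n s = true ↔ ∀ y ≤ x, ∀ t, s ≤ t → t ≤ n → gs y t = gs y s := by
  unfold stabB
  rw [foldr_and_iff]
  constructor
  · intro h y hy t hst htn
    have e : y * (n+1) + t = t + (n+1) * y := by ring
    have hc : y * (n+1) + t ∈ List.range ((x+1)*(n+1)) := by
      rw [List.mem_range]
      calc y * (n+1) + t < y * (n+1) + (n+1) := by omega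
        _ = (y+1) * (n+1) := by ring
        _ ≤ (x+1) * (n+1) := Nat.mul_le_mul_right _ (by omega)
    have h2 := h _ hc
    have hmod : (y * (n+1) + t) % (n+1) = t := by
      rw [e, Nat.add_mul_mod_self_left]; exact Nat.mod_eq_of_lt (by omega)
    have hdiv : (y * (n+1) + t) / (n+1) = y := by
      rw [e, Nat.add_mul_div_left _ _ (by omega : 0 < n+1), Nat.div_eq_of_lt (by omega : t < n+1)]
      omega
    rw [hdiv, hmod] at h2
    simp only [Bool.or_eq_true, Bool.not_eq_true', decide_eq_false_iff_not, beq_iff_eq] at h2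
    rcases h2 with h' | h'
    · omega
    · exact h'
  · intro h c hc
    simp only [Bool.or_eq_true, Bool.not_eq_true', decide_eq_false_iff_not, beq_iff_eq]
    by_cases hst : s ≤ c % (n+1)
    · right
      apply h
      · have hlt : c < (x+1)*(n+1) := List.mem_range.1 hc
        have : c / (n+1) < x+1 := Nat.div_lt_iff_lt_mul (by omega) |>.2 (by omega)
        omega
      · exact hst
      · have : c % (n+1) < n+1 := Nat.mod_lt _ (by omega)
        omega
    · left; simpa using hst

theorem foldr_pick_none {σ : Type*} (p : ℕ → Bool) (g : ℕ → σ) (W : ℕ) (d : σ)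
    (h : ∀ s < W, p s = false) :
    (List.range W).foldr (fun s acc => cond (p s) (g s) acc) d = d := by
  induction W generalizing d with
  | zero => simp
  | succ W ih =>
    rw [List.range_succ, List.foldr_append, List.foldr_cons, List.foldr_nil,
      h W (by omega), cond_false]
    exact ih d (fun s hs => h s (by omega))

theorem foldr_pick_eq {σ : Type*} (p : ℕ → Bool) (g : ℕ → σ) (r : ℕ)
    (hp : p r = true) (hmin : ∀ s < r, p s = false) :
    ∀ (W : ℕ) (d : σ), r < W →
      (List.range W).foldr (fun s acc => cond (p s) (g s) acc) d = g r := by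
  intro W
  induction W with
  | zero => intro d h; omega
  | succ W ih =>
    intro d hrW
    rw [List.range_succ, List.foldr_append, List.foldr_cons, List.foldr_nil]
    rcases Nat.lt_or_ge r W with h | h
    · exact ih _ h
    · have : r = W := by omega
      subst this
      rw [hp, cond_true]
      exact foldr_pick_none p g r (g r) hmin

/-- least `s ≤ n` with `stabB gs x n s` (which always holds at `s = n`). -/
def Mfun (gs : ℕ → ℕ → ℕ) (x n : ℕ) : ℕ :=
  (List.range (n+1)).foldr (fun s acc => cond (stabB gs x n s) s acc) n


/-- the list of uncovered (not yet values) elements `< W`, given history `L`. -/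
def uncovList (L : List ℕ) (W : ℕ) : List ℕ := (List.range W).filter (fun b => !memB L b)

def uncovCount (L : List ℕ) (W : ℕ) : ℕ :=
  (List.range W).foldr (fun b acc => cond (memB L b) acc (acc+1)) 0

theorem uncovCount_eq (L : List ℕ) (W : ℕ) : uncovCount L W = (uncovList L W).length := by
  unfold uncovCount uncovList
  induction W with
  | zero => simp
  | succ W ih =>
    rw [List.range_succ, List.foldr_append, List.filter_append]
    simp only [List.foldr_cons, List.foldr_nil, List.filter]
    cases h : memB L W
    · simp only [cond_false, Bool.not_false, List.length_append, List.length_cons,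
        List.length_nil]
      -- foldr with init 1 = foldr with init 0 + 1
      have aux : ∀ (l : List ℕ) (k : ℕ),
          l.foldr (fun b acc => cond (memB L b) acc (acc+1)) k
            = l.foldr (fun b acc => cond (memB L b) acc (acc+1)) 0 + k := by
        intro l
        induction l with
        | nil => simp
        | cons a l ihl =>
          intro k
          simp only [List.foldr_cons]
          cases memB L a
          · simp only [cond_false]
            rw [ihl k]
            omega
          · simp only [cond_true]
            exact ihl k
      rw [aux, ih]
    · simp only [cond_true, Bool.not_true, List.length_append, List.length_nil]
      rw [ih]
      simp [List.filter]

theorem memB_false_iff {L : List ℕ} {b : ℕ} : memB L b = false ↔ b ∉ L := by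
  rw [← memB_iff]
  cases memB L b <;> simp

theorem mem_uncovList {L : List ℕ} {W b : ℕ} :
    b ∈ uncovList L W ↔ b < W ∧ b ∉ L := by
  simp only [uncovList, List.mem_filter, List.mem_range, Bool.not_eq_true', memB_false_iff]

theorem uncovList_nodup (L : List ℕ) (W : ℕ) : (uncovList L W).Nodup :=
  (List.nodup_range (n := W)).filter _

def violB (gs : ℕ → ℕ → ℕ) (L : List ℕ) (x : ℕ) : Bool :=
  decide (x + 1 < uncovCount L (Mfun gs x L.length))

def findViol (gs : ℕ → ℕ → ℕ) (L : List ℕ) : Option ℕ :=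
  (List.range L.length).foldr (fun x acc => cond (violB gs L x) (some x) acc) none

def coverT (gs : ℕ → ℕ → ℕ) (L : List ℕ) (x : ℕ) : ℕ :=
  (List.range (Mfun gs x L.length)).foldl (fun acc b => cond (!memB L b && (b != 0)) b acc) 0

theorem foldl_pick_none (p : ℕ → Bool) (W d : ℕ) (h : ∀ b < W, p b = false) :
    (List.range W).foldl (fun acc b => cond (p b) b acc) d = d := by
  induction W with
  | zero => simp
  | succ W ih =>
    rw [List.range_succ, List.foldl_append, List.foldl_cons, List.foldl_nil, h W (by omega),
      cond_false]
    exact ih (fun b hb => h b (by omega))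

/-- the foldl picks the largest hit below `W`. -/
theorem foldl_pick_spec (p : ℕ → Bool) (W d : ℕ) (hex : ∃ b, b < W ∧ p b = true) :
    p ((List.range W).foldl (fun acc b => cond (p b) b acc) d) = true ∧
    (List.range W).foldl (fun acc b => cond (p b) b acc) d < W ∧
    ∀ b, (List.range W).foldl (fun acc b => cond (p b) b acc) d < b → b < W → p b = false := by
  induction W with
  | zero =>
    obtain ⟨b, hb, _⟩ := hex
    omega
  | succ W ih =>
    rw [List.range_succ, List.foldl_append, List.foldl_cons, List.foldl_nil]
    cases hW : p W
    · rw [cond_false]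
      have hex' : ∃ b, b < W ∧ p b = true := by
        obtain ⟨b, hb, hpb⟩ := hex
        refine ⟨b, ?_, hpb⟩
        rcases Nat.lt_or_ge b W with h | h
        · exact h
        · have hbW : b = W := by omega
          rw [hbW] at hpb
          rw [hpb] at hW
          exact absurd hW (by simp)
      obtain ⟨h1, h2, h3⟩ := ih hex'
      refine ⟨h1, by omega, fun b hb1 hb2 => ?_⟩
      rcases Nat.lt_or_ge b W with h | h
      · exact h3 b hb1 h
      · have : b = W := by omega
        subst this
        exact hW
    · rw [cond_true]
      exact ⟨hW, by omega, fun b hb1 hb2 => by omega⟩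

def maxU (L : List ℕ) : ℕ := L.foldr (fun a acc => max a acc) L.length

theorem le_maxU_of_mem {L : List ℕ} {a : ℕ} (h : a ∈ L) : a ≤ maxU L := by
  unfold maxU
  generalize L.length = d
  induction L with
  | nil => simp at h
  | cons b l ih =>
    rcases h with _ | h
    · simp [List.foldr]
    · simp only [List.foldr]
      exact le_trans (ih ‹a ∈ l›) (le_max_right _ _)

theorem length_le_maxU (L : List ℕ) : L.length ≤ maxU L := by
  unfold maxU
  generalize L.length = d
  induction L with
  | nil => simp
  | cons b l ih =>
    simp only [List.foldr]
    exact le_trans ih (le_max_right _ _)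

def chain0top (L : List ℕ) : ℕ :=
  (List.range (L.length + 1)).foldr
    (fun _ c => cond (decide (c < L.length)) (L.getD c 0) c) 0

def step (gs : ℕ → ℕ → ℕ) (L : List ℕ) : ℕ :=
  if chain0top L = L.length then
    match findViol gs L with
    | some x => coverT gs L x
    | none => maxU L + 2
  else maxU L + 2

def hist (gs : ℕ → ℕ → ℕ) : ℕ → List ℕ :=
  fun n => Nat.rec [] (fun _ ih => ih ++ [step gs ih]) n

def Ffun (gs : ℕ → ℕ → ℕ) (n : ℕ) : ℕ := step gs (hist gs n)

theorem hist_succ (gs : ℕ → ℕ → ℕ) (n : ℕ) :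
    hist gs (n+1) = hist gs n ++ [Ffun gs n] := rfl

theorem hist_eq_map (gs : ℕ → ℕ → ℕ) (n : ℕ) :
    hist gs n = (List.range n).map (Ffun gs) := by
  induction n with
  | zero => rfl
  | succ n ih => rw [hist_succ, ih, List.range_succ, List.map_append]; rfl

theorem hist_length (gs : ℕ → ℕ → ℕ) (n : ℕ) : (hist gs n).length = n := by
  rw [hist_eq_map]; simp

theorem mem_hist {gs : ℕ → ℕ → ℕ} {n b : ℕ} :
    b ∈ hist gs n ↔ ∃ k < n, Ffun gs k = b := by
  rw [hist_eq_map]; simp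

theorem hist_getD {gs : ℕ → ℕ → ℕ} {n k : ℕ} (h : k < n) :
    (hist gs n).getD k 0 = Ffun gs k := by
  rw [hist_eq_map]
  rw [List.getD_eq_getElem?_getD]
  simp [List.getElem?_map, List.getElem?_range h]

/-! ### Specifications -/

theorem stabB_at_n (gs : ℕ → ℕ → ℕ) (x n : ℕ) : stabB gs x n n = true := by
  rw [stabB_iff]
  intro y hy t h1 h2
  have : t = n := by omega
  rw [this]

theorem Mfun_le (gs : ℕ → ℕ → ℕ) (x n : ℕ) : Mfun gs x n ≤ n := by
  unfold Mfun
  have h : ∃ s, stabB gs x n s = true := ⟨n, stabB_at_n gs x n⟩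
  classical
  set r := Nat.find h with hr
  have hrn : r ≤ n := hr ▸ Nat.find_le (stabB_at_n gs x n)
  rw [foldr_pick_eq _ _ r (Nat.find_spec h) (fun s hs => by
    have := Nat.find_min h hs
    revert this; cases stabB gs x n s <;> simp) (n+1) n (by omega)]
  exact hrn

theorem Mfun_stab (gs : ℕ → ℕ → ℕ) (x n : ℕ) : stabB gs x n (Mfun gs x n) = true := by
  unfold Mfun
  classical
  have h : ∃ s, stabB gs x n s = true := ⟨n, stabB_at_n gs x n⟩
  have hrn : Nat.find h ≤ n := Nat.find_le (stabB_at_n gs x n)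
  rw [foldr_pick_eq _ _ (Nat.find h) (Nat.find_spec h) (fun s hs => by
    have := Nat.find_min h hs
    revert this; cases stabB gs x n s <;> simp) (n+1) n (by omega)]
  exact Nat.find_spec h

theorem Mfun_min (gs : ℕ → ℕ → ℕ) {x n s : ℕ} (hs : s < Mfun gs x n) :
    stabB gs x n s = false := by
  unfold Mfun at hs
  classical
  have h : ∃ s, stabB gs x n s = true := ⟨n, stabB_at_n gs x n⟩
  have hrn : Nat.find h ≤ n := Nat.find_le (stabB_at_n gs x n)
  rw [foldr_pick_eq _ _ (Nat.find h) (Nat.find_spec h) (fun s hs => by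
    have := Nat.find_min h hs
    revert this; cases stabB gs x n s <;> simp) (n+1) n (by omega)] at hs
  have := Nat.find_min h hs
  revert this; cases stabB gs x n s <;> simp

theorem findViol_spec {gs : ℕ → ℕ → ℕ} {L : List ℕ} {x : ℕ}
    (h : findViol gs L = some x) :
    x < L.length ∧ violB gs L x = true ∧ ∀ y < x, violB gs L y = false := by
  unfold findViol at h
  classical
  by_cases hex : ∃ y, y < L.length ∧ violB gs L y = true
  · have h' : ∃ y, violB gs L y = true := ⟨hex.choose, hex.choose_spec.2⟩
    have hlt : Nat.find h' < L.length := lt_of_le_of_lt (Nat.find_le hex.choose_spec.2) ?bound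
    case bound => exact hex.choose_spec.1
    rw [foldr_pick_eq _ _ (Nat.find h') (Nat.find_spec h') (fun s hs => by
      have := Nat.find_min h' hs
      revert this; cases violB gs L s <;> simp) L.length none hlt] at h
    cases h
    exact ⟨hlt, Nat.find_spec h', fun y hy => by
      have := Nat.find_min h' hy
      revert this; cases violB gs L y <;> simp⟩
  · push_neg at hex
    rw [foldr_pick_none _ _ _ _ (fun s hs => by
      have := hex s hs
      revert this; cases violB gs L s <;> simp)] at h
    cases h

theorem findViol_of_viol {gs : ℕ → ℕ → ℕ} {L : List ℕ} {x : ℕ}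
    (hx : x < L.length) (hv : violB gs L x = true) :
    ∃ y, findViol gs L = some y ∧ y ≤ x := by
  classical
  have h' : ∃ y, violB gs L y = true := ⟨x, hv⟩
  refine ⟨Nat.find h', ?_, Nat.find_le hv⟩
  unfold findViol
  rw [foldr_pick_eq _ _ (Nat.find h') (Nat.find_spec h') (fun s hs => by
    have := Nat.find_min h' hs
    revert this; cases violB gs L s <;> simp) L.length none
    (lt_of_le_of_lt (Nat.find_le hv) hx)]

theorem nodup_all_zero_len {l : List ℕ} (hn : l.Nodup) (h0 : ∀ b ∈ l, b = 0) :
    l.length ≤ 1 := by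
  match l, hn with
  | [], _ => simp
  | [a], _ => simp
  | a :: b :: t, hn =>
    have ha : a = 0 := h0 a (by simp)
    have hb : b = 0 := h0 b (by simp)
    rw [List.nodup_cons] at hn
    exact absurd (by simp [ha, hb] : a ∈ b :: t) hn.1

theorem cover_spec {gs : ℕ → ℕ → ℕ} {L : List ℕ} {x : ℕ}
    (h : violB gs L x = true) :
    coverT gs L x ∉ L ∧ coverT gs L x ≠ 0 ∧ coverT gs L x < Mfun gs x L.length ∧
      ∀ b, coverT gs L x < b → b < Mfun gs x L.length → b ∈ L ∨ b = 0 := by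
  have hcount : x + 1 < uncovCount L (Mfun gs x L.length) := by
    simpa [violB] using h
  rw [uncovCount_eq] at hcount
  set W := Mfun gs x L.length with hW
  -- there exists an uncovered nonzero element below W
  have hex : ∃ b, b < W ∧ (!memB L b && (b != 0)) = true := by
    by_contra hno
    push_neg at hno
    have hall : ∀ b ∈ uncovList L W, b = 0 := by
      intro b hb
      obtain ⟨hbW, hbL⟩ := mem_uncovList.1 hb
      have := hno b hbW
      revert this
      simp [memB_false_iff.2 hbL]
    have := nodup_all_zero_len (uncovList_nodup L W) hall
    omega
  obtain ⟨hp, hlt, hmax⟩ := foldl_pick_spec (fun b => !memB L b && (b != 0)) W 0 hex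
  have hco : coverT gs L x = (List.range W).foldl
      (fun acc b => cond (!memB L b && (b != 0)) b acc) 0 := rfl
  rw [← hco] at hp hlt hmax
  simp only [Bool.and_eq_true, Bool.not_eq_true', bne_iff_ne] at hp
  refine ⟨memB_false_iff.1 hp.1, hp.2, hlt, fun b hb1 hb2 => ?_⟩
  have := hmax b hb1 hb2
  by_cases hbL : b ∈ L
  · exact Or.inl hbL
  · right
    rw [memB_false_iff.2 hbL] at this
    simpa using this

theorem step_eq_cover {gs : ℕ → ℕ → ℕ} {L : List ℕ} {x : ℕ}
    (h1 : chain0top L = L.length) (h2 : findViol gs L = some x) :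
    step gs L = coverT gs L x := by
  unfold step
  rw [if_pos h1, h2]

theorem step_eq_fresh {gs : ℕ → ℕ → ℕ} {L : List ℕ}
    (h : chain0top L ≠ L.length ∨ findViol gs L = none) :
    step gs L = maxU L + 2 := by
  unfold step
  rcases h with h | h
  · rw [if_neg h]
  · by_cases h1 : chain0top L = L.length
    · rw [if_pos h1, h]
    · rw [if_neg h1]

/-- classification of each step. -/
theorem Ffun_cases (gs : ℕ → ℕ → ℕ) (n : ℕ) :
    Ffun gs n = maxU (hist gs n) + 2 ∨
      (chain0top (hist gs n) = n ∧ ∃ x, findViol gs (hist gs n) = some x ∧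
        Ffun gs n = coverT gs (hist gs n) x) := by
  by_cases h1 : chain0top (hist gs n) = (hist gs n).length
  · cases h2 : findViol gs (hist gs n) with
    | none => exact Or.inl (step_eq_fresh (Or.inr h2))
    | some x =>
      right
      rw [hist_length] at h1
      exact ⟨h1, x, rfl, step_eq_cover (by rw [hist_length]; exact h1) h2⟩
  · exact Or.inl (step_eq_fresh (Or.inl h1))

theorem le_maxU_hist {gs : ℕ → ℕ → ℕ} {n k : ℕ} (h : k < n) :
    Ffun gs k ≤ maxU (hist gs n) :=
  le_maxU_of_mem (mem_hist.2 ⟨k, h, rfl⟩)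

theorem n_le_maxU_hist (gs : ℕ → ℕ → ℕ) (n : ℕ) : n ≤ maxU (hist gs n) := by
  have := length_le_maxU (hist gs n)
  rwa [hist_length] at this

theorem Ffun_not_mem (gs : ℕ → ℕ → ℕ) (n : ℕ) : Ffun gs n ∉ hist gs n := by
  rcases Ffun_cases gs n with h | ⟨h1, x, h2, h3⟩
  · intro hmem
    have := le_maxU_of_mem hmem
    omega
  · have hv := (findViol_spec h2).2.1
    have := (cover_spec hv).1
    rw [← h3] at this
    exact this

theorem Ffun_pos (gs : ℕ → ℕ → ℕ) (n : ℕ) : 1 ≤ Ffun gs n := by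
  rcases Ffun_cases gs n with h | ⟨h1, x, h2, h3⟩
  · omega
  · have hv := (findViol_spec h2).2.1
    have := (cover_spec hv).2.1
    rw [← h3] at this
    omega

theorem Ffun_inj (gs : ℕ → ℕ → ℕ) : Function.Injective (Ffun gs) := by
  intro k n h
  rcases lt_trichotomy k n with hkn | hkn | hkn
  · exact absurd (mem_hist.2 ⟨k, hkn, h⟩) (Ffun_not_mem gs n)
  · exact hkn
  · exact absurd (mem_hist.2 ⟨n, hkn, h.symm⟩) (Ffun_not_mem gs k)

theorem Ffun_cover_of_le {gs : ℕ → ℕ → ℕ} {n : ℕ} (h : Ffun gs n ≤ n) :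
    chain0top (hist gs n) = n ∧ ∃ x, findViol gs (hist gs n) = some x ∧
      Ffun gs n = coverT gs (hist gs n) x ∧ Ffun gs n < Mfun gs x n := by
  rcases Ffun_cases gs n with hf | ⟨h1, x, h2, h3⟩
  · have := n_le_maxU_hist gs n
    omega
  · have hv := (findViol_spec h2).2.1
    have hlt := (cover_spec hv).2.2.1
    rw [← h3, hist_length] at hlt
    exact ⟨h1, x, h2, h3, hlt⟩

/-! ### chain-0 analysis -/

theorem foldr_iterate {σ : Type*} (h : σ → σ) (init : σ) (l : List ℕ) :
    l.foldr (fun _ c => h c) init = h^[l.length] init := by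
  induction l with
  | nil => rfl
  | cons a t ih =>
    rw [List.foldr_cons, ih, List.length_cons, Function.iterate_succ_apply']

theorem chain0top_eq_iterate (gs : ℕ → ℕ → ℕ) (n : ℕ) :
    chain0top (hist gs n) = (fun c => if c < n then Ffun gs c else c)^[n+1] 0 := by
  unfold chain0top
  rw [foldr_iterate]
  rw [List.length_range, hist_length]
  congr 1
  funext c
  by_cases h : c < n
  · rw [if_pos h, decide_eq_true h, cond_true, hist_getD h]
  · rw [if_neg h, decide_eq_false h, cond_false]

theorem iter0_inj (gs : ℕ → ℕ → ℕ) : Function.Injective (fun i => (Ffun gs)^[i] 0) := by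
  intro i j h
  simp only at h
  by_contra hne
  rcases lt_trichotomy i j with hij | hij | hij
  · have : (Ffun gs)^[i] ((Ffun gs)^[j-i] 0) = (Ffun gs)^[i] 0 := by
      rw [← Function.iterate_add_apply]
      rw [(by omega : i + (j - i) = j)]
      exact h.symm
    have h0 : (Ffun gs)^[j-i] 0 = 0 := (Ffun_inj gs).iterate i this
    have hj : j - i ≥ 1 := by omega
    obtain ⟨k, hk⟩ : ∃ k, j - i = k + 1 := ⟨j - i - 1, by omega⟩
    rw [hk, Function.iterate_succ_apply'] at h0
    have := Ffun_pos gs ((Ffun gs)^[k] 0)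
    omega
  · exact hne hij
  · have : (Ffun gs)^[j] ((Ffun gs)^[i-j] 0) = (Ffun gs)^[j] 0 := by
      rw [← Function.iterate_add_apply]
      rw [(by omega : j + (i - j) = i)]
      exact h
    have h0 : (Ffun gs)^[i-j] 0 = 0 := (Ffun_inj gs).iterate j this
    obtain ⟨k, hk⟩ : ∃ k, i - j = k + 1 := ⟨i - j - 1, by omega⟩
    rw [hk, Function.iterate_succ_apply'] at h0
    have := Ffun_pos gs ((Ffun gs)^[k] 0)
    omega

theorem exists_iter_ge (gs : ℕ → ℕ → ℕ) (n : ℕ) : ∃ i ≤ n, n ≤ (Ffun gs)^[i] 0 := by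
  by_contra h
  push_neg at h
  have hmap : ∀ i ∈ Finset.range (n+1), (Ffun gs)^[i] 0 ∈ Finset.range n := by
    intro i hi
    rw [Finset.mem_range] at hi ⊢
    exact h i (by omega)
  obtain ⟨i, hi, j, hj, hne, heq⟩ :=
    Finset.exists_ne_map_eq_of_card_lt_of_maps_to (by simp) hmap
  exact hne (iter0_inj gs heq)

theorem exI (gs : ℕ → ℕ → ℕ) (n : ℕ) : ∃ i, n ≤ (Ffun gs)^[i] 0 :=
  ⟨(exists_iter_ge gs n).choose, (exists_iter_ge gs n).choose_spec.2⟩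

noncomputable def I0 (gs : ℕ → ℕ → ℕ) (n : ℕ) : ℕ :=
  @Nat.find (fun i => n ≤ (Ffun gs)^[i] 0) (fun i => Classical.dec _) (exI gs n)

noncomputable def TOP (gs : ℕ → ℕ → ℕ) (n : ℕ) : ℕ := (Ffun gs)^[I0 gs n] 0

theorem TOP_ge (gs : ℕ → ℕ → ℕ) (n : ℕ) : n ≤ TOP gs n :=
  @Nat.find_spec (fun i => n ≤ (Ffun gs)^[i] 0) (fun i => Classical.dec _) (exI gs n)

theorem I0_min (gs : ℕ → ℕ → ℕ) {n j : ℕ} (h : j < I0 gs n) : (Ffun gs)^[j] 0 < n := by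
  have := @Nat.find_min (fun i => n ≤ (Ffun gs)^[i] 0) (fun i => Classical.dec _)
    (exI gs n) j h
  omega

theorem I0_le_of (gs : ℕ → ℕ → ℕ) {n i : ℕ} (h : n ≤ (Ffun gs)^[i] 0) : I0 gs n ≤ i :=
  @Nat.find_le i (fun i => n ≤ (Ffun gs)^[i] 0) (fun i => Classical.dec _) (exI gs n) h

theorem I0_le (gs : ℕ → ℕ → ℕ) (n : ℕ) : I0 gs n ≤ n := by
  obtain ⟨i, hi, hge⟩ := exists_iter_ge gs n
  exact le_trans (I0_le_of gs hge) hi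

theorem chain0top_eq_TOP (gs : ℕ → ℕ → ℕ) (n : ℕ) :
    chain0top (hist gs n) = TOP gs n := by
  rw [chain0top_eq_iterate]
  set g := fun c => if c < n then Ffun gs c else c with hg
  have hiter : ∀ j ≤ I0 gs n, g^[j] 0 = (Ffun gs)^[j] 0 := by
    intro j hj
    induction j with
    | zero => rfl
    | succ j ih =>
      rw [Function.iterate_succ_apply', Function.iterate_succ_apply',
        ih (by omega)]
      have : (Ffun gs)^[j] 0 < n := I0_min gs (by omega)
      rw [hg]
      simp only
      rw [if_pos this]
  have hfix : ∀ k c, n ≤ c → g^[k] c = c := by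
    intro k
    induction k with
    | zero => intro c _; rfl
    | succ k ih =>
      intro c hc
      rw [Function.iterate_succ_apply]
      have : g c = c := by rw [hg]; simp only; rw [if_neg (by omega)]
      rw [this, ih c hc]
  have h1 : n + 1 = I0 gs n + (n + 1 - I0 gs n) := by
    have := I0_le gs n
    omega
  rw [h1, Nat.add_comm, Function.iterate_add_apply, hiter (I0 gs n) le_rfl]
  exact hfix _ _ (TOP_ge gs n)

theorem TOP_idem (gs : ℕ → ℕ → ℕ) (n : ℕ) : TOP gs (TOP gs n) = TOP gs n := by
  unfold TOP
  congr 1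
  apply le_antisymm
  · exact I0_le_of gs (le_of_eq rfl)
  · by_contra h
    push_neg at h
    have h1 : (Ffun gs)^[I0 gs (TOP gs n)] 0 < n := I0_min gs h
    have h2 : TOP gs n ≤ (Ffun gs)^[I0 gs (TOP gs n)] 0 := TOP_ge gs (TOP gs n)
    have h3 : n ≤ TOP gs n := TOP_ge gs n
    omega

theorem turn_exists (gs : ℕ → ℕ → ℕ) (N : ℕ) :
    ∃ n, N ≤ n ∧ chain0top (hist gs n) = n := by
  refine ⟨TOP gs N, TOP_ge gs N, ?_⟩
  rw [chain0top_eq_TOP]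
  exact TOP_idem gs N

theorem turn_source {gs : ℕ → ℕ → ℕ} {n : ℕ} (h : chain0top (hist gs n) = n) :
    ∃ i, (Ffun gs)^[i] 0 = n ∧ ∀ j < i, (Ffun gs)^[j] 0 < n := by
  rw [chain0top_eq_TOP] at h
  exact ⟨I0 gs n, h, fun j hj => I0_min gs hj⟩

/-! ### no cycles -/

theorem no_cycle (gs : ℕ → ℕ → ℕ) (a k : ℕ) : (Ffun gs)^[k+1] a ≠ a := by
  intro hcyc
  classical
  obtain ⟨p, hp, hmax⟩ := Finset.exists_max_image (Finset.range (k+1))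
    (fun i => (Ffun gs)^[i] a) ⟨0, by simp⟩
  have hpk : p ≤ k := by
    have := Finset.mem_range.1 hp
    omega
  have hFn : Ffun gs ((Ffun gs)^[p] a) = (Ffun gs)^[p+1] a :=
    (Function.iterate_succ_apply' (Ffun gs) p a).symm
  have hFn_le : Ffun gs ((Ffun gs)^[p] a) ≤ (Ffun gs)^[p] a := by
    rcases Nat.lt_or_ge p k with h | h
    · have := hmax (p+1) (Finset.mem_range.2 (by omega))
      omega
    · have hpk' : p = k := by omega
      subst hpk'
      rw [hFn, hcyc]
      have := hmax 0 (Finset.mem_range.2 (by omega))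
      simpa using this
  obtain ⟨hturn, x, hsome, hcov, _⟩ := Ffun_cover_of_le hFn_le
  obtain ⟨i, hi, himin⟩ := turn_source hturn
  have hv := (findViol_spec hsome).2.1
  have hbnm : Ffun gs ((Ffun gs)^[p] a) ∉ hist gs ((Ffun gs)^[p] a) := by
    rw [hcov]
    exact (cover_spec hv).1
  have hbpos : (1:ℕ) ≤ Ffun gs ((Ffun gs)^[p] a) := Ffun_pos gs _
  -- from the cycle, iterating k more times from the successor returns to the max
  have hkb : (Ffun gs)^[k] (Ffun gs ((Ffun gs)^[p] a)) = (Ffun gs)^[p] a := by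
    rw [hFn, ← Function.iterate_add_apply]
    have he : k + (p+1) = p + (k+1) := by omega
    rw [he, Function.iterate_add_apply, hcyc]
  rcases Nat.lt_or_ge k i with hik | hik
  · -- i > k : the covered value is in the history
    have hstep : (Ffun gs)^[k] (Ffun gs ((Ffun gs)^[p] a))
        = (Ffun gs)^[k] ((Ffun gs)^[i-k] 0) := by
      rw [← Function.iterate_add_apply]
      have he : k + (i - k) = i := by omega
      rw [he, hi, hkb]
    have hb0 : Ffun gs ((Ffun gs)^[p] a) = (Ffun gs)^[i-k] 0 :=
      (Ffun_inj gs).iterate k hstep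
    obtain ⟨m, hm⟩ : ∃ m, i - k = m + 1 := ⟨i - k - 1, by omega⟩
    have hmem : Ffun gs ((Ffun gs)^[p] a) ∈ hist gs ((Ffun gs)^[p] a) := by
      rw [mem_hist]
      refine ⟨(Ffun gs)^[m] 0, himin m (by omega), ?_⟩
      rw [hb0, hm, Function.iterate_succ_apply']
    exact hbnm hmem
  · -- i ≤ k : the value 0 would be in the range of Ffun
    have hstep : (Ffun gs)^[i] ((Ffun gs)^[k-i] (Ffun gs ((Ffun gs)^[p] a)))
        = (Ffun gs)^[i] 0 := by
      rw [← Function.iterate_add_apply]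
      have he : i + (k - i) = k := by omega
      rw [he, hkb, hi]
    have h0 : (Ffun gs)^[k-i] (Ffun gs ((Ffun gs)^[p] a)) = 0 :=
      (Ffun_inj gs).iterate i hstep
    rcases Nat.eq_zero_or_pos (k - i) with hz | hz
    · rw [hz] at h0
      simp only [Function.iterate_zero_apply] at h0
      omega
    · obtain ⟨m, hm⟩ : ∃ m, k - i = m + 1 := ⟨k - i - 1, by omega⟩
      rw [hm, Function.iterate_succ_apply'] at h0
      have := Ffun_pos gs ((Ffun gs)^[m] (Ffun gs ((Ffun gs)^[p] a)))
      omega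

theorem iterates_inj (gs : ℕ → ℕ → ℕ) (a : ℕ) :
    Function.Injective (fun m => (Ffun gs)^[m] a) := by
  intro i j h
  simp only at h
  by_contra hne
  rcases lt_trichotomy i j with hij | hij | hij
  · have : (Ffun gs)^[i] ((Ffun gs)^[j-i] a) = (Ffun gs)^[i] a := by
      rw [← Function.iterate_add_apply, (by omega : i + (j - i) = j)]
      exact h.symm
    have h0 := (Ffun_inj gs).iterate i this
    obtain ⟨m, hm⟩ : ∃ m, j - i = m + 1 := ⟨j - i - 1, by omega⟩
    rw [hm] at h0
    exact no_cycle gs a m h0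
  · exact hne hij
  · have : (Ffun gs)^[j] ((Ffun gs)^[i-j] a) = (Ffun gs)^[j] a := by
      rw [← Function.iterate_add_apply, (by omega : j + (i - j) = i)]
      exact h
    have h0 := (Ffun_inj gs).iterate j this
    obtain ⟨m, hm⟩ : ∃ m, i - j = m + 1 := ⟨i - j - 1, by omega⟩
    rw [hm] at h0
    exact no_cycle gs a m h0

/-! ### orbits -/

theorem mem_orbit_self (f : ℕ → ℕ) (a : ℕ) : a ∈ Orbit f a := ⟨0, 0, rfl⟩

theorem mem_orbit_apply {f : ℕ → ℕ} {a b : ℕ} (h : b ∈ Orbit f a) :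
    b ∈ Orbit f (f a) := by
  obtain ⟨m, n, hmn⟩ := h
  refine ⟨m, n+1, ?_⟩
  calc f^[m] (f a) = f^[m+1] a := (Function.iterate_succ_apply f m a).symm
    _ = f (f^[m] a) := Function.iterate_succ_apply' f m a
    _ = f (f^[n] b) := by rw [hmn]
    _ = f^[n+1] b := (Function.iterate_succ_apply' f n b).symm

theorem orbit_infinite (gs : ℕ → ℕ → ℕ) (a : ℕ) : (Orbit (Ffun gs) a).Infinite := by
  exact Set.infinite_of_injective_forall_mem (iterates_inj gs a)
    (fun m => ⟨m, 0, rfl⟩)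

theorem head_exists (gs : ℕ → ℕ → ℕ) :
    ∀ a, ∃ b, b ∈ Orbit (Ffun gs) a ∧ b ∉ Set.range (Ffun gs) := by
  intro a
  induction a using Nat.strong_induction_on with
  | _ a ih =>
    classical
    by_cases ha : a ∈ Set.range (Ffun gs)
    · obtain ⟨c, hc⟩ := ha
      rcases Nat.lt_or_ge c a with hca | hca
      · obtain ⟨b, hb1, hb2⟩ := ih c hca
        exact ⟨b, hc ▸ mem_orbit_apply hb1, hb2⟩
      · -- a = Ffun c with c ≥ a, so step c is a covering step: c is on the 0-chain
        have hle : Ffun gs c ≤ c := by omega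
        obtain ⟨hturn, _⟩ := Ffun_cover_of_le hle
        obtain ⟨i, hi, _⟩ := turn_source hturn
        refine ⟨0, ⟨0, i+1, ?_⟩, ?_⟩
        · simp only [Function.iterate_zero_apply]
          rw [Function.iterate_succ_apply', hi, hc]
        · rintro ⟨m, hm⟩
          have := Ffun_pos gs m
          omega
    · exact ⟨a, mem_orbit_self _ a, ha⟩

/-! ### stabilization -/

def Sset (gs : ℕ → ℕ → ℕ) (x : ℕ) : Set ℕ := {s | ∀ y ≤ x, ∀ t ≥ s, gs y t = gs y s}

theorem exists_isLeast_stab (gs : ℕ → ℕ → ℕ)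
    (hev : ∀ y : ℕ, ∃ s₀ : ℕ, ∀ t ≥ s₀, gs y t = gs y s₀) (x : ℕ) :
    ∃ s, IsLeast (Sset gs x) s := by
  classical
  have hne : (Sset gs x).Nonempty := by
    refine ⟨(Finset.range (x+1)).sup (fun y => (hev y).choose), ?_⟩
    intro y hy t ht
    have hyu : (hev y).choose ≤ (Finset.range (x+1)).sup (fun y => (hev y).choose) :=
      Finset.le_sup (f := fun y => (hev y).choose)
        (Finset.mem_range.2 (Nat.lt_succ_of_le hy))
    have h1 : gs y t = gs y ((hev y).choose) := (hev y).choose_spec t (le_trans hyu ht)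
    have h2 : gs y ((Finset.range (x+1)).sup (fun y => (hev y).choose))
        = gs y ((hev y).choose) := (hev y).choose_spec _ hyu
    rw [h1, h2]
  exact ⟨sInf (Sset gs x), Nat.sInf_mem hne, fun b hb => Nat.sInf_le hb⟩

theorem Sset_anti (gs : ℕ → ℕ → ℕ) {y x : ℕ} (h : y ≤ x) : Sset gs x ⊆ Sset gs y :=
  fun s hs y' hy' t ht => hs y' (by omega) t ht

theorem Mfun_le_sx {gs : ℕ → ℕ → ℕ} {x sx : ℕ} (hsx : IsLeast (Sset gs x) sx) (n : ℕ) :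
    Mfun gs x n ≤ sx := by
  rcases le_or_gt n sx with h | h
  · exact le_trans (Mfun_le gs x n) h
  · by_contra hc
    push_neg at hc
    have := Mfun_min gs (x := x) (n := n) hc
    have hstab : stabB gs x n sx = true := by
      rw [stabB_iff]
      intro y hy t h1 h2
      rw [hsx.1 y hy t h1]
    rw [hstab] at this
    cases this

theorem Mfun_eq_sx {gs : ℕ → ℕ → ℕ} {x sx : ℕ} (hsx : IsLeast (Sset gs x) sx)
    {n : ℕ} (hn : sx ≤ n) : Mfun gs x n = sx := by
  refine le_antisymm (Mfun_le_sx hsx n) ?_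
  by_contra hc
  push_neg at hc
  have hmem : Mfun gs x n ∈ Sset gs x := by
    intro y hy t ht
    have hstab := stabB_iff.1 (Mfun_stab gs x n)
    rcases le_or_gt t n with h | h
    · exact hstab y hy t ht h
    · have h1 : gs y t = gs y sx := hsx.1 y hy t (by omega)
      have h2 : gs y sx = gs y (Mfun gs x n) := hstab y hy sx (by omega) (by omega)
      rw [h1, h2]
  have := hsx.2 hmem
  omega

/-! ### infinitely many turns -/

theorem turns_infinite (gs : ℕ → ℕ → ℕ) :
    {n : ℕ | chain0top (hist gs n) = n}.Infinite := by
  apply Set.infinite_of_not_bddAbove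
  rintro ⟨B, hB⟩
  obtain ⟨n, hn1, hn2⟩ := turn_exists gs (B+1)
  have := hB hn2
  omega

/-! ### the head-count bound -/

theorem count_le (gs : ℕ → ℕ → ℕ)
    (hev : ∀ y : ℕ, ∃ s₀ : ℕ, ∀ t ≥ s₀, gs y t = gs y s₀)
    {x sx : ℕ} (hsx : IsLeast (Sset gs x) sx) :
    {b : ℕ | b ∉ Set.range (Ffun gs) ∧ b < sx}.ncard ≤ x + 1 := by
  by_contra hcon
  push_neg at hcon
  set H := {b : ℕ | b ∉ Set.range (Ffun gs) ∧ b < sx} with hH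
  have hHfin : H.Finite := Set.Finite.subset (Set.finite_Iio sx) (fun b hb => hb.2)
  -- at every late turn, a value < sx is emitted
  have key : ∀ n, max sx (x+1) ≤ n → chain0top (hist gs n) = n → Ffun gs n < sx := by
    intro n hn hturn
    have hM : Mfun gs x n = sx := Mfun_eq_sx hsx (by omega)
    have hcount : x + 1 < uncovCount (hist gs n) (Mfun gs x ((hist gs n).length)) := by
      rw [hist_length, hM, uncovCount_eq]
      have hsub : hHfin.toFinset ⊆ (uncovList (hist gs n) sx).toFinset := by
        intro b hb
        rw [Set.Finite.mem_toFinset] at hb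
        rw [List.mem_toFinset, mem_uncovList]
        refine ⟨hb.2, ?_⟩
        intro hmem
        obtain ⟨k, _, hk⟩ := mem_hist.1 hmem
        exact hb.1 ⟨k, hk⟩
      have h1 := Finset.card_le_card hsub
      have h2 := List.toFinset_card_le (uncovList (hist gs n) sx)
      have h4 : x + 1 < H.ncard := hcon
      rw [Set.ncard_eq_toFinset_card _ hHfin] at h4
      omega
    have hvB : violB gs (hist gs n) x = true := decide_eq_true hcount
    obtain ⟨y, hysome, hyx⟩ := findViol_of_viol (by rw [hist_length]; omega) hvB
    obtain ⟨sy, hsy⟩ := exists_isLeast_stab gs hev y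
    have hsyx : sy ≤ sx := hsy.2 (Sset_anti gs hyx hsx.1)
    have hstep : Ffun gs n = coverT gs (hist gs n) y :=
      step_eq_cover (by rw [hist_length]; exact hturn) hysome
    have hlt := (cover_spec (findViol_spec hysome).2.1).2.2.1
    rw [hist_length] at hlt
    have hMy : Mfun gs y n ≤ sy := Mfun_le_sx hsy n
    omega
  -- the set of late turns is infinite, its image under Ffun is an infinite subset of Iio sx
  have hturns : {n : ℕ | max sx (x+1) ≤ n ∧ chain0top (hist gs n) = n}.Infinite := by
    apply Set.infinite_of_not_bddAbove
    rintro ⟨B, hB⟩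
    obtain ⟨n, hn1, hn2⟩ := turn_exists gs (max sx (x+1) + B + 1)
    have := hB ⟨by omega, hn2⟩
    omega
  have himg : (Ffun gs '' {n : ℕ | max sx (x+1) ≤ n ∧ chain0top (hist gs n) = n}).Infinite :=
    hturns.image ((Ffun_inj gs).injOn)
  have hsub : (Ffun gs '' {n : ℕ | max sx (x+1) ≤ n ∧ chain0top (hist gs n) = n}) ⊆
      Set.Iio sx := by
    rintro b ⟨n, ⟨hn1, hn2⟩, rfl⟩
    exact key n hn1 hn2
  exact himg (Set.Finite.subset (Set.finite_Iio sx) hsub)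

/-! ### infinitude of heads -/

theorem maxU_le {L : List ℕ} {c : ℕ} (h1 : L.length ≤ c) (h2 : ∀ a ∈ L, a ≤ c) :
    maxU L ≤ c := by
  unfold maxU
  revert h1
  generalize L.length = d
  intro h1
  induction L with
  | nil => simpa using h1
  | cons b l ih =>
    simp only [List.foldr]
    have hb : b ≤ c := h2 b (by simp)
    have := ih (fun a ha => h2 a (List.mem_cons_of_mem b ha))
    omega

theorem maxU_hist_mono (gs : ℕ → ℕ → ℕ) {n m : ℕ} (h : n ≤ m) :
    maxU (hist gs n) ≤ maxU (hist gs m) := by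
  apply maxU_le
  · rw [hist_length]
    have := n_le_maxU_hist gs m
    omega
  · intro a ha
    obtain ⟨k, hk, hka⟩ := mem_hist.1 ha
    rw [← hka]
    exact le_maxU_hist (by omega)

theorem heads_infinite (gs : ℕ → ℕ → ℕ)
    (hev : ∀ y : ℕ, ∃ s₀ : ℕ, ∀ t ≥ s₀, gs y t = gs y s₀) :
    {b : ℕ | b ∉ Set.range (Ffun gs)}.Infinite := by
  classical
  by_cases hCS : {n : ℕ | Ffun gs n ≠ maxU (hist gs n) + 2}.Infinite
  · -- infinitely many covering stages
    by_contra hfin'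
    rw [Set.not_infinite] at hfin'
    -- each covering stage is a turn with a violation
    have hclass : ∀ n ∈ {n : ℕ | Ffun gs n ≠ maxU (hist gs n) + 2},
        chain0top (hist gs n) = n ∧ ∃ y, findViol gs (hist gs n) = some y ∧
          Ffun gs n = coverT gs (hist gs n) y := by
      intro n hn
      rcases Ffun_cases gs n with hc | ⟨h1, y, h2, h3⟩
      · exact absurd hc hn
      · exact ⟨h1, y, h2, h3⟩
    -- each covering index y yields finitely many stages
    have hperidx : ∀ y : ℕ,
        {n : ℕ | chain0top (hist gs n) = n ∧ findViol gs (hist gs n) = some y}.Finite := by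
      intro y
      obtain ⟨sy, hsy⟩ := exists_isLeast_stab gs hev y
      apply Set.Finite.of_finite_image (f := Ffun gs) _ ((Ffun_inj gs).injOn)
      apply Set.Finite.subset (Set.finite_Iio sy)
      rintro b ⟨n, ⟨hturn, hsome⟩, rfl⟩
      have hstep : Ffun gs n = coverT gs (hist gs n) y :=
        step_eq_cover (by rw [hist_length]; exact hturn) hsome
      have hlt := (cover_spec (findViol_spec hsome).2.1).2.2.1
      rw [hist_length] at hlt
      have := Mfun_le_sx hsy n
      rw [Set.mem_Iio]
      omega
    set h := {b : ℕ | b ∉ Set.range (Ffun gs)}.ncard with hh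
    -- all covering stages with index ≤ h+1 are bounded by some T₁
    have hsmall : {n : ℕ | chain0top (hist gs n) = n ∧
        ∃ y ≤ h+1, findViol gs (hist gs n) = some y}.Finite := by
      have : {n : ℕ | chain0top (hist gs n) = n ∧
          ∃ y ≤ h+1, findViol gs (hist gs n) = some y} ⊆
          ⋃ y ∈ Set.Iic (h+1),
            {n : ℕ | chain0top (hist gs n) = n ∧ findViol gs (hist gs n) = some y} := by
        rintro n ⟨hturn, y, hy, hsome⟩
        exact Set.mem_biUnion hy ⟨hturn, hsome⟩
      exact Set.Finite.subset (Set.Finite.biUnion (Set.finite_Iic (h+1))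
        (fun y _ => hperidx y)) this
    obtain ⟨T₁, hT₁⟩ : ∃ T₁, ∀ n ∈ {n : ℕ | chain0top (hist gs n) = n ∧
        ∃ y ≤ h+1, findViol gs (hist gs n) = some y}, n < T₁ := by
      rcases Set.eq_empty_or_nonempty {n : ℕ | chain0top (hist gs n) = n ∧
          ∃ y ≤ h+1, findViol gs (hist gs n) = some y} with he | hne
      · exact ⟨0, fun n hn => absurd hn (by rw [he]; simp)⟩
      · obtain ⟨B, hB⟩ := hsmall.bddAbove
        exact ⟨B+1, fun n hn => by have := hB hn; omega⟩
    -- the set of covered values from late covering stages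
    have hDne : {b : ℕ | ∃ n, T₁ ≤ n ∧ Ffun gs n ≠ maxU (hist gs n) + 2 ∧
        Ffun gs n = b}.Nonempty := by
      have : ∃ n, T₁ ≤ n ∧ n ∈ {n : ℕ | Ffun gs n ≠ maxU (hist gs n) + 2} := by
        by_contra hno
        push_neg at hno
        apply hCS
        apply Set.Finite.subset (Set.finite_Iio T₁)
        intro n hn
        rw [Set.mem_Iio]
        by_contra hc
        exact (hno n (by omega)) hn
      obtain ⟨n, hn1, hn2⟩ := this
      exact ⟨Ffun gs n, n, hn1, hn2, rfl⟩
    set b0 := sInf {b : ℕ | ∃ n, T₁ ≤ n ∧ Ffun gs n ≠ maxU (hist gs n) + 2 ∧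
        Ffun gs n = b} with hb0
    obtain ⟨n0, hn0T, hn0CS, hn0b⟩ := Nat.sInf_mem hDne
    obtain ⟨hturn0, y0, hsome0, hcov0⟩ := hclass n0 hn0CS
    -- the index y0 is large
    have hy0 : h + 2 ≤ y0 := by
      by_contra hc
      push_neg at hc
      have := hT₁ n0 ⟨hturn0, y0, by omega, hsome0⟩
      omega
    -- the uncovered list below the window is large
    have hviol := (findViol_spec hsome0).2.1
    have hcount : y0 + 1 < uncovCount (hist gs n0) (Mfun gs y0 n0) := by
      have h5 : y0 + 1 < uncovCount (hist gs n0) (Mfun gs y0 ((hist gs n0).length)) :=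
        of_decide_eq_true hviol
      rwa [hist_length] at h5
    rw [uncovCount_eq] at hcount
    have hcspec := cover_spec hviol
    rw [hist_length] at hcspec
    obtain ⟨hbnm, hbne0, hblt, hbmax⟩ := hcspec
    rw [← hcov0] at hbnm hbne0 hblt hbmax
    -- a large finite set of uncovered elements, all ≤ Ffun gs n0
    have hULnd : (uncovList (hist gs n0) (Mfun gs y0 n0)).Nodup := uncovList_nodup _ _
    have hULcard : (uncovList (hist gs n0) (Mfun gs y0 n0)).toFinset.card
        = (uncovList (hist gs n0) (Mfun gs y0 n0)).length :=
      List.toFinset_card_of_nodup hULnd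
    have hb0mem : Ffun gs n0 ∈ (uncovList (hist gs n0) (Mfun gs y0 n0)).toFinset := by
      rw [List.mem_toFinset, mem_uncovList]
      exact ⟨hblt, hbnm⟩
    set U : Finset ℕ := (uncovList (hist gs n0) (Mfun gs y0 n0)).toFinset.erase (Ffun gs n0)
      with hU
    have hUcard : y0 + 1 ≤ U.card := by
      rw [hU, Finset.card_erase_of_mem hb0mem]
      omega
    -- pick an element of U that is not a head
    have hex : ∃ e ∈ U, e ∉ hfin'.toFinset := by
      by_contra hno
      push_neg at hno
      have hsub : U ⊆ hfin'.toFinset := fun e he => hno e he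
      have := Finset.card_le_card hsub
      rw [Set.ncard_eq_toFinset_card _ hfin'] at hh
      omega
    obtain ⟨e, heU, heh⟩ := hex
    have heUL : e ∈ uncovList (hist gs n0) (Mfun gs y0 n0) :=
      List.mem_toFinset.1 (Finset.mem_of_mem_erase heU)
    have hene : e ≠ Ffun gs n0 := Finset.ne_of_mem_erase heU
    obtain ⟨heW, henm⟩ := mem_uncovList.1 heUL
    -- e < Ffun gs n0
    have helt : e < Ffun gs n0 := by
      rcases Nat.lt_or_ge e (Ffun gs n0) with hlt2 | hge
      · exact hlt2
      · have : Ffun gs n0 < e := by omega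
        rcases hbmax e this heW with hmem | hzero
        · exact absurd hmem henm
        · have := Ffun_pos gs n0
          omega
    -- e is in the range of Ffun, at a late covering stage
    have : e ∈ Set.range (Ffun gs) := by
      by_contra hc
      exact heh (by rw [Set.Finite.mem_toFinset]; exact hc)
    obtain ⟨m, hm⟩ := this
    have hmgt : n0 < m := by
      rcases lt_trichotomy m n0 with h1 | h1 | h1
      · exact absurd (mem_hist.2 ⟨m, h1, hm⟩) henm
      · rw [h1] at hm; omega
      · exact h1
    have hmCS : Ffun gs m ≠ maxU (hist gs m) + 2 := by
      have h1 : Mfun gs y0 n0 ≤ n0 := Mfun_le gs y0 n0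
      have h2 : m ≤ maxU (hist gs m) := n_le_maxU_hist gs m
      omega
    -- so e ∈ D with e < b0, contradicting minimality of b0
    have heD : e ∈ {b : ℕ | ∃ n, T₁ ≤ n ∧ Ffun gs n ≠ maxU (hist gs n) + 2 ∧
        Ffun gs n = b} := ⟨m, by omega, hmCS, hm⟩
    have := Nat.sInf_le heD
    rw [← hb0] at this
    omega
  · -- only finitely many covering stages: fresh skipped values are heads
    rw [Set.not_infinite] at hCS
    obtain ⟨T, hT⟩ : ∃ T, ∀ n, T ≤ n → Ffun gs n = maxU (hist gs n) + 2 := by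
      rcases Set.eq_empty_or_nonempty {n : ℕ | Ffun gs n ≠ maxU (hist gs n) + 2} with he | hne
      · refine ⟨0, fun n _ => ?_⟩
        by_contra hc
        exact absurd (Set.eq_empty_iff_forall_notMem.1 he n) (by simpa using hc)
      · obtain ⟨B, hB⟩ := hCS.bddAbove
        refine ⟨B+1, fun n hn => ?_⟩
        by_contra hc
        have := hB (by exact hc : n ∈ {n : ℕ | Ffun gs n ≠ maxU (hist gs n) + 2})
        omega
    have hstep : ∀ k : ℕ, maxU (hist gs (T+k)) + 2 ≤ maxU (hist gs (T+k+1)) := by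
      intro k
      have h1 : Ffun gs (T+k) ≤ maxU (hist gs (T+k+1)) :=
        le_maxU_hist (by omega)
      rw [hT (T+k) (by omega)] at h1
      exact h1
    have hmono : StrictMono (fun k => maxU (hist gs (T+k)) + 1) := by
      apply strictMono_nat_of_lt_succ
      intro k
      have := hstep k
      have he : T + k + 1 = T + (k+1) := by omega
      rw [he] at this
      omega
    apply Set.infinite_of_injective_forall_mem (f := fun k => maxU (hist gs (T+k)) + 1)
      hmono.injective
    intro k
    rintro ⟨m, hm⟩
    rcases lt_trichotomy m (T+k) with hmk | hmk | hmk
    · have : Ffun gs m ≤ maxU (hist gs (T+k)) := le_maxU_hist hmk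
      omega
    · rw [hmk, hT (T+k) (by omega)] at hm
      omega
    · have h1 : Ffun gs m = maxU (hist gs m) + 2 := hT m (by omega)
      have h2 : maxU (hist gs (T+k+1)) ≤ maxU (hist gs m) := maxU_hist_mono gs (by omega)
      have := hstep k
      omega

/-! ### distinct heads give distinct orbits -/

theorem head_eq_of_orbit {gs : ℕ → ℕ → ℕ} {b1 b2 : ℕ}
    (h1 : b1 ∉ Set.range (Ffun gs)) (h2 : b2 ∉ Set.range (Ffun gs))
    (h : b2 ∈ Orbit (Ffun gs) b1) : b1 = b2 := by
  obtain ⟨m, n, hmn⟩ := h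
  rcases le_or_gt m n with hle | hlt
  · have : (Ffun gs)^[m] b1 = (Ffun gs)^[m] ((Ffun gs)^[n-m] b2) := by
      rw [← Function.iterate_add_apply, (by omega : m + (n - m) = n)]
      exact hmn
    have heq := (Ffun_inj gs).iterate m this
    rcases Nat.eq_zero_or_pos (n - m) with hz | hp
    · rw [hz] at heq
      exact heq
    · obtain ⟨k, hk⟩ : ∃ k, n - m = k + 1 := ⟨n - m - 1, by omega⟩
      rw [hk, Function.iterate_succ_apply'] at heq
      exact absurd ⟨(Ffun gs)^[k] b2, heq.symm⟩ h1
  · have : (Ffun gs)^[n] ((Ffun gs)^[m-n] b1) = (Ffun gs)^[n] b2 := by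
      rw [← Function.iterate_add_apply, (by omega : n + (m - n) = m)]
      exact hmn
    have heq := (Ffun_inj gs).iterate n this
    obtain ⟨k, hk⟩ : ∃ k, m - n = k + 1 := ⟨m - n - 1, by omega⟩
    rw [hk, Function.iterate_succ_apply'] at heq
    exact absurd ⟨(Ffun gs)^[k] b1, heq⟩ h2

theorem orbit_set_infinite (gs : ℕ → ℕ → ℕ)
    (hev : ∀ y : ℕ, ∃ s₀ : ℕ, ∀ t ≥ s₀, gs y t = gs y s₀) :
    {O : Set ℕ | ∃ n : ℕ, O = Orbit (Ffun gs) n}.Infinite := by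
  have hinf := heads_infinite gs hev
  have hinj : Set.InjOn (Orbit (Ffun gs)) {b : ℕ | b ∉ Set.range (Ffun gs)} := by
    intro b1 hb1 b2 hb2 heq
    apply head_eq_of_orbit hb1 hb2
    rw [heq]
    exact mem_orbit_self _ b2
  have himg := hinf.image hinj
  apply Set.Infinite.mono _ himg
  rintro O ⟨b, _, rfl⟩
  exact ⟨b, rfl⟩

theorem omega_chains (gs : ℕ → ℕ → ℕ) (n : ℕ) : IsOmegaChain (Ffun gs) n := by
  refine ⟨orbit_infinite gs n, ?_⟩
  obtain ⟨b, hb1, hb2⟩ := head_exists gs n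
  exact ⟨b, hb1, hb2⟩

end SHBS
namespace SHBS

section PrimrecProofs

open Primrec

theorem memB_primrec : Primrec₂ memB := by
  have : Primrec fun p : List ℕ × ℕ =>
      p.1.foldr (fun a s => (a == p.2) || s) false := by
    apply Primrec.list_foldr (h := fun (p : List ℕ × ℕ) (q : ℕ × Bool) =>
      (q.1 == p.2) || q.2) Primrec.fst (Primrec.const false)
    exact Primrec₂.mk <| Primrec.or.comp
      (Primrec.beq.comp (Primrec.fst.comp Primrec.snd) (Primrec.snd.comp Primrec.fst))
      (Primrec.snd.comp Primrec.snd)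
  exact this.to₂

variable {gs : ℕ → ℕ → ℕ}

theorem stabB_primrec (hgs : Primrec₂ gs) :
    Primrec fun p : ℕ × ℕ × ℕ => stabB gs p.1 p.2.1 p.2.2 := by
  apply Primrec.list_foldr
    (f := fun p : ℕ × ℕ × ℕ => List.range ((p.1+1)*(p.2.1+1)))
    (g := fun _ : ℕ × ℕ × ℕ => true)
    (h := fun (p : ℕ × ℕ × ℕ) (q : ℕ × Bool) =>
      q.2 && (!(decide (p.2.2 ≤ q.1 % (p.2.1+1))) ||
        (gs (q.1 / (p.2.1+1)) (q.1 % (p.2.1+1)) == gs (q.1 / (p.2.1+1)) p.2.2)))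
  · exact Primrec.list_range.comp (Primrec.nat_mul.comp
      (Primrec.succ.comp Primrec.fst)
      (Primrec.succ.comp (Primrec.fst.comp Primrec.snd)))
  · exact Primrec.const true
  · -- Primrec₂ of the body
    have hn1 : Primrec fun r : (ℕ × ℕ × ℕ) × ℕ × Bool => r.1.2.1 + 1 :=
      Primrec.succ.comp (Primrec.fst.comp (Primrec.snd.comp Primrec.fst))
    have hc : Primrec fun r : (ℕ × ℕ × ℕ) × ℕ × Bool => r.2.1 :=
      Primrec.fst.comp Primrec.snd
    have hs : Primrec fun r : (ℕ × ℕ × ℕ) × ℕ × Bool => r.1.2.2 :=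
      Primrec.snd.comp (Primrec.snd.comp Primrec.fst)
    have hmod : Primrec fun r : (ℕ × ℕ × ℕ) × ℕ × Bool => r.2.1 % (r.1.2.1+1) :=
      Primrec.nat_mod.comp hc hn1
    have hdiv : Primrec fun r : (ℕ × ℕ × ℕ) × ℕ × Bool => r.2.1 / (r.1.2.1+1) :=
      Primrec.nat_div.comp hc hn1
    have hle : Primrec fun r : (ℕ × ℕ × ℕ) × ℕ × Bool =>
        decide (r.1.2.2 ≤ r.2.1 % (r.1.2.1+1)) := (Primrec.nat_le.comp hs hmod).decide
    have hg1 : Primrec fun r : (ℕ × ℕ × ℕ) × ℕ × Bool =>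
        gs (r.2.1 / (r.1.2.1+1)) (r.2.1 % (r.1.2.1+1)) := hgs.comp hdiv hmod
    have hg2 : Primrec fun r : (ℕ × ℕ × ℕ) × ℕ × Bool =>
        gs (r.2.1 / (r.1.2.1+1)) r.1.2.2 := hgs.comp hdiv hs
    exact Primrec₂.mk <| Primrec.and.comp (Primrec.snd.comp Primrec.snd)
      (Primrec.or.comp (Primrec.not.comp hle) (Primrec.beq.comp hg1 hg2))

theorem Mfun_primrec (hgs : Primrec₂ gs) : Primrec₂ (Mfun gs) := by
  have : Primrec fun p : ℕ × ℕ =>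
      (List.range (p.2+1)).foldr (fun s acc => cond (stabB gs p.1 p.2 s) s acc) p.2 := by
    apply Primrec.list_foldr
      (f := fun p : ℕ × ℕ => List.range (p.2+1))
      (g := fun p : ℕ × ℕ => p.2)
      (h := fun (p : ℕ × ℕ) (q : ℕ × ℕ) => cond (stabB gs p.1 p.2 q.1) q.1 q.2)
    · exact Primrec.list_range.comp (Primrec.succ.comp Primrec.snd)
    · exact Primrec.snd
    · exact Primrec₂.mk <| Primrec.cond
        ((stabB_primrec hgs).comp <| Primrec.pair (Primrec.fst.comp Primrec.fst)
          (Primrec.pair (Primrec.snd.comp Primrec.fst) (Primrec.fst.comp Primrec.snd)))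
        (Primrec.fst.comp Primrec.snd) (Primrec.snd.comp Primrec.snd)
  exact this.to₂

theorem uncovCount_primrec : Primrec₂ uncovCount := by
  have : Primrec fun p : List ℕ × ℕ =>
      (List.range p.2).foldr (fun b acc => cond (memB p.1 b) acc (acc+1)) 0 := by
    apply Primrec.list_foldr
      (f := fun p : List ℕ × ℕ => List.range p.2)
      (g := fun _ : List ℕ × ℕ => 0)
      (h := fun (p : List ℕ × ℕ) (q : ℕ × ℕ) => cond (memB p.1 q.1) q.2 (q.2+1))
    · exact Primrec.list_range.comp Primrec.snd
    · exact Primrec.const 0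
    · exact Primrec₂.mk <| Primrec.cond
        (memB_primrec.comp (Primrec.fst.comp Primrec.fst) (Primrec.fst.comp Primrec.snd))
        (Primrec.snd.comp Primrec.snd)
        (Primrec.succ.comp (Primrec.snd.comp Primrec.snd))
  exact this.to₂

theorem violB_primrec (hgs : Primrec₂ gs) : Primrec₂ (violB gs) := by
  have : Primrec fun p : List ℕ × ℕ =>
      decide (p.2 + 1 < uncovCount p.1 (Mfun gs p.2 p.1.length)) := by
    refine (Primrec.nat_lt.comp (Primrec.succ.comp Primrec.snd) ?_).decide
    exact uncovCount_primrec.comp Primrec.fst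
      ((Mfun_primrec hgs).comp Primrec.snd (Primrec.list_length.comp Primrec.fst))
  exact this.to₂

theorem findViol_primrec (hgs : Primrec₂ gs) : Primrec (findViol gs) := by
  apply Primrec.list_foldr
    (f := fun L : List ℕ => List.range L.length)
    (g := fun _ : List ℕ => (none : Option ℕ))
    (h := fun (L : List ℕ) (q : ℕ × Option ℕ) => cond (violB gs L q.1) (some q.1) q.2)
  · exact Primrec.list_range.comp Primrec.list_length
  · exact Primrec.const none
  · exact Primrec₂.mk <| Primrec.cond
      ((violB_primrec hgs).comp Primrec.fst (Primrec.fst.comp Primrec.snd))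
      (Primrec.option_some.comp (Primrec.fst.comp Primrec.snd))
      (Primrec.snd.comp Primrec.snd)

theorem coverT_primrec (hgs : Primrec₂ gs) : Primrec₂ (coverT gs) := by
  have : Primrec fun p : List ℕ × ℕ =>
      (List.range (Mfun gs p.2 p.1.length)).foldl
        (fun acc b => cond (!memB p.1 b && (b != 0)) b acc) 0 := by
    apply Primrec.list_foldl
      (f := fun p : List ℕ × ℕ => List.range (Mfun gs p.2 p.1.length))
      (g := fun _ : List ℕ × ℕ => 0)
      (h := fun (p : List ℕ × ℕ) (q : ℕ × ℕ) =>
        cond (!memB p.1 q.2 && (q.2 != 0)) q.2 q.1)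
    · exact Primrec.list_range.comp ((Mfun_primrec hgs).comp Primrec.snd
        (Primrec.list_length.comp Primrec.fst))
    · exact Primrec.const 0
    · exact Primrec₂.mk <| Primrec.cond
        (Primrec.and.comp
          (Primrec.not.comp (memB_primrec.comp (Primrec.fst.comp Primrec.fst)
            (Primrec.snd.comp Primrec.snd)))
          (Primrec.not.comp (Primrec.beq.comp (Primrec.snd.comp Primrec.snd)
            (Primrec.const 0))))
        (Primrec.snd.comp Primrec.snd) (Primrec.fst.comp Primrec.snd)
  exact this.to₂

theorem maxU_primrec : Primrec maxU := by
  apply Primrec.list_foldr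
    (f := fun L : List ℕ => L)
    (g := fun L : List ℕ => L.length)
    (h := fun (_ : List ℕ) (q : ℕ × ℕ) => max q.1 q.2)
  · exact Primrec.id
  · exact Primrec.list_length
  · exact Primrec₂.mk <| Primrec.nat_max.comp (Primrec.fst.comp Primrec.snd)
      (Primrec.snd.comp Primrec.snd)

theorem chain0top_primrec : Primrec chain0top := by
  apply Primrec.list_foldr
    (f := fun L : List ℕ => List.range (L.length + 1))
    (g := fun _ : List ℕ => 0)
    (h := fun (L : List ℕ) (q : ℕ × ℕ) =>
      cond (decide (q.2 < L.length)) (L.getD q.2 0) q.2)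
  · exact Primrec.list_range.comp (Primrec.succ.comp Primrec.list_length)
  · exact Primrec.const 0
  · exact Primrec₂.mk <| Primrec.cond
      (Primrec.nat_lt.comp (Primrec.snd.comp Primrec.snd)
        (Primrec.list_length.comp Primrec.fst)).decide
      ((Primrec.list_getD 0).comp Primrec.fst (Primrec.snd.comp Primrec.snd))
      (Primrec.snd.comp Primrec.snd)

theorem step_primrec (hgs : Primrec₂ gs) : Primrec (step gs) := by
  have hfresh : Primrec fun L : List ℕ => maxU L + 2 :=
    Primrec.succ.comp (Primrec.succ.comp maxU_primrec)
  have hbranch : Primrec fun L : List ℕ =>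
      (match findViol gs L with
        | some x => coverT gs L x
        | none => maxU L + 2) := by
    have := Primrec.option_casesOn (findViol_primrec hgs) hfresh
      (Primrec₂.mk ((coverT_primrec hgs).comp Primrec.fst Primrec.snd))
    apply this.of_eq
    intro L
    cases findViol gs L <;> rfl
  have hcond : PrimrecPred fun L : List ℕ => chain0top L = L.length :=
    Primrec.eq.comp chain0top_primrec Primrec.list_length
  exact (Primrec.ite hcond hbranch hfresh).of_eq fun L => by
    unfold step
    by_cases h : chain0top L = L.length <;> simp [h]

theorem Ffun_primrec (hgs : Primrec₂ gs) : Primrec (Ffun gs) := by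
  have H : ∀ (_ : Unit) (n : ℕ),
      (fun (_ : Unit) (L : List ℕ) => some (step gs L)) ()
        ((List.range n).map (Ffun gs)) = some (Ffun gs n) := by
    intro _ n
    simp only [Option.some.injEq]
    rw [← hist_eq_map]
    rfl
  have := Primrec.nat_strong_rec (fun (_ : Unit) (n : ℕ) => Ffun gs n)
    (g := fun (_ : Unit) (L : List ℕ) => some (step gs L))
    (Primrec₂.mk (Primrec.option_some.comp ((step_primrec hgs).comp Primrec.snd))) H
  exact this.comp (Primrec.const ()) Primrec.id

end PrimrecProofs

end SHBS

theorem sparse_heads_below_stabilization (gs : ℕ → ℕ → ℕ) (hgs : Primrec₂ gs)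
    (hev : ∀ y : ℕ, ∃ s₀ : ℕ, ∀ t ≥ s₀, gs y t = gs y s₀) :
    ∃ f : ℕ → ℕ, Primrec f ∧ Function.Injective f ∧
      (∀ n : ℕ, IsOmegaChain f n) ∧
      {O : Set ℕ | ∃ n : ℕ, O = Orbit f n}.Infinite ∧
      (∀ x sx : ℕ,
        IsLeast {s : ℕ | ∀ y ≤ x, ∀ t ≥ s, gs y t = gs y s} sx →
        {b : ℕ | b ∉ Set.range f ∧ b < sx}.ncard ≤ x + 1) := by
  refine ⟨SHBS.Ffun gs, ?_, SHBS.Ffun_inj gs, SHBS.omega_chains gs,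
    SHBS.orbit_set_infinite gs hev, ?_⟩
  · exact SHBS.Ffun_primrec hgs
  · intro x sx hsx
    exact SHBS.count_le gs hev hsx
end

section
/- Let R : ℕ → ℕ → Bool be primitive recursive (Primrec₂ R). Then there exist injective primitive recursive functions f : ℕ → ℕ and d : ℕ → ℕ, with d injective, such that: every orbit of f is infinite; the orbits O_f(d s) for s : ℕ are pairwise distinct and every n : ℕ belongs to O_f(d s) for some s; and for every s : ℕ, if the set {n : ℕ | R s n = true} is infinite then O_f(d s) is a ζ-chain, while if {n : ℕ | R s n = true} is finite then O_f(d s) is an ω-chain. (Uniform punctual coding of a Π⁰₂ condition into the ζ-chain versus ω-chain type of the orbits.) -/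
/-- The orbit of `a` under `f` is a ζ-chain. -/
def IsZetaChain (f : ℕ → ℕ) (a : ℕ) : Prop :=
  (Orbit f a).Infinite ∧ ∀ b ∈ Orbit f a, b ∈ Set.range f

namespace PunctualCoding

variable (R : ℕ → ℕ → Bool)

def cnt (s : ℕ) : ℕ → ℕ
  | 0 => 0
  | i + 1 => cnt s i + (bif R s i then 1 else 0)

def lastT (s : ℕ) : ℕ → ℕ
  | 0 => 0
  | i + 1 => bif R s i then i else lastT s i

def g (s k : ℕ) : ℕ :=
  if k % 2 = 0 then (bif R s (k / 2) then k + 2 else k + 1)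
  else if R s (k / 2) = true then
    (if cnt R s (k / 2) = 0 then 0 else 2 * lastT R s (k / 2) + 1)
  else k + 1

def pos (s k : ℕ) : ℤ :=
  if k % 2 = 1 ∧ R s (k / 2) = true then -((cnt R s (k / 2) : ℤ) + 1)
  else (k : ℤ) - cnt R s (k / 2)

variable {R}

theorem cnt_succ (s i : ℕ) : cnt R s (i + 1) = cnt R s i + (bif R s i then 1 else 0) := rfl

theorem cnt_succ_true {s i : ℕ} (h : R s i = true) : cnt R s (i + 1) = cnt R s i + 1 := by
  rw [cnt_succ, h]; rfl

theorem cnt_succ_false {s i : ℕ} (h : R s i = false) : cnt R s (i + 1) = cnt R s i := by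
  rw [cnt_succ, h]; rfl

theorem cnt_mono {s : ℕ} : Monotone (cnt R s) := by
  apply monotone_nat_of_le_succ
  intro i
  rw [cnt_succ]; omega

theorem cnt_le (s i : ℕ) : cnt R s i ≤ i := by
  induction i with
  | zero => simp [cnt]
  | succ i ih => rw [cnt_succ]; cases R s i <;> simp <;> omega

theorem lastT_spec {s i : ℕ} (h : 1 ≤ cnt R s i) :
    R s (lastT R s i) = true ∧ lastT R s i < i ∧ cnt R s (lastT R s i) + 1 = cnt R s i := by
  induction i with
  | zero => simp [cnt] at h
  | succ i ih =>
    cases hr : R s i with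
    | false =>
      rw [cnt_succ_false hr] at h ⊢
      have := ih h
      simp only [lastT, hr, cond_false]
      exact ⟨this.1, Nat.lt_succ_of_lt this.2.1, this.2.2⟩
    | true =>
      have hl : lastT R s (i + 1) = i := by simp [lastT, hr]
      rw [hl]
      exact ⟨hr, Nat.lt_succ_self i, (cnt_succ_true hr).symm⟩


/-- "Right" elements: those on the non-negative side of the chain. -/
def Rt (R : ℕ → ℕ → Bool) (s k : ℕ) : Prop := k % 2 = 0 ∨ R s (k / 2) = false

theorem pos_of_rt {s k : ℕ} (h : Rt R s k) : pos R s k = (k : ℤ) - cnt R s (k / 2) := by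
  unfold pos
  rw [if_neg]
  rintro ⟨h1, h2⟩
  rcases h with h | h
  · omega
  · rw [h2] at h; exact Bool.noConfusion h

theorem pos_of_left {s k : ℕ} (h : ¬ Rt R s k) :
    pos R s k = -((cnt R s (k / 2) : ℤ) + 1) := by
  unfold Rt at h
  push_neg at h
  unfold pos
  rw [if_pos]
  constructor
  · omega
  · cases hr : R s (k / 2)
    · exact absurd hr h.2
    · rfl

theorem left_odd {s k : ℕ} (h : ¬ Rt R s k) : k % 2 = 1 ∧ R s (k / 2) = true := by
  unfold Rt at h
  push_neg at h
  refine ⟨by omega, ?_⟩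
  cases hr : R s (k / 2)
  · exact absurd hr h.2
  · rfl

theorem pos_nonneg_of_rt {s k : ℕ} (h : Rt R s k) : 0 ≤ pos R s k := by
  rw [pos_of_rt h]
  have h1 := cnt_le (R := R) s (k / 2)
  have h2 : k / 2 ≤ k := Nat.div_le_self k 2
  omega

theorem pos_zero (s : ℕ) : pos R s 0 = 0 := by
  have : Rt R s 0 := Or.inl rfl
  rw [pos_of_rt this]
  simp [cnt]

theorem Q_mono {s : ℕ} : Monotone (fun k : ℕ => (k : ℤ) - cnt R s (k / 2)) := by
  apply monotone_nat_of_le_succ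
  intro k
  show (k : ℤ) - cnt R s (k / 2) ≤ ((k + 1 : ℕ) : ℤ) - cnt R s ((k + 1) / 2)
  have h1 : (k + 1) / 2 ≤ k / 2 + 1 := by omega
  have h2 : cnt R s ((k + 1) / 2) ≤ cnt R s (k / 2 + 1) := cnt_mono h1
  have h3 : cnt R s (k / 2 + 1) ≤ cnt R s (k / 2) + 1 := by
    rw [cnt_succ]; cases R s (k / 2) <;> simp
  push_cast
  omega

theorem Q_succ_of_rt {s k : ℕ} (h : Rt R s k) :
    ((k : ℤ) + 1) - cnt R s ((k + 1) / 2) = ((k : ℤ) - cnt R s (k / 2)) + 1 := by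
  rcases h with h | h
  · have : (k + 1) / 2 = k / 2 := by omega
    rw [this]; ring
  · have hk2 : (k + 1) / 2 = k / 2 + 1 ∨ (k + 1) / 2 = k / 2 := by omega
    rcases hk2 with h2 | h2
    · rw [h2, cnt_succ_false h]; ring
    · rw [h2]; ring

theorem rt_strict {s a b : ℕ} (ha : Rt R s a) (hab : a < b) :
    (a : ℤ) - cnt R s (a / 2) < (b : ℤ) - cnt R s (b / 2) := by
  have h1 : ((a + 1 : ℕ) : ℤ) - cnt R s ((a + 1) / 2) ≤ (b : ℤ) - cnt R s (b / 2) :=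
    Q_mono (by omega)
  have h2 := Q_succ_of_rt ha
  push_cast at h1 ⊢
  omega

theorem left_inj {s i i' : ℕ} (hi : R s i = true) (hi' : R s i' = true)
    (h : cnt R s i = cnt R s i') : i = i' := by
  rcases lt_trichotomy i i' with hlt | he | hlt
  · have h1 := cnt_succ_true hi
    have h2 : cnt R s (i + 1) ≤ cnt R s i' := cnt_mono hlt
    omega
  · exact he
  · have h1 := cnt_succ_true hi'
    have h2 : cnt R s (i' + 1) ≤ cnt R s i := cnt_mono hlt
    omega

theorem pos_inj {s : ℕ} : Function.Injective (pos R s) := by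
  intro a b h
  by_cases ha : Rt R s a <;> by_cases hb : Rt R s b
  · rw [pos_of_rt ha, pos_of_rt hb] at h
    rcases lt_trichotomy a b with hlt | he | hlt
    · exact absurd h (ne_of_lt (rt_strict ha hlt))
    · exact he
    · exact absurd h.symm (ne_of_lt (rt_strict hb hlt))
  · have := pos_nonneg_of_rt ha
    rw [h, pos_of_left hb] at this
    omega
  · have := pos_nonneg_of_rt hb
    rw [← h, pos_of_left ha] at this
    omega
  · obtain ⟨ha1, ha2⟩ := left_odd ha
    obtain ⟨hb1, hb2⟩ := left_odd hb
    rw [pos_of_left ha, pos_of_left hb] at h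
    have hc : cnt R s (a / 2) = cnt R s (b / 2) := by omega
    have := left_inj ha2 hb2 hc
    omega


theorem g_even (s i : ℕ) : g R s (2 * i) = (bif R s i then 2 * i + 2 else 2 * i + 1) := by
  unfold g
  have h2 : 2 * i % 2 = 0 := by omega
  have h3 : 2 * i / 2 = i := by omega
  rw [if_pos h2, h3]

theorem odd_div (i : ℕ) : (2 * i + 1) / 2 = i := by omega
theorem odd_mod (i : ℕ) : (2 * i + 1) % 2 = 1 := by omega

theorem g_odd_false {s i : ℕ} (hi : R s i = false) : g R s (2 * i + 1) = 2 * i + 2 := by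
  unfold g
  rw [if_neg (by rw [odd_mod]; omega), odd_div, hi]
  simp

theorem g_odd_true_zero {s i : ℕ} (hi : R s i = true) (hc : cnt R s i = 0) :
    g R s (2 * i + 1) = 0 := by
  unfold g
  rw [if_neg (by rw [odd_mod]; omega), odd_div, if_pos hi, if_pos hc]

theorem g_odd_true_pos {s i : ℕ} (hi : R s i = true) (hc : cnt R s i ≠ 0) :
    g R s (2 * i + 1) = 2 * lastT R s i + 1 := by
  unfold g
  rw [if_neg (by rw [odd_mod]; omega), odd_div, if_pos hi, if_neg hc]

theorem rt_even (s i : ℕ) : Rt R s (2 * i) := Or.inl (by omega)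

theorem rt_odd_false {s i : ℕ} (hi : R s i = false) : Rt R s (2 * i + 1) :=
  Or.inr (by rw [odd_div]; exact hi)

theorem not_rt_odd_true {s i : ℕ} (hi : R s i = true) : ¬ Rt R s (2 * i + 1) := by
  rintro (h | h)
  · rw [odd_mod] at h; omega
  · rw [odd_div, hi] at h; exact Bool.noConfusion h

theorem pos_g (s k : ℕ) : pos R s (g R s k) = pos R s k + 1 := by
  obtain ⟨i, rfl | rfl⟩ := Nat.even_or_odd' k
  · -- k = 2 * i
    rw [pos_of_rt (rt_even s i)]
    have hdiv : 2 * i / 2 = i := by omega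
    rw [hdiv, g_even]
    cases hr : R s i
    · simp only [cond_false]
      rw [pos_of_rt (rt_odd_false hr), odd_div]
      push_cast; ring
    · simp only [cond_true]
      have : 2 * i + 2 = 2 * (i + 1) := by ring
      rw [this, pos_of_rt (rt_even s (i + 1))]
      have hdiv2 : 2 * (i + 1) / 2 = i + 1 := by omega
      rw [hdiv2, cnt_succ_true hr]
      push_cast; ring
  · -- k = 2 * i + 1
    cases hr : R s i
    · rw [pos_of_rt (rt_odd_false hr), odd_div, g_odd_false hr]
      have : 2 * i + 2 = 2 * (i + 1) := by ring
      rw [this, pos_of_rt (rt_even s (i + 1))]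
      have hdiv2 : 2 * (i + 1) / 2 = i + 1 := by omega
      rw [hdiv2, cnt_succ_false hr]
      push_cast; ring
    · rw [pos_of_left (not_rt_odd_true hr), odd_div]
      by_cases hc : cnt R s i = 0
      · rw [g_odd_true_zero hr hc, pos_zero, hc]
        norm_num
      · rw [g_odd_true_pos hr hc]
        obtain ⟨h1, _, h3⟩ := lastT_spec (R := R) (s := s) (i := i) (by omega)
        rw [pos_of_left (not_rt_odd_true h1), odd_div]
        have : (cnt R s (lastT R s i) : ℤ) + 1 = cnt R s i := by exact_mod_cast h3
        push_cast
        omega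

theorem g_inj {s : ℕ} : Function.Injective (g R s) := by
  intro a b h
  apply pos_inj (R := R) (s := s)
  have ha := pos_g (R := R) s a
  have hb := pos_g (R := R) s b
  rw [h] at ha
  omega

theorem rt_g {s k : ℕ} (h : Rt R s k) : Rt R s (g R s k) := by
  obtain ⟨i, rfl | rfl⟩ := Nat.even_or_odd' k
  · rw [g_even]
    cases hr : R s i
    · simp only [cond_false]; exact rt_odd_false hr
    · simp only [cond_true]
      have : 2 * i + 2 = 2 * (i + 1) := by ring
      rw [this]; exact rt_even s (i + 1)
  · rcases h with h | h
    · rw [odd_mod] at h; omega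
    · rw [odd_div] at h
      rw [g_odd_false h]
      have : 2 * i + 2 = 2 * (i + 1) := by ring
      rw [this]; exact rt_even s (i + 1)

theorem pos_iter (s : ℕ) (n k : ℕ) :
    pos R s ((g R s)^[n] k) = pos R s k + n := by
  induction n with
  | zero => simp
  | succ n ih =>
    rw [Function.iterate_succ_apply', pos_g, ih]
    push_cast; ring

theorem exists_rt_pos (s : ℕ) (p : ℕ) : ∃ k, Rt R s k ∧ pos R s k = p := by
  induction p with
  | zero => exact ⟨0, Or.inl rfl, pos_zero s⟩
  | succ p ih =>
    obtain ⟨k, hk, hp⟩ := ih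
    exact ⟨g R s k, rt_g hk, by rw [pos_g, hp]; push_cast; ring⟩

theorem exists_left_cnt {s c : ℕ} (hex : ∃ i, c < cnt R s i) :
    ∃ i, R s i = true ∧ cnt R s i = c := by
  classical
  obtain ⟨j, hj1, hj2⟩ : ∃ j, ¬ (c < cnt R s j) ∧ c < cnt R s (j + 1) := by
    have h0 : ¬ (c < cnt R s 0) := by simp [cnt]
    have hfind := Nat.find_spec hex
    rcases hn : Nat.find hex with _ | j
    · rw [hn] at hfind; exact absurd hfind h0
    · rw [hn] at hfind
      exact ⟨j, Nat.find_min hex (by omega), hfind⟩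
  have hle : cnt R s (j + 1) ≤ cnt R s j + 1 := by
    rw [cnt_succ]; cases R s j <;> simp
  refine ⟨j, ?_, by omega⟩
  cases hr : R s j
  · rw [cnt_succ_false hr] at hj2; omega
  · rfl

theorem cnt_unbounded {s : ℕ} (h : {n : ℕ | R s n = true}.Infinite) (c : ℕ) :
    ∃ i, c ≤ cnt R s i := by
  induction c with
  | zero => exact ⟨0, Nat.zero_le _⟩
  | succ c ih =>
    obtain ⟨i, hi⟩ := ih
    obtain ⟨t, ht, hit⟩ : ∃ t, R s t = true ∧ i < t := by
      by_contra hc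
      push_neg at hc
      exact h (Set.Finite.subset (Set.finite_Iic i) fun x hx => hc x hx)
    have h1 : cnt R s i ≤ cnt R s t := cnt_mono (le_of_lt hit)
    have h2 : cnt R s (t + 1) = cnt R s t + 1 := cnt_succ_true ht
    exact ⟨t + 1, by omega⟩

theorem cnt_bounded {s : ℕ} (h : {n : ℕ | R s n = true}.Finite) :
    ∃ M : ℕ, (∀ i, cnt R s i ≤ M) ∧ ∃ w, pos R s w = -(M : ℤ) := by
  obtain ⟨B, hB⟩ := h.bddAbove
  have hfalse : ∀ i, B + 1 ≤ i → R s i = false := by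
    intro i hi
    cases hr : R s i
    · rfl
    · exact absurd (hB hr) (by omega)
  set M := cnt R s (B + 1) with hM
  have hstab : ∀ d, cnt R s (B + 1 + d) = M := by
    intro d
    induction d with
    | zero => rfl
    | succ d ih =>
      have : B + 1 + (d + 1) = (B + 1 + d) + 1 := by ring
      rw [this, cnt_succ_false (hfalse _ (by omega)), ih]
  have hbound : ∀ i, cnt R s i ≤ M := by
    intro i
    rcases le_or_gt i (B + 1) with hi | hi
    · exact cnt_mono hi
    · have : i = B + 1 + (i - (B + 1)) := by omega
      rw [this, hstab]
  refine ⟨M, hbound, ?_⟩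
  rcases Nat.eq_zero_or_pos M with h0 | hpos
  · exact ⟨0, by rw [pos_zero, h0]; norm_num⟩
  · obtain ⟨j, hj1, hj2⟩ := exists_left_cnt (R := R) (s := s) (c := M - 1) ⟨B + 1, by rw [← hM]; omega⟩
    refine ⟨2 * j + 1, ?_⟩
    rw [pos_of_left (not_rt_odd_true hj1), odd_div, hj2]
    push_cast
    omega

theorem pos_ge_neg_M {s M : ℕ} (hM : ∀ i, cnt R s i ≤ M) (k : ℕ) :
    -(M : ℤ) ≤ pos R s k := by
  by_cases hk : Rt R s k
  · have := pos_nonneg_of_rt hk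
    omega
  · rw [pos_of_left hk]
    obtain ⟨_, h2⟩ := left_odd hk
    have := cnt_succ_true h2
    have := hM (k / 2 + 1)
    omega


/-! ### The global function -/

def F (R : ℕ → ℕ → Bool) (n : ℕ) : ℕ :=
  Nat.pair n.unpair.1 (g R n.unpair.1 n.unpair.2)

def D (s : ℕ) : ℕ := Nat.pair s 0

theorem F_pair (s k : ℕ) : F R (Nat.pair s k) = Nat.pair s (g R s k) := by
  simp [F]

theorem F_iter (m s k : ℕ) : (F R)^[m] (Nat.pair s k) = Nat.pair s ((g R s)^[m] k) := by
  induction m with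
  | zero => rfl
  | succ m ih => rw [Function.iterate_succ_apply', ih, F_pair, Function.iterate_succ_apply']

theorem F_inj : Function.Injective (F R) := by
  intro a b h
  unfold F at h
  rw [Nat.pair_eq_pair] at h
  have h2 : a.unpair.2 = b.unpair.2 := g_inj (h.1 ▸ h.2)
  have := congrArg (fun p : ℕ × ℕ => Nat.pair p.1 p.2) (Prod.ext h.1 h2 : a.unpair = b.unpair)
  simpa [Nat.pair_unpair] using this

theorem orbit_eq_row (s : ℕ) : Orbit (F R) (D s) = Set.range (Nat.pair s) := by
  ext b
  constructor
  · rintro ⟨m, n, h⟩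
    rw [show D s = Nat.pair s 0 from rfl, F_iter] at h
    have hb : b = Nat.pair b.unpair.1 b.unpair.2 := (Nat.pair_unpair b).symm
    rw [hb, F_iter, Nat.pair_eq_pair] at h
    exact ⟨b.unpair.2, by rw [h.1, Nat.pair_unpair]⟩
  · rintro ⟨k, rfl⟩
    rcases le_or_gt 0 (pos R s k) with hp | hp
    · refine ⟨(pos R s k).toNat, 0, ?_⟩
      simp only [show D s = Nat.pair s 0 from rfl, F_iter, Function.iterate_zero_apply,
        Nat.pair_eq_pair]
      refine ⟨trivial, pos_inj (R := R) (s := s) ?_⟩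
      rw [pos_iter, pos_zero]
      omega
    · refine ⟨0, (-(pos R s k)).toNat, ?_⟩
      simp only [show D s = Nat.pair s 0 from rfl, F_iter, Function.iterate_zero_apply,
        Nat.pair_eq_pair]
      refine ⟨trivial, (pos_inj (R := R) (s := s) ?_).symm⟩
      rw [pos_iter, pos_zero]
      omega

theorem orbit_infinite (n : ℕ) : (Orbit (F R) n).Infinite := by
  refine Set.infinite_of_injective_forall_mem (f := fun m : ℕ => (F R)^[m] n) ?_ ?_
  · intro a b h
    obtain ⟨s0, k0, rfl⟩ : ∃ s0 k0, n = Nat.pair s0 k0 := ⟨_, _, (Nat.pair_unpair n).symm⟩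
    simp only [F_iter, Nat.pair_eq_pair, true_and] at h
    have := congrArg (pos R s0) h
    rw [pos_iter, pos_iter] at this
    omega
  · intro m
    exact ⟨m, 0, rfl⟩


/-! ### Primitive recursiveness -/

theorem primrec_cnt (hR : Primrec₂ R) : Primrec₂ (cnt R) := by
  have hg : Primrec₂ fun (s : ℕ) (p : ℕ × ℕ) => p.2 + (bif R s p.1 then 1 else 0) := by
    exact Primrec.to₂
      (f := fun q : ℕ × (ℕ × ℕ) => q.2.2 + (bif R q.1 q.2.1 then 1 else 0))
      (Primrec.nat_add.comp (Primrec.snd.comp Primrec.snd)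
        (Primrec.cond (hR.comp Primrec.fst (Primrec.fst.comp Primrec.snd))
          (Primrec.const 1) (Primrec.const 0)))
  have h := Primrec.nat_rec (f := fun _ : ℕ => (0 : ℕ)) (Primrec.const 0) hg
  apply h.of_eq
  intro s n
  induction n with
  | zero => rfl
  | succ n ih => rw [cnt_succ, ← ih]

theorem primrec_lastT (hR : Primrec₂ R) : Primrec₂ (lastT R) := by
  have hg : Primrec₂ fun (s : ℕ) (p : ℕ × ℕ) => (bif R s p.1 then p.1 else p.2) := by
    exact Primrec.to₂
      (f := fun q : ℕ × (ℕ × ℕ) => bif R q.1 q.2.1 then q.2.1 else q.2.2)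
      (Primrec.cond (hR.comp Primrec.fst (Primrec.fst.comp Primrec.snd))
        (Primrec.fst.comp Primrec.snd) (Primrec.snd.comp Primrec.snd))
  have h := Primrec.nat_rec (f := fun _ : ℕ => (0 : ℕ)) (Primrec.const 0) hg
  apply h.of_eq
  intro s n
  induction n with
  | zero => rfl
  | succ n ih => simp only [lastT, ← ih]

theorem primrec_g (hR : Primrec₂ R) : Primrec₂ (g R) := by
  apply Primrec.to₂ (f := fun p : ℕ × ℕ => g R p.1 p.2)
  have hhalf : Primrec fun p : ℕ × ℕ => p.2 / 2 :=
    Primrec.nat_div.comp Primrec.snd (Primrec.const 2)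
  have hRhalf : Primrec fun p : ℕ × ℕ => R p.1 (p.2 / 2) := hR.comp Primrec.fst hhalf
  have hcnthalf : Primrec fun p : ℕ × ℕ => cnt R p.1 (p.2 / 2) :=
    (primrec_cnt hR).comp Primrec.fst hhalf
  have hlthalf : Primrec fun p : ℕ × ℕ => lastT R p.1 (p.2 / 2) :=
    (primrec_lastT hR).comp Primrec.fst hhalf
  unfold g
  apply Primrec.ite
  · exact PrimrecRel.comp Primrec.eq
      (Primrec.nat_mod.comp Primrec.snd (Primrec.const 2)) (Primrec.const 0)
  · exact Primrec.cond hRhalf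
      (Primrec.nat_add.comp Primrec.snd (Primrec.const 2))
      (Primrec.nat_add.comp Primrec.snd (Primrec.const 1))
  · apply Primrec.ite
    · exact PrimrecRel.comp Primrec.eq hRhalf (Primrec.const true)
    · apply Primrec.ite
      · exact PrimrecRel.comp Primrec.eq hcnthalf (Primrec.const 0)
      · exact Primrec.const 0
      · exact Primrec.nat_add.comp
          (Primrec.nat_mul.comp (Primrec.const 2) hlthalf) (Primrec.const 1)
    · exact Primrec.nat_add.comp Primrec.snd (Primrec.const 1)

theorem primrec_F (hR : Primrec₂ R) : Primrec (F R) := by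
  have h1 : Primrec fun n : ℕ => n.unpair.1 := Primrec.fst.comp Primrec.unpair
  have h2 : Primrec fun n : ℕ => n.unpair.2 := Primrec.snd.comp Primrec.unpair
  exact Primrec₂.natPair.comp h1 ((primrec_g hR).comp h1 h2)

theorem primrec_D : Primrec D :=
  Primrec₂.natPair.comp Primrec.id (Primrec.const 0)


/-! ### Chain type -/

theorem zeta_case {s : ℕ} (h : {n : ℕ | R s n = true}.Infinite) :
    ∀ b ∈ Orbit (F R) (D s), b ∈ Set.range (F R) := by
  intro b hb
  rw [orbit_eq_row] at hb
  obtain ⟨k, rfl⟩ := hb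
  obtain ⟨k', hk'⟩ : ∃ k', pos R s k' = pos R s k - 1 := by
    rcases le_or_gt 1 (pos R s k) with hp | hp
    · obtain ⟨k', _, hk'⟩ := exists_rt_pos (R := R) s (pos R s k - 1).toNat
      exact ⟨k', by rw [hk']; omega⟩
    · obtain ⟨i, hi1, hi2⟩ := exists_left_cnt (R := R) (s := s) (c := (-(pos R s k)).toNat)
        (cnt_unbounded h ((-(pos R s k)).toNat + 1))
      refine ⟨2 * i + 1, ?_⟩
      rw [pos_of_left (not_rt_odd_true hi1), odd_div, hi2]
      have h0 : 0 ≤ pos R s k ∨ pos R s k < 0 := le_or_gt 0 _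
      rcases h0 with h0 | h0
      · have : pos R s k = 0 := by omega
        rw [this]; simp
      · omega
  have hg : g R s k' = k := by
    apply pos_inj (R := R) (s := s)
    rw [pos_g, hk']
    ring
  exact ⟨Nat.pair s k', by rw [F_pair, hg]⟩

theorem omega_case {s : ℕ} (h : {n : ℕ | R s n = true}.Finite) :
    ∃ b ∈ Orbit (F R) (D s), b ∉ Set.range (F R) := by
  obtain ⟨M, hM, w, hw⟩ := cnt_bounded h
  refine ⟨Nat.pair s w, ?_, ?_⟩
  · rw [orbit_eq_row]; exact ⟨w, rfl⟩
  · rintro ⟨x, hx⟩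
    obtain ⟨x1, x2, rfl⟩ : ∃ a b, x = Nat.pair a b := ⟨_, _, (Nat.pair_unpair x).symm⟩
    rw [F_pair, Nat.pair_eq_pair] at hx
    obtain ⟨rfl, hx2⟩ := hx
    have h1 := pos_g (R := R) x1 x2
    rw [hx2, hw] at h1
    have h2 := pos_ge_neg_M hM x2
    omega

end PunctualCoding

theorem punctual_pi2_coding (R : ℕ → ℕ → Bool) (hR : Primrec₂ R) :
    ∃ f d : ℕ → ℕ,
      Primrec f ∧ Primrec d ∧ Function.Injective f ∧ Function.Injective d ∧
      (∀ n : ℕ, (Orbit f n).Infinite) ∧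
      (∀ s t : ℕ, s ≠ t → Orbit f (d s) ≠ Orbit f (d t)) ∧
      (∀ n : ℕ, ∃ s : ℕ, n ∈ Orbit f (d s)) ∧
      (∀ s : ℕ,
        ({n : ℕ | R s n = true}.Infinite → IsZetaChain f (d s)) ∧
        ({n : ℕ | R s n = true}.Finite → IsOmegaChain f (d s))) := by
  classical
  refine ⟨PunctualCoding.F R, PunctualCoding.D, PunctualCoding.primrec_F hR,
    PunctualCoding.primrec_D, PunctualCoding.F_inj, ?_, PunctualCoding.orbit_infinite, ?_, ?_, ?_⟩
  · intro a b h
    have := Nat.pair_eq_pair.mp h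
    exact this.1
  · intro s t hst heq
    have h1 : PunctualCoding.D s ∈ Orbit (PunctualCoding.F R) (PunctualCoding.D s) :=
      ⟨0, 0, rfl⟩
    rw [heq, PunctualCoding.orbit_eq_row] at h1
    obtain ⟨k, hk⟩ := h1
    exact hst (Nat.pair_eq_pair.mp hk).1.symm
  · intro n
    refine ⟨n.unpair.1, ?_⟩
    rw [PunctualCoding.orbit_eq_row]
    exact ⟨n.unpair.2, Nat.pair_unpair n⟩
  · intro s
    constructor
    · intro h
      exact ⟨PunctualCoding.orbit_infinite _, PunctualCoding.zeta_case h⟩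
    · intro h
      exact ⟨PunctualCoding.orbit_infinite _, PunctualCoding.omega_case h⟩
end

section
/- Let g : ℕ → ℕ and let g* : ℕ → ℕ → ℕ → ℕ be primitive recursive such that for all x and s the limit L(x, s) := lim_t g* x s t exists (the sequence t ↦ g* x s t is eventually constant), and for every x the sequence s ↦ L(x, s) is eventually constant with limit g x (so g is Δ⁰₃ via the primitive recursive approximation g*). Then there exist injective primitive recursive functions f_A, f_B : ℕ → ℕ such that: every orbit of f_A is infinite; f_A has infinitely many ω-chain orbits and infinitely many ζ-chain orbits; (ℕ, f_A) and (ℕ, f_B) are isomorphic; and for every isomorphism h from (ℕ, f_A) to (ℕ, f_B), the function g is Turing reducible to the join h ⊕ h⁻¹, the function sending 2n to h n and 2n + 1 to h⁻¹ n. (Hard direction of PRCat(A) = Cone(Δ⁰₃) for injection structures with infinitely many ω-chains and infinitely many ζ-chains, weakened from primitive recursive to Turing reducibility.) -/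
/-- The join of two total functions: `2n ↦ h n`, `2n + 1 ↦ h' n`. -/
def join (h h' : ℕ → ℕ) : ℕ → ℕ := fun n => if n % 2 = 0 then h (n / 2) else h' (n / 2)

namespace PRC3

open Function

lemma mem_orbit_def {f : ℕ → ℕ} {a b : ℕ} : b ∈ Orbit f a ↔ ∃ m n : ℕ, f^[m] a = f^[n] b :=
  Iff.rfl

lemma orbit_self (f : ℕ → ℕ) (a : ℕ) : a ∈ Orbit f a := ⟨0, 0, rfl⟩

lemma orbit_symm {f : ℕ → ℕ} {a b : ℕ} (h : b ∈ Orbit f a) : a ∈ Orbit f b := by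
  obtain ⟨m, n, hmn⟩ := h; exact ⟨n, m, hmn.symm⟩

lemma orbit_trans {f : ℕ → ℕ} {a b c : ℕ} (h1 : b ∈ Orbit f a) (h2 : c ∈ Orbit f b) :
    c ∈ Orbit f a := by
  obtain ⟨m, n, h1⟩ := h1
  obtain ⟨m', n', h2⟩ := h2
  refine ⟨m' + m, n + n', ?_⟩
  calc f^[m' + m] a = f^[m'] (f^[m] a) := iterate_add_apply f m' m a
    _ = f^[m'] (f^[n] b) := by rw [h1]
    _ = f^[m' + n] b := (iterate_add_apply f m' n b).symm
    _ = f^[n + m'] b := by rw [Nat.add_comm]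
    _ = f^[n] (f^[m'] b) := iterate_add_apply f n m' b
    _ = f^[n] (f^[n'] c) := by rw [h2]
    _ = f^[n + n'] c := (iterate_add_apply f n n' c).symm

lemma iterate_mem_orbit (f : ℕ → ℕ) (a : ℕ) (n : ℕ) : f^[n] a ∈ Orbit f a :=
  ⟨n, 0, rfl⟩

lemma mem_orbit_of_iterate {f : ℕ → ℕ} {a b : ℕ} (n : ℕ) (h : f^[n] b = a) : b ∈ Orbit f a :=
  ⟨0, n, h.symm⟩

lemma orbit_eq_of_mem {f : ℕ → ℕ} {a b : ℕ} (h : b ∈ Orbit f a) : Orbit f b = Orbit f a := by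
  ext c; exact ⟨fun hc => orbit_trans h hc, fun hc => orbit_trans (orbit_symm h) hc⟩

/-- a periodic point of an injective function has finite orbit -/
lemma orbit_finite_of_periodic {f : ℕ → ℕ} (hf : Injective f) {a p : ℕ} (hp : 0 < p)
    (hper : f^[p] a = a) : (Orbit f a).Finite := by
  have hC : ∀ x, ∀ n : ℕ, f^[n] x ∈ Set.range (fun i : Fin p => f^[(i : ℕ)] a) →
      x ∈ Set.range (fun i : Fin p => f^[(i : ℕ)] a) := by
    intro x n
    induction n generalizing x with
    | zero => intro h; exact h
    | succ n ih =>
      intro h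
      rw [iterate_succ_apply] at h
      obtain ⟨i, hi⟩ := ih (f x) h
      simp only at hi
      rcases Nat.eq_zero_or_pos (i : ℕ) with h0 | hpos
      · have ha : f x = a := by rw [← hi, h0, iterate_zero, id_eq]
        have key : f (f^[p-1] a) = f x := by
          calc f (f^[p-1] a) = f^[(p-1) + 1] a := (iterate_succ_apply' f (p-1) a).symm
            _ = f^[p] a := by rw [show p - 1 + 1 = p by omega]
            _ = a := hper
            _ = f x := ha.symm
        exact ⟨⟨p - 1, Nat.pred_lt hp.ne'⟩, hf key⟩
      · have key : f (f^[(i:ℕ)-1] a) = f x := by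
          calc f (f^[(i:ℕ)-1] a) = f^[((i:ℕ)-1) + 1] a := (iterate_succ_apply' f _ a).symm
            _ = f^[(i:ℕ)] a := by rw [show (i:ℕ) - 1 + 1 = (i:ℕ) by omega]
            _ = f x := hi
        exact ⟨⟨(i:ℕ) - 1, lt_trans (Nat.pred_lt hpos.ne') i.2⟩, hf key⟩
  have hiter : ∀ m : ℕ, f^[m] a ∈ Set.range (fun i : Fin p => f^[(i : ℕ)] a) := by
    intro m
    induction m using Nat.strong_induction_on with
    | _ m ih =>
      rcases lt_or_ge m p with h | h
      · exact ⟨⟨m, h⟩, rfl⟩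
      · have : f^[m] a = f^[m - p] a := by
          conv_lhs => rw [show m = (m - p) + p by omega, iterate_add_apply, hper]
        rw [this]
        exact ih (m - p) (by omega)
  have hsub : Orbit f a ⊆ Set.range (fun i : Fin p => f^[(i : ℕ)] a) := by
    rintro b ⟨m, n, hmn⟩
    apply hC b n
    rw [← hmn]
    exact hiter m
  exact Set.Finite.subset (Set.finite_range _) hsub

lemma iterate_inj_of_orbit_infinite {f : ℕ → ℕ} (hf : Injective f) {a : ℕ}
    (hinf : (Orbit f a).Infinite) : ∀ m n : ℕ, f^[m] a = f^[n] a → m = n := by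
  intro m n h
  by_contra hne
  wlog hlt : m < n generalizing m n
  · exact this n m h.symm (Ne.symm hne) (by omega)
  have h2 : f^[m] (f^[n-m] a) = f^[m] a := by
    rw [← iterate_add_apply]
    rw [show m + (n - m) = n by omega]
    exact h.symm
  have hper : f^[n-m] a = a := hf.iterate m h2
  exact hinf (orbit_finite_of_periodic hf (by omega) hper)

end PRC3

-- omega chain enumeration lemmas
namespace PRC3
open Function

variable {f : ℕ → ℕ}

/-- in an orbit with a non-range base, every element is f^[n] b -/
lemma omega_orbit_eq (hf : Injective f) {b : ℕ} (hb : b ∉ Set.range f) :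
    Orbit f b = Set.range (fun n : ℕ => f^[n] b) := by
  ext x
  constructor
  · rintro ⟨m, n, hmn⟩
    rcases le_or_gt n m with h | h
    · refine ⟨m - n, ?_⟩
      have : f^[n] (f^[m-n] b) = f^[n] x := by
        rw [← iterate_add_apply, show n + (m - n) = m by omega]; exact hmn
      exact hf.iterate n this
    · exfalso
      have : f^[m] b = f^[m] (f^[n-m] x) := by
        rw [← iterate_add_apply, show m + (n - m) = n by omega]; exact hmn
      have hb2 : b = f^[n-m] x := hf.iterate m this
      have : n - m - 1 + 1 = n - m := by omega
      rw [← this, iterate_succ_apply'] at hb2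
      exact hb ⟨_, hb2.symm⟩
  · rintro ⟨n, rfl⟩
    exact iterate_mem_orbit f b n

lemma omega_iterate_inj (hf : Injective f) {b : ℕ} (hb : b ∉ Set.range f) :
    ∀ m n : ℕ, f^[m] b = f^[n] b → m = n := by
  intro m n h
  by_contra hne
  wlog hlt : m < n generalizing m n
  · exact this n m h.symm (Ne.symm hne) (by omega)
  have h2 : f^[m] (f^[n-m] b) = f^[m] b := by
    rw [← iterate_add_apply, show m + (n - m) = n by omega]; exact h.symm
  have hper : f^[n-m] b = b := hf.iterate m h2
  have heq : n - m - 1 + 1 = n - m := by omega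
  rw [← heq, iterate_succ_apply'] at hper
  exact hb ⟨_, hper⟩

lemma omega_orbit_infinite (hf : Injective f) {b : ℕ} (hb : b ∉ Set.range f) :
    (Orbit f b).Infinite := by
  rw [omega_orbit_eq hf hb]
  exact Set.infinite_range_of_injective (fun m n h => omega_iterate_inj hf hb m n h)

/-- ℤ-style successor on ℕ-codes: 2m ↦ m, 2m+1 ↦ -(m+1) -/
def zsucc (z : ℕ) : ℕ := if z % 2 = 0 then z + 2 else if z = 1 then 0 else z - 2

def zpred (z : ℕ) : ℕ := if z = 0 then 1 else if z % 2 = 0 then z - 2 else z + 2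

lemma zsucc_injective : Injective zsucc := by
  intro a b h
  unfold zsucc at h
  split_ifs at h <;> omega

lemma zsucc_zpred (z : ℕ) : zsucc (zpred z) = z := by
  unfold zpred
  split_ifs with h h'
  · simp [zsucc, h]
  · unfold zsucc; split_ifs <;> omega
  · unfold zsucc; split_ifs <;> omega

lemma zpred_zsucc (z : ℕ) : zpred (zsucc z) = z :=
  zsucc_injective (zsucc_zpred (zsucc z))

lemma zsucc_surjective : Surjective zsucc := fun z => ⟨zpred z, zsucc_zpred z⟩

end PRC3

-- zeta chain enumeration lemmas
namespace PRC3
open Function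

variable {f : ℕ → ℕ}

/-- ℤ-indexed enumeration of a ζ-chain with representative r -/
noncomputable def zelem (f : ℕ → ℕ) (r : ℕ) (z : ℕ) : ℕ :=
  if z % 2 = 0 then f^[z/2] r else (invFun f)^[z/2 + 1] r

section
variable (hf : Injective f) {r : ℕ} (hrange : ∀ x ∈ Orbit f r, x ∈ Set.range f)

lemma pred_iter_orbit (hf : Injective f) (hrange : ∀ x ∈ Orbit f r, x ∈ Set.range f) :
    ∀ k : ℕ, (invFun f)^[k] r ∈ Orbit f r ∧
      (f ((invFun f)^[k+1] r) = (invFun f)^[k] r) := by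
  intro k
  induction k with
  | zero =>
    refine ⟨orbit_self f r, ?_⟩
    simpa using invFun_eq (hrange r (orbit_self f r))
  | succ k ih =>
    obtain ⟨ho, hp⟩ := ih
    have hmem : (invFun f)^[k+1] r ∈ Orbit f r := by
      apply orbit_trans ho
      exact ⟨0, 1, by simpa using hp.symm⟩
    refine ⟨hmem, ?_⟩
    rw [iterate_succ_apply']
    exact invFun_eq (hrange _ hmem)

lemma f_iter_pred (hf : Injective f) (hrange : ∀ x ∈ Orbit f r, x ∈ Set.range f) :
    ∀ k : ℕ, f^[k] ((invFun f)^[k] r) = r := by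
  intro k
  induction k with
  | zero => rfl
  | succ k ih =>
    rw [iterate_succ_apply, (pred_iter_orbit hf hrange k).2, ih]

lemma pred_of_iter_eq (hf : Injective f) {x : ℕ} :
    ∀ k : ℕ, f^[k] x = r → x = (invFun f)^[k] r := by
  intro k
  induction k generalizing x with
  | zero => intro h; exact h
  | succ k ih =>
    intro h
    rw [iterate_succ_apply] at h
    have := ih h
    have hx : x = invFun f (f x) := (leftInverse_invFun hf x).symm
    rw [hx, this]
    exact (iterate_succ_apply' (invFun f) k r).symm

lemma zelem_mem_orbit (hf : Injective f) (hrange : ∀ x ∈ Orbit f r, x ∈ Set.range f)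
    (z : ℕ) : zelem f r z ∈ Orbit f r := by
  unfold zelem
  split_ifs
  · exact iterate_mem_orbit f r _
  · exact (pred_iter_orbit hf hrange _).1

lemma f_zelem (hf : Injective f) (hrange : ∀ x ∈ Orbit f r, x ∈ Set.range f) (z : ℕ) :
    f (zelem f r z) = zelem f r (zsucc z) := by
  rcases Nat.even_or_odd z with he | ho
  · have h2 : z % 2 = 0 := Nat.even_iff.mp he
    have : zsucc z = z + 2 := by unfold zsucc; simp [h2]
    rw [this]
    unfold zelem
    simp only [h2, if_pos, Nat.add_mod_left, show (z+2) % 2 = 0 by omega]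
    rw [show (z+2)/2 = z/2 + 1 by omega, iterate_succ_apply']
  · have h2 : z % 2 = 1 := Nat.odd_iff.mp ho
    rcases eq_or_ne z 1 with rfl | hz1
    · have : zsucc 1 = 0 := by unfold zsucc; norm_num
      rw [this]
      unfold zelem
      rw [if_neg (by omega), if_pos (by omega)]
      norm_num
      exact (pred_iter_orbit hf hrange 0).2
    · have hz3 : 3 ≤ z := by omega
      have : zsucc z = z - 2 := by unfold zsucc; simp [h2]; omega
      rw [this]
      unfold zelem
      rw [if_neg (by omega), if_neg (by omega), show (z-2)/2 + 1 = z/2 by omega]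
      exact (pred_iter_orbit hf hrange (z/2)).2

lemma zelem_inj (hf : Injective f) (hrange : ∀ x ∈ Orbit f r, x ∈ Set.range f)
    (hinf : (Orbit f r).Infinite) : Injective (zelem f r) := by
  have hii := iterate_inj_of_orbit_infinite hf hinf
  have key : ∀ a b : ℕ, f^[a] r = (invFun f)^[b] r → a + b = 0 := by
    intro a b h
    have : f^[b] (f^[a] r) = f^[b] ((invFun f)^[b] r) := by rw [h]
    rw [f_iter_pred hf hrange, ← iterate_add_apply] at this
    have := hii _ 0 this
    omega
  intro z1 z2 h
  unfold zelem at h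
  split_ifs at h with h1 h2 h2
  · have := hii _ _ h; omega
  · exfalso; have := key _ _ h; omega
  · exfalso; have := key _ _ h.symm; omega
  · -- both odd: p^[a] r = p^[b] r
    have h3 : ∀ a b : ℕ, (invFun f)^[a] r = (invFun f)^[b] r → a = b := by
      intro a b hab
      wlog hle : a ≤ b generalizing a b
      · exact (this b a hab.symm (by omega)).symm
      have : f^[b] ((invFun f)^[a] r) = f^[b] ((invFun f)^[b] r) := by rw [hab]
      rw [f_iter_pred hf hrange] at this
      rw [show b = (b - a) + a by omega, iterate_add_apply, f_iter_pred hf hrange] at this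
      have := hii _ 0 this
      omega
    have := h3 _ _ h
    omega

lemma zelem_surj (hf : Injective f) (hrange : ∀ x ∈ Orbit f r, x ∈ Set.range f) :
    ∀ x ∈ Orbit f r, ∃ z : ℕ, zelem f r z = x := by
  rintro x ⟨m, n, hmn⟩
  rcases le_or_gt n m with h | h
  · have : f^[n] (f^[m-n] r) = f^[n] x := by
      rw [← iterate_add_apply, show n + (m-n) = m by omega]; exact hmn
    have hx : f^[m-n] r = x := hf.iterate n this
    refine ⟨2 * (m - n), ?_⟩
    unfold zelem
    simp only [Nat.mul_mod_right, if_pos]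
    rw [show 2 * (m-n) / 2 = m - n by omega]
    exact hx
  · have : f^[m] (f^[n-m] x) = f^[m] r := by
      rw [← iterate_add_apply, show m + (n-m) = n by omega]; exact hmn.symm
    have hx : f^[n-m] x = r := hf.iterate m this
    have := pred_of_iter_eq hf (n-m) hx
    refine ⟨2 * (n - m) - 1, ?_⟩
    unfold zelem
    have hnm : 1 ≤ n - m := by omega
    rw [if_neg (by omega)]
    rw [show (2 * (n-m) - 1)/2 + 1 = n - m by omega]
    exact this.symm

end
end PRC3

-- the A-side structure
namespace PRC3
open Function

def eA (i j : ℕ) : ℕ := 2 * Nat.pair i j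
def oA (i z : ℕ) : ℕ := 2 * Nat.pair i z + 1

def fA (n : ℕ) : ℕ :=
  if n % 2 = 0 then 2 * Nat.pair (n/2).unpair.1 ((n/2).unpair.2 + 1)
  else 2 * Nat.pair (n/2).unpair.1 (zsucc (n/2).unpair.2) + 1

lemma fA_eA (i j : ℕ) : fA (eA i j) = eA i (j+1) := by
  unfold fA eA
  rw [if_pos (by omega)]
  rw [show 2 * Nat.pair i j / 2 = Nat.pair i j by omega, Nat.unpair_pair]

lemma fA_oA (i z : ℕ) : fA (oA i z) = oA i (zsucc z) := by
  unfold fA oA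
  rw [if_neg (by omega)]
  rw [show (2 * Nat.pair i z + 1) / 2 = Nat.pair i z by omega, Nat.unpair_pair]

lemma fA_iter_eA (i j m : ℕ) : fA^[m] (eA i j) = eA i (j+m) := by
  induction m with
  | zero => rfl
  | succ m ih => rw [iterate_succ_apply', ih, fA_eA, Nat.add_assoc]

lemma fA_iter_oA (i z m : ℕ) : fA^[m] (oA i z) = oA i (zsucc^[m] z) := by
  induction m with
  | zero => rfl
  | succ m ih => rw [iterate_succ_apply', ih, fA_oA, ← iterate_succ_apply' zsucc m z]

lemma eA_cases (n : ℕ) : (∃ i j, n = eA i j ∧ n % 2 = 0) ∨ (∃ i z, n = oA i z ∧ n % 2 = 1) := by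
  rcases Nat.even_or_odd n with h | h
  · left
    have h2 : n % 2 = 0 := Nat.even_iff.mp h
    refine ⟨(n/2).unpair.1, (n/2).unpair.2, ?_, h2⟩
    unfold eA
    rw [Nat.pair_unpair]
    omega
  · right
    have h2 : n % 2 = 1 := Nat.odd_iff.mp h
    refine ⟨(n/2).unpair.1, (n/2).unpair.2, ?_, h2⟩
    unfold oA
    rw [Nat.pair_unpair]
    omega

lemma eA_inj {i j i' j' : ℕ} (h : eA i j = eA i' j') : i = i' ∧ j = j' := by
  unfold eA at h
  have : Nat.pair i j = Nat.pair i' j' := by omega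
  have h1 := congrArg (fun x => x.unpair.1) this
  have h2 := congrArg (fun x => x.unpair.2) this
  simp [Nat.unpair_pair] at h1 h2
  exact ⟨h1, h2⟩

lemma oA_inj {i j i' j' : ℕ} (h : oA i j = oA i' j') : i = i' ∧ j = j' := by
  unfold oA at h
  have : Nat.pair i j = Nat.pair i' j' := by omega
  have h1 := congrArg (fun x => x.unpair.1) this
  have h2 := congrArg (fun x => x.unpair.2) this
  simp [Nat.unpair_pair] at h1 h2
  exact ⟨h1, h2⟩

lemma fA_injective : Injective fA := by
  intro a b h
  rcases eA_cases a with ⟨i, j, rfl, hp⟩ | ⟨i, z, rfl, hp⟩ <;>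
    rcases eA_cases b with ⟨i', j', rfl, hp'⟩ | ⟨i', z', rfl, hp'⟩
  · rw [fA_eA, fA_eA] at h
    obtain ⟨h1, h2⟩ := eA_inj h
    rw [h1, show j = j' by omega]
  · rw [fA_eA, fA_oA] at h
    exfalso; unfold eA oA at h; omega
  · rw [fA_oA, fA_eA] at h
    exfalso; unfold eA oA at h; omega
  · rw [fA_oA, fA_oA] at h
    obtain ⟨h1, h2⟩ := oA_inj h
    rw [h1, zsucc_injective h2]

lemma orbitA_even (i j : ℕ) : Orbit fA (eA i j) = {x | ∃ j', x = eA i j'} := by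
  ext x
  constructor
  · rintro ⟨m, n, hmn⟩
    rw [fA_iter_eA] at hmn
    rcases eA_cases x with ⟨i', j', rfl, _⟩ | ⟨i', z', rfl, _⟩
    · rw [fA_iter_eA] at hmn
      obtain ⟨h1, _⟩ := eA_inj hmn
      exact ⟨j', by rw [h1]⟩
    · rw [fA_iter_oA] at hmn
      exfalso; unfold eA oA at hmn; omega
  · rintro ⟨j', rfl⟩
    exact ⟨j', j, by rw [fA_iter_eA, fA_iter_eA, Nat.add_comm]⟩

-- zsucc reachability
lemma zsucc_iter_even (a m : ℕ) : zsucc^[m] (2*a) = 2*a + 2*m := by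
  induction m with
  | zero => rfl
  | succ m ih =>
    rw [iterate_succ_apply', ih]
    unfold zsucc
    rw [if_pos (by omega)]
    omega

lemma zsucc_odd_to_zero : ∀ z : ℕ, z % 2 = 1 → zsucc^[(z+1)/2] z = 0 := by
  intro z
  induction z using Nat.strong_induction_on with
  | _ z ih =>
    intro hz
    rcases eq_or_ne z 1 with rfl | h1
    · simp [zsucc]
    · have h3 : 3 ≤ z := by omega
      have hs : zsucc z = z - 2 := by unfold zsucc; rw [if_neg (by omega), if_neg h1]
      have : (z+1)/2 = ((z-2)+1)/2 + 1 := by omega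
      rw [this, iterate_succ_apply, hs]
      exact ih (z-2) (by omega) (by omega)

lemma zsucc_connect (z z' : ℕ) : ∃ m n : ℕ, zsucc^[m] z = zsucc^[n] z' := by
  have reach : ∀ w : ℕ, ∃ m a : ℕ, zsucc^[m] w = 2*a := by
    intro w
    rcases Nat.even_or_odd w with ⟨a, ha⟩ | h
    · exact ⟨0, a, by simp [ha, Nat.two_mul]⟩
    · exact ⟨(w+1)/2, 0, by rw [zsucc_odd_to_zero w (Nat.odd_iff.mp h)]⟩
  obtain ⟨m, a, hm⟩ := reach z
  obtain ⟨n, b, hn⟩ := reach z'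
  refine ⟨(max a b - a) + m, (max a b - b) + n, ?_⟩
  rw [iterate_add_apply, iterate_add_apply, hm, hn, zsucc_iter_even, zsucc_iter_even]
  omega

lemma orbitA_odd (i z : ℕ) : Orbit fA (oA i z) = {x | ∃ z', x = oA i z'} := by
  ext x
  constructor
  · rintro ⟨m, n, hmn⟩
    rw [fA_iter_oA] at hmn
    rcases eA_cases x with ⟨i', j', rfl, _⟩ | ⟨i', z', rfl, _⟩
    · rw [fA_iter_eA] at hmn
      exfalso; unfold eA oA at hmn; omega
    · rw [fA_iter_oA] at hmn
      obtain ⟨h1, _⟩ := oA_inj hmn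
      exact ⟨z', by rw [h1]⟩
  · rintro ⟨z', rfl⟩
    obtain ⟨m, n, hmn⟩ := zsucc_connect z z'
    exact ⟨m, n, by rw [fA_iter_oA, fA_iter_oA, hmn]⟩

lemma eA_zero_not_range (i : ℕ) : eA i 0 ∉ Set.range fA := by
  rintro ⟨y, hy⟩
  rcases eA_cases y with ⟨i', j', rfl, _⟩ | ⟨i', z', rfl, _⟩
  · rw [fA_eA] at hy
    obtain ⟨_, h2⟩ := eA_inj hy
    omega
  · rw [fA_oA] at hy
    unfold eA oA at hy; omega

lemma orbitA_infinite (n : ℕ) : (Orbit fA n).Infinite := by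
  rcases eA_cases n with ⟨i, j, rfl, _⟩ | ⟨i, z, rfl, _⟩
  · rw [orbitA_even]
    apply Set.infinite_of_injective_forall_mem (f := fun j' : ℕ => eA i j')
    · intro a b hab
      exact (eA_inj hab).2
    · intro j'
      exact ⟨j', rfl⟩
  · rw [orbitA_odd]
    apply Set.infinite_of_injective_forall_mem (f := fun z' : ℕ => oA i z')
    · intro a b hab
      exact (oA_inj hab).2
    · intro z'
      exact ⟨z', rfl⟩

lemma omegaA_even (i j : ℕ) : IsOmegaChain fA (eA i j) := by
  refine ⟨orbitA_infinite _, eA i 0, ?_, eA_zero_not_range i⟩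
  rw [orbitA_even]
  exact ⟨0, rfl⟩

lemma zetaA_odd (i z : ℕ) : IsZetaChain fA (oA i z) := by
  refine ⟨orbitA_infinite _, ?_⟩
  intro b hb
  rw [orbitA_odd] at hb
  obtain ⟨z', rfl⟩ := hb
  exact ⟨oA i (zpred z'), by rw [fA_oA, zsucc_zpred]⟩

lemma zetaA_iff (a : ℕ) : IsZetaChain fA a ↔ a % 2 = 1 := by
  constructor
  · intro hz
    by_contra h
    rcases eA_cases a with ⟨i, j, rfl, _⟩ | ⟨i, z, rfl, hp⟩
    · have hbase : eA i 0 ∈ Orbit fA (eA i j) := by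
        rw [orbitA_even]; exact ⟨0, rfl⟩
      exact eA_zero_not_range i (hz.2 _ hbase)
    · exact h hp
  · intro h
    rcases eA_cases a with ⟨i, j, rfl, hp⟩ | ⟨i, z, rfl, _⟩
    · omega
    · exact zetaA_odd i z

lemma omegaA_orbits_infinite :
    {O : Set ℕ | ∃ n : ℕ, O = Orbit fA n ∧ IsOmegaChain fA n}.Infinite := by
  apply Set.infinite_of_injective_forall_mem (f := fun i : ℕ => Orbit fA (eA i 0))
  · intro a b hab
    simp only at hab
    have : eA a 0 ∈ Orbit fA (eA b 0) := hab ▸ orbit_self fA (eA a 0)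
    rw [orbitA_even] at this
    obtain ⟨j', hj⟩ := this
    exact (eA_inj hj).1
  · intro i
    exact ⟨eA i 0, rfl, omegaA_even i 0⟩

lemma zetaA_orbits_infinite :
    {O : Set ℕ | ∃ n : ℕ, O = Orbit fA n ∧ IsZetaChain fA n}.Infinite := by
  apply Set.infinite_of_injective_forall_mem (f := fun i : ℕ => Orbit fA (oA i 0))
  · intro a b hab
    simp only at hab
    have : oA a 0 ∈ Orbit fA (oA b 0) := hab ▸ orbit_self fA (oA a 0)
    rw [orbitA_odd] at this
    obtain ⟨z', hz⟩ := this
    exact (oA_inj hz).1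
  · intro i
    exact ⟨oA i 0, rfl, zetaA_odd i 0⟩

end PRC3

-- isomorphism invariance
namespace PRC3
open Function

variable {f1 f2 h : ℕ → ℕ}

lemma iso_iter (hiso : IsInjIso f1 f2 h) (n a : ℕ) : h (f1^[n] a) = f2^[n] (h a) := by
  induction n with
  | zero => rfl
  | succ n ih => rw [iterate_succ_apply', iterate_succ_apply', hiso.2, ih]

lemma iso_orbit_mem (hiso : IsInjIso f1 f2 h) {a b : ℕ} :
    b ∈ Orbit f1 a ↔ h b ∈ Orbit f2 (h a) := by
  constructor
  · rintro ⟨m, n, hmn⟩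
    exact ⟨m, n, by rw [← iso_iter hiso, ← iso_iter hiso, hmn]⟩
  · rintro ⟨m, n, hmn⟩
    rw [← iso_iter hiso, ← iso_iter hiso] at hmn
    exact ⟨m, n, hiso.1.1 hmn⟩

lemma iso_orbit_image (hiso : IsInjIso f1 f2 h) (a : ℕ) :
    Orbit f2 (h a) = h '' Orbit f1 a := by
  ext x
  constructor
  · intro hx
    obtain ⟨y, rfl⟩ := hiso.1.2 x
    exact ⟨y, (iso_orbit_mem hiso).mpr hx, rfl⟩
  · rintro ⟨y, hy, rfl⟩
    exact (iso_orbit_mem hiso).mp hy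

lemma iso_range_mem (hiso : IsInjIso f1 f2 h) {a : ℕ} :
    a ∈ Set.range f1 ↔ h a ∈ Set.range f2 := by
  constructor
  · rintro ⟨y, rfl⟩
    exact ⟨h y, (hiso.2 y).symm⟩
  · rintro ⟨y', hy'⟩
    obtain ⟨y, rfl⟩ := hiso.1.2 y'
    refine ⟨y, hiso.1.1 ?_⟩
    rw [hiso.2 y, hy']

lemma iso_zeta (hiso : IsInjIso f1 f2 h) (a : ℕ) :
    IsZetaChain f1 a ↔ IsZetaChain f2 (h a) := by
  unfold IsZetaChain
  constructor
  · rintro ⟨hinf, hr⟩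
    constructor
    · rw [iso_orbit_image hiso]
      exact hinf.image (Set.injOn_of_injective hiso.1.1)
    · intro b hb
      obtain ⟨y, hy, rfl⟩ := (iso_orbit_image hiso a) ▸ hb
      exact (iso_range_mem hiso).mp (hr y hy)
  · rintro ⟨hinf, hr⟩
    constructor
    · rw [iso_orbit_image hiso] at hinf
      have := Set.Infinite.of_image _ hinf
      exact this
    · intro b hb
      have : h b ∈ Orbit f2 (h a) := (iso_orbit_mem hiso).mp hb
      exact (iso_range_mem hiso).mpr (hr _ this)

end PRC3

-- the B-side structure
namespace PRC3
open Function

variable (gs : ℕ → ℕ → ℕ → ℕ)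

def allEq (x s u : ℕ) : ℕ → Bool
  | 0 => true
  | n+1 => allEq x s u n && (gs x (s+(n+1)) u == gs x s u)

def isConf (c u n : ℕ) : Bool :=
  if c % 3 = 0 then false
  else if c % 3 = 1 then true
  else
    allEq gs (c/3).unpair.1 (c/3).unpair.2.unpair.1 u (n+1) &&
      (gs (c/3).unpair.1 (c/3).unpair.2.unpair.1 u == (c/3).unpair.2.unpair.2)

def cnt (c : ℕ) : ℕ → ℕ
  | 0 => 0
  | u+1 => cnt c u + (if isConf gs c u (cnt c u) then 1 else 0)

def confAt (c u : ℕ) : Bool := isConf gs c u (cnt gs c u)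

def lastConf (c : ℕ) : ℕ → ℕ
  | 0 => 0
  | u+1 => if confAt gs c u then u+1 else lastConf c u

def succC (c j : ℕ) : ℕ :=
  if j % 2 = 0 then (if confAt gs c (j/2) then j + 2 else j + 1)
  else (if confAt gs c (j/2) then
          (if lastConf gs c (j/2) = 0 then 0 else 2*(lastConf gs c (j/2) - 1)+1)
        else j + 1)

def fB (n : ℕ) : ℕ := Nat.pair n.unpair.1 (succC gs n.unpair.1 n.unpair.2)

lemma allEq_iff (x s u N : ℕ) :
    allEq gs x s u N = true ↔ ∀ j ≤ N, gs x (s+j) u = gs x s u := by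
  induction N with
  | zero =>
    constructor
    · intro _ j hj
      rw [Nat.le_zero.mp hj, Nat.add_zero]
    · intro _
      rfl
  | succ N ih =>
    simp only [allEq, Bool.and_eq_true, beq_iff_eq, ih]
    constructor
    · rintro ⟨h1, h2⟩ j hj
      rcases eq_or_lt_of_le hj with rfl | hlt
      · exact h2
      · exact h1 j (by omega)
    · intro hh
      exact ⟨fun j hj => hh j (by omega), hh (N+1) le_rfl⟩

-- lastConf characterization
lemma lastConf_spec (c u : ℕ) :
    (lastConf gs c u = 0 ∧ ∀ v < u, confAt gs c v = false) ∨
    (∃ v, lastConf gs c u = v + 1 ∧ v < u ∧ confAt gs c v = true ∧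
      ∀ w, v < w → w < u → confAt gs c w = false) := by
  induction u with
  | zero => left; exact ⟨rfl, fun v hv => absurd hv (Nat.not_lt_zero v)⟩
  | succ u ih =>
    by_cases hc : confAt gs c u = true
    · right
      refine ⟨u, ?_, by omega, hc, fun w hw1 hw2 => by omega⟩
      unfold lastConf
      rw [if_pos hc]
    · have hc' : confAt gs c u = false := by
        cases h : confAt gs c u
        · rfl
        · exact absurd h hc
      have hl : lastConf gs c (u+1) = lastConf gs c u := by
        simp [lastConf, hc]
      rcases ih with ⟨h0, hall⟩ | ⟨v, hv, hvu, hcv, hmax⟩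
      · left
        refine ⟨hl ▸ h0, fun v hv => ?_⟩
        rcases eq_or_lt_of_le (Nat.lt_succ_iff.mp hv) with rfl | h
        · exact hc'
        · exact hall v h
      · right
        refine ⟨v, hl ▸ hv, by omega, hcv, fun w hw1 hw2 => ?_⟩
        rcases eq_or_lt_of_le (Nat.lt_succ_iff.mp hw2) with rfl | h
        · exact hc'
        · exact hmax w hw1 h

lemma cnt_succ (c u : ℕ) :
    cnt gs c (u+1) = cnt gs c u + (if confAt gs c u then 1 else 0) := rfl

lemma cnt_mono (c : ℕ) : Monotone (cnt gs c) := by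
  apply monotone_nat_of_le_succ
  intro u
  rw [cnt_succ]
  split_ifs <;> omega

lemma cnt_le (c u : ℕ) : cnt gs c u ≤ u := by
  induction u with
  | zero => rfl
  | succ u ih => rw [cnt_succ]; split_ifs <;> omega

lemma cnt_lt_of_conf {c v u : ℕ} (hc : confAt gs c v = true) (hvu : v < u) :
    cnt gs c v < cnt gs c u := by
  have h1 : cnt gs c (v+1) = cnt gs c v + 1 := by rw [cnt_succ, if_pos hc]
  have h2 : cnt gs c (v+1) ≤ cnt gs c u := cnt_mono gs c hvu
  omega

lemma cnt_const_of_no_conf {c U : ℕ} (h : ∀ u ≥ U, confAt gs c u = false) :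
    ∀ v ≥ U, cnt gs c v = cnt gs c U := by
  intro v hv
  induction v, hv using Nat.le_induction with
  | base => rfl
  | succ v hv ih =>
    rw [cnt_succ, h v hv, ih]
    simp

lemma cnt_unbounded {c : ℕ} (h : ∀ U, ∃ u ≥ U, confAt gs c u = true) :
    ∀ N U, ∃ u ≥ U, confAt gs c u = true ∧ N ≤ cnt gs c u := by
  intro N
  induction N with
  | zero =>
    intro U
    obtain ⟨u, hu, hc⟩ := h U
    exact ⟨u, hu, hc, Nat.zero_le _⟩
  | succ N ih =>
    intro U
    obtain ⟨u, hu, hc, hcnt⟩ := ih U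
    obtain ⟨u', hu', hc'⟩ := h (u+1)
    refine ⟨u', by omega, hc', ?_⟩
    have : cnt gs c u < cnt gs c u' := cnt_lt_of_conf gs hc (by omega)
    omega

end PRC3

-- succC case lemmas and injectivity
namespace PRC3
open Function

variable (gs : ℕ → ℕ → ℕ → ℕ)

lemma succC_even (c u : ℕ) :
    succC gs c (2*u) = if confAt gs c u = true then 2*u+2 else 2*u+1 := by
  unfold succC
  rw [if_pos (by omega), show 2*u/2 = u by omega]

lemma succC_odd (c u : ℕ) :
    succC gs c (2*u+1) = if confAt gs c u = true then
      (if lastConf gs c u = 0 then 0 else 2*(lastConf gs c u - 1)+1) else 2*u+2 := by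
  unfold succC
  rw [if_neg (by omega), show (2*u+1)/2 = u by omega]

lemma lastConf_eq_succ {c v u : ℕ} (hc : confAt gs c v = true) (hvu : v < u)
    (hmax : ∀ w, v < w → w < u → confAt gs c w = false) : lastConf gs c u = v + 1 := by
  rcases lastConf_spec gs c u with ⟨h0, hall⟩ | ⟨v', hv', hvu', hcv', hmax'⟩
  · rw [hall v hvu] at hc; cases hc
  · rcases lt_trichotomy v v' with h | h | h
    · rw [hmax v' h hvu'] at hcv'; cases hcv'
    · rw [← h] at hv'; exact hv'
    · rw [hmax' v h hvu] at hc; cases hc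

lemma lastConf_ne_zero {c v u : ℕ} (hc : confAt gs c v = true) (hvu : v < u) :
    lastConf gs c u ≠ 0 := by
  rcases lastConf_spec gs c u with ⟨h0, hall⟩ | ⟨v', hv', _, _, _⟩
  · rw [hall v hvu] at hc; cases hc
  · omega

lemma succC_inj (c : ℕ) : Injective (succC gs c) := by
  intro j j' heq
  obtain ⟨u, hu⟩ : ∃ u, j = 2*u ∨ j = 2*u+1 := ⟨j/2, by omega⟩
  obtain ⟨u', hu'⟩ : ∃ u', j' = 2*u' ∨ j' = 2*u'+1 := ⟨j'/2, by omega⟩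
  rcases hu with rfl | rfl <;> rcases hu' with rfl | rfl
  · -- even even
    rw [succC_even, succC_even] at heq
    by_cases h1 : confAt gs c u = true <;> by_cases h2 : confAt gs c u' = true
    · rw [if_pos h1, if_pos h2] at heq; omega
    · rw [if_pos h1, if_neg h2] at heq; omega
    · rw [if_neg h1, if_pos h2] at heq; omega
    · rw [if_neg h1, if_neg h2] at heq; omega
  · -- even odd
    rw [succC_even, succC_odd] at heq
    by_cases h1 : confAt gs c u = true <;> by_cases h2 : confAt gs c u' = true
    · rw [if_pos h1, if_pos h2] at heq
      by_cases h4 : lastConf gs c u' = 0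
      · rw [if_pos h4] at heq; omega
      · rw [if_neg h4] at heq; omega
    · rw [if_pos h1, if_neg h2] at heq
      exfalso
      have huu : u = u' := by omega
      rw [← huu] at h2
      exact h2 h1
    · rw [if_neg h1, if_pos h2] at heq
      by_cases h4 : lastConf gs c u' = 0
      · rw [if_pos h4] at heq; omega
      · rw [if_neg h4] at heq
        exfalso
        rcases lastConf_spec gs c u' with ⟨h0, _⟩ | ⟨v, hv, hvu, hcv, _⟩
        · exact h4 h0
        · rw [show v = u by omega] at hcv
          exact h1 hcv
    · rw [if_neg h1, if_neg h2] at heq; omega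
  · -- odd even
    rw [succC_odd, succC_even] at heq
    by_cases h1 : confAt gs c u = true <;> by_cases h2 : confAt gs c u' = true
    · rw [if_pos h1, if_pos h2] at heq
      by_cases h3 : lastConf gs c u = 0
      · rw [if_pos h3] at heq; omega
      · rw [if_neg h3] at heq; omega
    · rw [if_pos h1, if_neg h2] at heq
      by_cases h3 : lastConf gs c u = 0
      · rw [if_pos h3] at heq; omega
      · rw [if_neg h3] at heq
        exfalso
        rcases lastConf_spec gs c u with ⟨h0, _⟩ | ⟨v, hv, hvu, hcv, _⟩
        · exact h3 h0
        · rw [show v = u' by omega] at hcv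
          exact h2 hcv
    · rw [if_neg h1, if_pos h2] at heq
      exfalso
      have huu : u = u' := by omega
      rw [huu] at h1
      exact h1 h2
    · rw [if_neg h1, if_neg h2] at heq; omega
  · -- odd odd
    rw [succC_odd, succC_odd] at heq
    by_cases h1 : confAt gs c u = true <;> by_cases h2 : confAt gs c u' = true
    · rw [if_pos h1, if_pos h2] at heq
      by_cases h3 : lastConf gs c u = 0 <;> by_cases h4 : lastConf gs c u' = 0
      · rw [if_pos h3, if_pos h4] at heq
        rcases lastConf_spec gs c u with ⟨h0u, hallu⟩ | ⟨v, hv, _, _, _⟩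
        · rcases lastConf_spec gs c u' with ⟨h0u', hallu'⟩ | ⟨v', hv', _, _, _⟩
          · rcases lt_trichotomy u u' with h | h | h
            · rw [hallu' u h] at h1; cases h1
            · omega
            · rw [hallu u' h] at h2; cases h2
          · omega
        · omega
      · rw [if_pos h3, if_neg h4] at heq; omega
      · rw [if_neg h3, if_pos h4] at heq; omega
      · rw [if_neg h3, if_neg h4] at heq
        rcases lastConf_spec gs c u with ⟨h0u, _⟩ | ⟨v, hv, hvu, hcv, hmaxu⟩
        · omega
        · rcases lastConf_spec gs c u' with ⟨h0u', _⟩ | ⟨v', hv', hvu', hcv', hmaxu'⟩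
          · omega
          · rcases lt_trichotomy u u' with h | h | h
            · exfalso
              rw [hmaxu' u (by omega) h] at h1; cases h1
            · omega
            · exfalso
              rw [hmaxu u' (by omega) h] at h2; cases h2
    · rw [if_pos h1, if_neg h2] at heq
      by_cases h3 : lastConf gs c u = 0
      · rw [if_pos h3] at heq; omega
      · rw [if_neg h3] at heq; omega
    · rw [if_neg h1, if_pos h2] at heq
      by_cases h4 : lastConf gs c u' = 0
      · rw [if_pos h4] at heq; omega
      · rw [if_neg h4] at heq; omega
    · rw [if_neg h1, if_neg h2] at heq; omega

end PRC3

-- reachability, fB basics, range characterization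
namespace PRC3
open Function

variable (gs : ℕ → ℕ → ℕ → ℕ)

lemma reach_even (c : ℕ) : ∀ j, ∃ m v, (succC gs c)^[m] j = 2*v := by
  intro j
  induction j using Nat.strong_induction_on with
  | _ j ih =>
    obtain ⟨u, hu⟩ : ∃ u, j = 2*u ∨ j = 2*u+1 := ⟨j/2, by omega⟩
    rcases hu with rfl | rfl
    · exact ⟨0, u, rfl⟩
    · by_cases h1 : confAt gs c u = true
      · by_cases h3 : lastConf gs c u = 0
        · refine ⟨1, 0, ?_⟩
          rw [iterate_one, succC_odd, if_pos h1, if_pos h3]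
        · rcases lastConf_spec gs c u with ⟨h0, _⟩ | ⟨v, hv, hvu, hcv, _⟩
          · exact absurd h0 h3
          · have hnext : succC gs c (2*u+1) = 2*v+1 := by
              rw [succC_odd, if_pos h1, if_neg h3, hv]
              omega
            obtain ⟨m, w, hm⟩ := ih (2*v+1) (by omega)
            exact ⟨m+1, w, by rw [iterate_succ_apply, hnext, hm]⟩
      · refine ⟨1, u+1, ?_⟩
        rw [iterate_one, succC_odd, if_neg h1]
        omega

lemma reach_up (c : ℕ) : ∀ u v, u ≤ v → ∃ m, (succC gs c)^[m] (2*u) = 2*v := by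
  intro u v huv
  induction v, huv using Nat.le_induction with
  | base => exact ⟨0, rfl⟩
  | succ v hv ih =>
    obtain ⟨m, hm⟩ := ih
    by_cases h1 : confAt gs c v = true
    · refine ⟨1 + m, ?_⟩
      rw [iterate_add_apply, hm, iterate_one, succC_even, if_pos h1]
      omega
    · refine ⟨2 + m, ?_⟩
      rw [iterate_add_apply, hm]
      have s1 : succC gs c (2*v) = 2*v+1 := by rw [succC_even, if_neg h1]
      have s2 : succC gs c (2*v+1) = 2*(v+1) := by rw [succC_odd, if_neg h1]; omega
      show succC gs c (succC gs c (2*v)) = 2*(v+1)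
      rw [s1, s2]

lemma connectC (c : ℕ) (j j' : ℕ) : ∃ m n, (succC gs c)^[m] j = (succC gs c)^[n] j' := by
  obtain ⟨m1, v1, h1⟩ := reach_even gs c j
  obtain ⟨m2, v2, h2⟩ := reach_even gs c j'
  obtain ⟨m3, h3⟩ := reach_up gs c v1 (max v1 v2) (le_max_left _ _)
  obtain ⟨m4, h4⟩ := reach_up gs c v2 (max v1 v2) (le_max_right _ _)
  refine ⟨m3 + m1, m4 + m2, ?_⟩
  rw [iterate_add_apply, iterate_add_apply, h1, h2, h3, h4]

lemma fB_pair (c j : ℕ) : fB gs (Nat.pair c j) = Nat.pair c (succC gs c j) := by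
  unfold fB
  rw [Nat.unpair_pair]

lemma fB_iter (c j m : ℕ) : (fB gs)^[m] (Nat.pair c j) = Nat.pair c ((succC gs c)^[m] j) := by
  induction m with
  | zero => rfl
  | succ m ih => rw [iterate_succ_apply', ih, fB_pair, ← iterate_succ_apply' (succC gs c) m j]

lemma pair_fst {c j c' j' : ℕ} (h : Nat.pair c j = Nat.pair c' j') : c = c' ∧ j = j' := by
  have h1 := congrArg (fun x => x.unpair.1) h
  have h2 := congrArg (fun x => x.unpair.2) h
  simp [Nat.unpair_pair] at h1 h2
  exact ⟨h1, h2⟩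

lemma fB_injective : Injective (fB gs) := by
  intro a b h
  rw [show a = Nat.pair a.unpair.1 a.unpair.2 by rw [Nat.pair_unpair],
      show b = Nat.pair b.unpair.1 b.unpair.2 by rw [Nat.pair_unpair]] at h ⊢
  rw [fB_pair, fB_pair] at h
  obtain ⟨h1, h2⟩ := pair_fst h
  rw [h1]
  rw [h1] at h2
  rw [succC_inj gs _ h2]

lemma orbitB (c j : ℕ) : Orbit (fB gs) (Nat.pair c j) = {x | ∃ j', x = Nat.pair c j'} := by
  ext x
  constructor
  · rintro ⟨m, n, hmn⟩
    rw [fB_iter] at hmn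
    rw [show x = Nat.pair x.unpair.1 x.unpair.2 by rw [Nat.pair_unpair]] at hmn ⊢
    rw [fB_iter] at hmn
    obtain ⟨h1, _⟩ := pair_fst hmn
    exact ⟨x.unpair.2, by rw [h1]⟩
  · rintro ⟨j', rfl⟩
    obtain ⟨m, n, hmn⟩ := connectC gs c j j'
    exact ⟨m, n, by rw [fB_iter, fB_iter, hmn]⟩

lemma orbitB_infinite (c j : ℕ) : (Orbit (fB gs) (Nat.pair c j)).Infinite := by
  rw [orbitB]
  apply Set.infinite_of_injective_forall_mem (f := fun j' : ℕ => Nat.pair c j')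
  · intro a b hab
    exact (pair_fst hab).2
  · intro j'
    exact ⟨j', rfl⟩

lemma succC_surj_of_inf (c : ℕ) (h : ∀ U, ∃ u ≥ U, confAt gs c u = true) :
    ∀ j, ∃ j', succC gs c j' = j := by
  have hdec : DecidablePred (fun u => confAt gs c u = true) := fun u => instDecidableEqBool _ _
  intro j
  obtain ⟨u, hu⟩ : ∃ u, j = 2*u ∨ j = 2*u+1 := ⟨j/2, by omega⟩
  rcases hu with rfl | rfl
  · rcases Nat.eq_zero_or_pos u with rfl | hpos
    · -- j = 0 : preimage is front at least conf stage
      obtain ⟨v0, _, hv0⟩ := h 0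
      have hex : ∃ v, confAt gs c v = true := ⟨v0, hv0⟩
      let v := Nat.find hex
      refine ⟨2*v+1, ?_⟩
      have hcv : confAt gs c v = true := Nat.find_spec hex
      have hlc : lastConf gs c v = 0 := by
        rcases lastConf_spec gs c v with ⟨h0, _⟩ | ⟨w, hw, hwv, hcw, _⟩
        · exact h0
        · exact absurd hcw (by simpa using Nat.find_min hex hwv)
      rw [succC_odd, if_pos hcv, if_pos hlc]
    · -- j = 2u, u ≥ 1 : preimage among stage u-1 elements
      by_cases h1 : confAt gs c (u-1) = true
      · refine ⟨2*(u-1), ?_⟩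
        rw [succC_even, if_pos h1]
        omega
      · refine ⟨2*(u-1)+1, ?_⟩
        rw [succC_odd, if_neg h1]
        omega
  · by_cases h1 : confAt gs c u = true
    · -- front element: preimage is front at next conf stage
      obtain ⟨v0, hv0ge, hv0⟩ := h (u+1)
      have hex : ∃ w, confAt gs c (u+1+w) = true := ⟨v0 - (u+1), by
        rw [show u+1+(v0-(u+1)) = v0 by omega]; exact hv0⟩
      let w := Nat.find hex
      have hcw : confAt gs c (u+1+w) = true := Nat.find_spec hex
      have hmax : ∀ y, u < y → y < u+1+w → confAt gs c y = false := by
        intro y hy1 hy2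
        have := Nat.find_min hex (m := y - (u+1)) (by omega)
        rw [show u+1+(y-(u+1)) = y by omega] at this
        simpa using this
      have hlc : lastConf gs c (u+1+w) = u + 1 :=
        lastConf_eq_succ gs h1 (by omega) hmax
      refine ⟨2*(u+1+w)+1, ?_⟩
      rw [succC_odd, if_pos hcw, if_neg (by omega), hlc]
      omega
    · refine ⟨2*u, ?_⟩
      rw [succC_even, if_neg h1]

lemma base_not_range (c : ℕ) (h : ¬∀ U, ∃ u ≥ U, confAt gs c u = true) :
    ∃ jb, ∀ j, succC gs c j ≠ jb := by
  push_neg at h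
  obtain ⟨U, hU⟩ := h
  have hU' : ∀ u ≥ U, confAt gs c u = false := by
    intro u hu
    have := hU u hu
    simpa using this
  by_cases hex : ∃ v, confAt gs c v = true
  · obtain ⟨v0, hv0⟩ := hex
    have hv0U : v0 < U := by
      by_contra hcon
      rw [hU' v0 (by omega)] at hv0; cases hv0
    rcases lastConf_spec gs c U with ⟨h0, hall⟩ | ⟨v, hv, hvU, hcv, hmax⟩
    · rw [hall v0 hv0U] at hv0; cases hv0
    · -- v is the greatest conf stage
      have hvmax : ∀ w, v < w → confAt gs c w = false := by
        intro w hw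
        rcases lt_or_ge w U with h' | h'
        · exact hmax w hw h'
        · exact hU' w h'
      refine ⟨2*v+1, ?_⟩
      intro j hj
      obtain ⟨u, hu⟩ : ∃ u, j = 2*u ∨ j = 2*u+1 := ⟨j/2, by omega⟩
      rcases hu with rfl | rfl
      · rw [succC_even] at hj
        by_cases h1 : confAt gs c u = true
        · rw [if_pos h1] at hj; omega
        · rw [if_neg h1] at hj
          have : u = v := by omega
          rw [this, hcv] at h1
          exact h1 rfl
      · rw [succC_odd] at hj
        by_cases h1 : confAt gs c u = true
        · rw [if_pos h1] at hj
          by_cases h2 : lastConf gs c u = 0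
          · rw [if_pos h2] at hj; omega
          · rw [if_neg h2] at hj
            rcases lastConf_spec gs c u with ⟨h0u, _⟩ | ⟨w, hw, hwu, hcw, _⟩
            · omega
            · rw [hvmax u (by omega)] at h1
              simp at h1
        · rw [if_neg h1] at hj; omega
  · push_neg at hex
    refine ⟨0, ?_⟩
    intro j hj
    obtain ⟨u, hu⟩ : ∃ u, j = 2*u ∨ j = 2*u+1 := ⟨j/2, by omega⟩
    have h1 : confAt gs c u = false := by
      have := hex u
      simpa using this
    rcases hu with rfl | rfl
    · rw [succC_even, h1] at hj
      simp at hj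
    · rw [succC_odd, h1] at hj
      simp at hj

lemma zetaB_iff (c j : ℕ) :
    IsZetaChain (fB gs) (Nat.pair c j) ↔ (∀ U, ∃ u ≥ U, confAt gs c u = true) := by
  constructor
  · intro hz
    by_contra h
    obtain ⟨jb, hjb⟩ := base_not_range gs c h
    have hmem : Nat.pair c jb ∈ Orbit (fB gs) (Nat.pair c j) := by
      rw [orbitB]; exact ⟨jb, rfl⟩
    obtain ⟨y, hy⟩ := hz.2 _ hmem
    rw [show y = Nat.pair y.unpair.1 y.unpair.2 by rw [Nat.pair_unpair], fB_pair] at hy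
    obtain ⟨h1, h2⟩ := pair_fst hy
    rw [h1] at h2
    exact hjb _ h2
  · intro h
    refine ⟨orbitB_infinite gs c j, ?_⟩
    intro b hb
    rw [orbitB] at hb
    obtain ⟨j', rfl⟩ := hb
    obtain ⟨j'', hj''⟩ := succC_surj_of_inf gs c h j'
    exact ⟨Nat.pair c j'', by rw [fB_pair, hj'']⟩

end PRC3

-- arithmetic characterization of chain types
namespace PRC3
open Function

variable (gs : ℕ → ℕ → ℕ → ℕ)

def code (x s k : ℕ) : ℕ := 3 * Nat.pair x (Nat.pair s k) + 2

lemma confAt_plain0 (i u : ℕ) : confAt gs (3*i) u = false := by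
  unfold confAt isConf
  rw [if_pos (by omega)]

lemma confAt_plain1 (i u : ℕ) : confAt gs (3*i+1) u = true := by
  unfold confAt isConf
  rw [if_neg (by omega), if_pos (by omega)]

lemma isConf_code (x s k u n : ℕ) :
    isConf gs (code x s k) u n = (allEq gs x s u (n+1) && (gs x s u == k)) := by
  unfold isConf code
  rw [if_neg (by omega), if_neg (by omega),
    show (3 * Nat.pair x (Nat.pair s k) + 2) / 3 = Nat.pair x (Nat.pair s k) by omega,
    Nat.unpair_pair, Nat.unpair_pair]

variable (L : ℕ → ℕ → ℕ)

lemma zeta_code_iff (hL : ∀ x s : ℕ, ∃ t₀ : ℕ, ∀ t ≥ t₀, gs x s t = L x s) (x s k : ℕ) :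
    (∀ U, ∃ u ≥ U, confAt gs (code x s k) u = true) ↔
      ((∀ s' ≥ s, L x s' = L x s) ∧ L x s = k) := by
  constructor
  · intro h
    have key : ∀ j₀ : ℕ, L x (s + j₀) = L x s ∨
        (∀ U, ∃ u ≥ U, confAt gs (code x s k) u = true) → True := fun _ _ => trivial
    constructor
    · intro s' hs'
      by_contra hne
      set j₀ := s' - s with hj₀
      have hs'eq : s' = s + j₀ := by omega
      obtain ⟨t₁, ht₁⟩ := hL x s
      obtain ⟨t₂, ht₂⟩ := hL x s'
      obtain ⟨u, hu, hconf, hcnt⟩ := cnt_unbounded gs h j₀ (max t₁ t₂)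
      unfold confAt at hconf
      rw [isConf_code] at hconf
      rw [Bool.and_eq_true, allEq_iff] at hconf
      have hj : gs x (s + j₀) u = gs x s u := hconf.1 j₀ (by omega)
      rw [← hs'eq] at hj
      rw [ht₂ u (by omega), ht₁ u (by omega)] at hj
      exact hne hj
    · obtain ⟨t₁, ht₁⟩ := hL x s
      obtain ⟨u, hu, hconf⟩ := h t₁
      unfold confAt at hconf
      rw [isConf_code] at hconf
      rw [Bool.and_eq_true, beq_iff_eq] at hconf
      rw [← ht₁ u (by omega)]
      exact hconf.2
  · rintro ⟨hstab, hk⟩ U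
    by_contra hcon
    push_neg at hcon
    have hcon' : ∀ u ≥ U, confAt gs (code x s k) u = false := by
      intro u hu
      have := hcon u hu
      simpa using this
    set n := cnt gs (code x s k) U with hn
    -- settle time bound
    set T := U + (Finset.range (n+2)).sup (fun j => Classical.choose (hL x (s+j))) with hT
    have hTU : T ≥ U := by omega
    have hsettle : ∀ j ≤ n+1, gs x (s+j) T = L x (s+j) := by
      intro j hj
      have hmem : j ∈ Finset.range (n+2) := Finset.mem_range.mpr (by omega)
      have hle : Classical.choose (hL x (s+j)) ≤
          (Finset.range (n+2)).sup (fun j => Classical.choose (hL x (s+j))) :=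
        Finset.le_sup (f := fun j => Classical.choose (hL x (s+j))) hmem
      exact Classical.choose_spec (hL x (s+j)) T (by omega)
    have hcntT : cnt gs (code x s k) T = n := cnt_const_of_no_conf gs hcon' T hTU
    have : confAt gs (code x s k) T = true := by
      unfold confAt
      rw [isConf_code, hcntT, Bool.and_eq_true, allEq_iff, beq_iff_eq]
      have h0 : gs x s T = L x s := by
        have := hsettle 0 (by omega)
        rwa [Nat.add_zero] at this
      constructor
      · intro j hj
        rw [hsettle j hj, hstab (s+j) (by omega), h0]
      · rw [h0, hk]
    rw [hcon' T hTU] at this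
    cases this

end PRC3

-- existence of an isomorphism between fA and fB
namespace PRC3
open Function Classical

variable (gs : ℕ → ℕ → ℕ → ℕ)

lemma exists_iso : ∃ h : ℕ → ℕ, IsInjIso fA (fB gs) h := by
  classical
  set Zs : Set ℕ := {c | ∀ U, ∃ u ≥ U, confAt gs c u = true} with hZsdef
  set Ws : Set ℕ := Zsᶜ with hWsdef
  have hWmem : ∀ i : ℕ, 3*i ∈ Ws := by
    intro i hcon
    obtain ⟨u, _, hc⟩ := hcon 0
    rw [confAt_plain0] at hc
    cases hc
  have hZmem : ∀ i : ℕ, 3*i+1 ∈ Zs := fun i U => ⟨U, le_rfl, confAt_plain1 gs i U⟩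
  have hWinf : Ws.Infinite :=
    Set.infinite_of_injective_forall_mem (f := fun i : ℕ => 3*i)
      (fun a b hab => by simp only at hab; omega) hWmem
  have hZinf : Zs.Infinite :=
    Set.infinite_of_injective_forall_mem (f := fun i : ℕ => 3*i+1)
      (fun a b hab => by simp only at hab; omega) hZmem
  haveI : Infinite ↥Ws := hWinf.to_subtype
  haveI : Infinite ↥Zs := hZinf.to_subtype
  letI dW : Denumerable ↥Ws := Nat.Subtype.denumerable Ws
  letI dZ : Denumerable ↥Zs := Nat.Subtype.denumerable Zs
  let EW : ↥Ws ≃ ℕ := Denumerable.eqv ↥Ws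
  let EZ : ↥Zs ≃ ℕ := Denumerable.eqv ↥Zs
  set wc : ℕ → ℕ := fun i => ((EW.symm i : ↥Ws) : ℕ) with hwcdef
  set zc : ℕ → ℕ := fun i => ((EZ.symm i : ↥Zs) : ℕ) with hzcdef
  have hwc_mem : ∀ i, wc i ∈ Ws := fun i => (EW.symm i).2
  have hzc_mem : ∀ i, zc i ∈ Zs := fun i => (EZ.symm i).2
  have hwc_inj : Injective wc := fun a b hab => by
    have : EW.symm a = EW.symm b := Subtype.ext hab
    simpa using congrArg EW this
  have hzc_inj : Injective zc := fun a b hab => by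
    have : EZ.symm a = EZ.symm b := Subtype.ext hab
    simpa using congrArg EZ this
  have hwc_surj : ∀ c ∈ Ws, ∃ i, wc i = c := by
    intro c hc
    exact ⟨EW ⟨c, hc⟩, by simp [hwcdef]⟩
  have hzc_surj : ∀ c ∈ Zs, ∃ i, zc i = c := by
    intro c hc
    exact ⟨EZ ⟨c, hc⟩, by simp [hzcdef]⟩
  -- base choice for ω chains
  have hbase : ∀ c : ℕ, c ∈ Ws → ∃ jb : ℕ, Nat.pair c jb ∉ Set.range (fB gs) := by
    intro c hc
    obtain ⟨jb, hjb⟩ := base_not_range gs c hc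
    refine ⟨jb, ?_⟩
    rintro ⟨y, hy⟩
    rw [show y = Nat.pair y.unpair.1 y.unpair.2 by rw [Nat.pair_unpair], fB_pair] at hy
    obtain ⟨h1, h2⟩ := pair_fst hy
    rw [h1] at h2
    exact hjb _ h2
  choose! bb hbb using hbase
  -- ζ chain data
  have hzrange : ∀ c ∈ Zs, ∀ x ∈ Orbit (fB gs) (Nat.pair c 0), x ∈ Set.range (fB gs) :=
    fun c hc => ((zetaB_iff gs c 0).mpr hc).2
  have hfBinj := fB_injective gs
  -- the isomorphism
  set hh : ℕ → ℕ := fun a =>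
    if a % 2 = 0 then
      (fB gs)^[(a/2).unpair.2] (Nat.pair (wc (a/2).unpair.1) (bb (wc (a/2).unpair.1)))
    else zelem (fB gs) (Nat.pair (zc (a/2).unpair.1) 0) ((a/2).unpair.2) with hhdef
  have e1 : ∀ i n, hh (eA i n) = (fB gs)^[n] (Nat.pair (wc i) (bb (wc i))) := by
    intro i n
    simp only [hhdef]
    rw [if_pos (by unfold eA; omega), show (eA i n)/2 = Nat.pair i n by unfold eA; omega,
      Nat.unpair_pair]
  have e2 : ∀ i z, hh (oA i z) = zelem (fB gs) (Nat.pair (zc i) 0) z := by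
    intro i z
    simp only [hhdef]
    rw [if_neg (by unfold oA; omega), show (oA i z)/2 = Nat.pair i z by unfold oA; omega,
      Nat.unpair_pair]
  have hWZdisj : ∀ c, c ∈ Ws → c ∈ Zs → False := fun c hw hz => hw hz
  -- chain id of values
  have hid1 : ∀ i n, ((hh (eA i n)).unpair.1) = wc i := by
    intro i n
    rw [e1, fB_iter, Nat.unpair_pair]
  have hid2 : ∀ i z, ∃ j', hh (oA i z) = Nat.pair (zc i) j' := by
    intro i z
    rw [e2]
    have := zelem_mem_orbit hfBinj (hzrange _ (hzc_mem i)) z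
    rw [orbitB] at this
    exact this
  refine ⟨hh, ⟨?_, ?_⟩, ?_⟩
  · -- injective
    intro a a' heq
    rcases eA_cases a with ⟨i, n, rfl, _⟩ | ⟨i, z, rfl, _⟩ <;>
      rcases eA_cases a' with ⟨i', n', rfl, _⟩ | ⟨i', z', rfl, _⟩
    · have hc : wc i = wc i' := by
        rw [← hid1 i n, ← hid1 i' n', heq]
      have hii : i = i' := hwc_inj hc
      subst hii
      rw [e1, e1] at heq
      have := omega_iterate_inj hfBinj (hbb _ (hwc_mem i)) n n' heq
      rw [this]
    · exfalso
      obtain ⟨j', hj'⟩ := hid2 i' z'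
      have h1 : wc i = zc i' := by
        have := hid1 i n
        rw [heq, hj', Nat.unpair_pair] at this
        exact this.symm
      exact hWZdisj _ (h1 ▸ hwc_mem i) (hzc_mem i')
    · exfalso
      obtain ⟨j', hj'⟩ := hid2 i z
      have h1 : wc i' = zc i := by
        have := hid1 i' n'
        rw [← heq, hj', Nat.unpair_pair] at this
        exact this.symm
      exact hWZdisj _ (h1 ▸ hwc_mem i') (hzc_mem i)
    · obtain ⟨j1, hj1⟩ := hid2 i z
      obtain ⟨j2, hj2⟩ := hid2 i' z'
      have hc : zc i = zc i' := by
        have := heq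
        rw [hj1, hj2] at this
        exact (pair_fst this).1
      have hii : i = i' := hzc_inj hc
      subst hii
      rw [e2, e2] at heq
      have := zelem_inj hfBinj (hzrange _ (hzc_mem i)) (orbitB_infinite gs _ 0) heq
      rw [this]
  · -- surjective
    intro b
    set c := b.unpair.1 with hcdef
    have hb : b = Nat.pair c b.unpair.2 := by rw [hcdef, Nat.pair_unpair]
    by_cases hc : c ∈ Zs
    · obtain ⟨i, hi⟩ := hzc_surj c hc
      have hmem : b ∈ Orbit (fB gs) (Nat.pair c 0) := by
        rw [orbitB]
        exact ⟨b.unpair.2, hb⟩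
      obtain ⟨z, hz⟩ := zelem_surj hfBinj (hzrange c hc) b hmem
      refine ⟨oA i z, ?_⟩
      rw [e2, hi, hz]
    · have hcw : c ∈ Ws := hc
      obtain ⟨i, hi⟩ := hwc_surj c hcw
      have hmem : b ∈ Orbit (fB gs) (Nat.pair c (bb c)) := by
        rw [orbitB]
        exact ⟨b.unpair.2, hb⟩
      rw [omega_orbit_eq hfBinj (hbb c hcw)] at hmem
      obtain ⟨n, hn⟩ := hmem
      refine ⟨eA i n, ?_⟩
      rw [e1, hi]
      exact hn
  · -- equivariance
    intro a
    rcases eA_cases a with ⟨i, n, rfl, _⟩ | ⟨i, z, rfl, _⟩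
    · rw [fA_eA, e1, e1, iterate_succ_apply']
    · rw [fA_oA, e2, e2, f_zelem hfBinj (hzrange _ (hzc_mem i))]

end PRC3

-- primitive recursiveness of fA
namespace PRC3
open Function

lemma zsucc_primrec : Primrec zsucc := by
  unfold zsucc
  apply Primrec.ite
  · exact PrimrecRel.comp (Primrec.eq (α := ℕ)) (Primrec.nat_mod.comp .id (.const 2)) (.const 0)
  · exact Primrec.nat_add.comp .id (.const 2)
  · apply Primrec.ite
    · exact PrimrecRel.comp (Primrec.eq (α := ℕ)) .id (.const 1)
    · exact .const 0
    · exact Primrec.nat_sub.comp .id (.const 2)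

lemma fA_primrec : Primrec fA := by
  unfold fA
  have hhalf : Primrec (fun n : ℕ => n / 2) := Primrec.nat_div.comp .id (.const 2)
  have hu1 : Primrec (fun n : ℕ => (n/2).unpair.1) :=
    Primrec.fst.comp (Primrec.unpair.comp hhalf)
  have hu2 : Primrec (fun n : ℕ => (n/2).unpair.2) :=
    Primrec.snd.comp (Primrec.unpair.comp hhalf)
  apply Primrec.ite
  · exact PrimrecRel.comp (Primrec.eq (α := ℕ)) (Primrec.nat_mod.comp .id (.const 2)) (.const 0)
  · exact Primrec.nat_mul.comp (.const 2)
      (Primrec₂.natPair.comp hu1 (Primrec.nat_add.comp hu2 (.const 1)))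
  · exact Primrec.nat_add.comp
      (Primrec.nat_mul.comp (.const 2)
        (Primrec₂.natPair.comp hu1 (zsucc_primrec.comp hu2))) (.const 1)

end PRC3

-- primitive recursiveness of fB
namespace PRC3
open Function Primrec

variable (gs : ℕ → ℕ → ℕ → ℕ)

lemma allEq_eq_rec (x s u n : ℕ) : allEq gs x s u n =
    Nat.rec true (fun n IH => IH && (gs x (s+(n+1)) u == gs x s u)) n := by
  induction n with
  | zero => rfl
  | succ n ih => simp only [allEq, ih]


lemma allEq_primrec (hgs : Primrec fun p : ℕ × ℕ × ℕ => gs p.1 p.2.1 p.2.2) :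
    Primrec fun q : (ℕ × ℕ × ℕ) × ℕ => allEq gs q.1.1 q.1.2.1 q.1.2.2 q.2 := by
  have A : Primrec fun q : (ℕ × ℕ × ℕ) × (ℕ × Bool) => q.1.1 := fst.comp fst
  have S : Primrec fun q : (ℕ × ℕ × ℕ) × (ℕ × Bool) => q.1.2.1 := (fst.comp snd).comp fst
  have U : Primrec fun q : (ℕ × ℕ × ℕ) × (ℕ × Bool) => q.1.2.2 := (snd.comp snd).comp fst
  have P1 : Primrec fun q : (ℕ × ℕ × ℕ) × (ℕ × Bool) => q.2.1 := fst.comp snd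
  have P2 : Primrec fun q : (ℕ × ℕ × ℕ) × (ℕ × Bool) => q.2.2 := snd.comp snd
  have T1 : Primrec fun q : (ℕ × ℕ × ℕ) × (ℕ × Bool) =>
      gs q.1.1 (q.1.2.1 + (q.2.1 + 1)) q.1.2.2 :=
    hgs.comp (A.pair ((nat_add.comp S (nat_add.comp P1 (const 1))).pair U))
  have T2 : Primrec fun q : (ℕ × ℕ × ℕ) × (ℕ × Bool) => gs q.1.1 q.1.2.1 q.1.2.2 :=
    hgs.comp (A.pair (S.pair U))
  have hg : Primrec fun q : (ℕ × ℕ × ℕ) × (ℕ × Bool) =>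
      (q.2.2 && (gs q.1.1 (q.1.2.1 + (q.2.1+1)) q.1.2.2 == gs q.1.1 q.1.2.1 q.1.2.2)) :=
    Primrec.and.comp P2 (Primrec.beq.comp T1 T2)
  have H := Primrec.nat_rec (f := fun _ : ℕ × ℕ × ℕ => (true : Bool))
    (g := fun (a : ℕ × ℕ × ℕ) (p : ℕ × Bool) =>
      (p.2 && (gs a.1 (a.2.1 + (p.1+1)) a.2.2 == gs a.1 a.2.1 a.2.2)))
    (const true) hg.to₂
  exact H.of_eq fun a n => (allEq_eq_rec gs a.1 a.2.1 a.2.2 n).symm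

lemma isConf_primrec (hgs : Primrec fun p : ℕ × ℕ × ℕ => gs p.1 p.2.1 p.2.2) : Primrec fun t : ℕ × ℕ × ℕ => isConf gs t.1 t.2.1 t.2.2 := by
  unfold isConf
  have C : Primrec fun t : ℕ × ℕ × ℕ => t.1 := fst
  have Umid : Primrec fun t : ℕ × ℕ × ℕ => t.2.1 := fst.comp snd
  have N : Primrec fun t : ℕ × ℕ × ℕ => t.2.2 := snd.comp snd
  have D3 : Primrec fun t : ℕ × ℕ × ℕ => t.1 / 3 := nat_div.comp C (const 3)
  have X : Primrec fun t : ℕ × ℕ × ℕ => (t.1/3).unpair.1 := fst.comp (unpair.comp D3)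
  have SS : Primrec fun t : ℕ × ℕ × ℕ => (t.1/3).unpair.2.unpair.1 :=
    fst.comp (unpair.comp (snd.comp (unpair.comp D3)))
  have K : Primrec fun t : ℕ × ℕ × ℕ => (t.1/3).unpair.2.unpair.2 :=
    snd.comp (unpair.comp (snd.comp (unpair.comp D3)))
  apply Primrec.ite
  · exact PrimrecRel.comp (Primrec.eq (α := ℕ)) (nat_mod.comp C (const 3)) (const 0)
  · exact const false
  apply Primrec.ite
  · exact PrimrecRel.comp (Primrec.eq (α := ℕ)) (nat_mod.comp C (const 3)) (const 1)
  · exact const true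
  have hall : Primrec fun t : ℕ × ℕ × ℕ =>
      allEq gs (t.1/3).unpair.1 (t.1/3).unpair.2.unpair.1 t.2.1 (t.2.2+1) :=
    (allEq_primrec gs hgs).comp ((X.pair (SS.pair Umid)).pair (nat_add.comp N (const 1)))
  have hb : Primrec fun t : ℕ × ℕ × ℕ =>
      (gs (t.1/3).unpair.1 (t.1/3).unpair.2.unpair.1 t.2.1 == (t.1/3).unpair.2.unpair.2) :=
    Primrec.beq.comp (hgs.comp (X.pair (SS.pair Umid))) K
  exact Primrec.and.comp hall hb

lemma cnt_eq_rec (c u : ℕ) : cnt gs c u =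
    Nat.rec 0 (fun v IH => IH + if isConf gs c v IH then 1 else 0) u := by
  induction u with
  | zero => rfl
  | succ u ih => simp only [cnt, ih]

lemma cnt_primrec (hgs : Primrec fun p : ℕ × ℕ × ℕ => gs p.1 p.2.1 p.2.2) : Primrec fun p : ℕ × ℕ => cnt gs p.1 p.2 := by
  have hic : Primrec fun q : ℕ × (ℕ × ℕ) => isConf gs q.1 q.2.1 q.2.2 :=
    (isConf_primrec gs hgs).comp (fst.pair ((fst.comp snd).pair (snd.comp snd)))
  have hg : Primrec fun q : ℕ × (ℕ × ℕ) =>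
      q.2.2 + if isConf gs q.1 q.2.1 q.2.2 then 1 else 0 := by
    apply nat_add.comp (snd.comp snd)
    apply Primrec.ite
    · exact PrimrecRel.comp (Primrec.eq (α := Bool)) hic (const true)
    · exact const 1
    · exact const 0
  have H := Primrec.nat_rec (f := fun _ : ℕ => (0 : ℕ))
    (g := fun (c : ℕ) (p : ℕ × ℕ) => p.2 + if isConf gs c p.1 p.2 then 1 else 0)
    (const 0) hg.to₂
  exact H.of_eq fun c u => (cnt_eq_rec gs c u).symm

lemma confAt_primrec (hgs : Primrec fun p : ℕ × ℕ × ℕ => gs p.1 p.2.1 p.2.2) : Primrec fun p : ℕ × ℕ => confAt gs p.1 p.2 := by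
  unfold confAt
  exact (isConf_primrec gs hgs).comp
    (fst.pair (snd.pair (cnt_primrec gs hgs)))

lemma lastConf_eq_rec (c u : ℕ) : lastConf gs c u =
    Nat.rec 0 (fun v IH => if confAt gs c v then v+1 else IH) u := by
  induction u with
  | zero => rfl
  | succ u ih => simp only [lastConf, ih]

lemma lastConf_primrec (hgs : Primrec fun p : ℕ × ℕ × ℕ => gs p.1 p.2.1 p.2.2) : Primrec fun p : ℕ × ℕ => lastConf gs p.1 p.2 := by
  have hca : Primrec fun q : ℕ × (ℕ × ℕ) => confAt gs q.1 q.2.1 :=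
    (confAt_primrec gs hgs).comp (fst.pair (fst.comp snd))
  have hg : Primrec fun q : ℕ × (ℕ × ℕ) =>
      if confAt gs q.1 q.2.1 then q.2.1+1 else q.2.2 := by
    apply Primrec.ite
    · exact PrimrecRel.comp (Primrec.eq (α := Bool)) hca (const true)
    · exact nat_add.comp (fst.comp snd) (const 1)
    · exact snd.comp snd
  have H := Primrec.nat_rec (f := fun _ : ℕ => (0 : ℕ))
    (g := fun (c : ℕ) (p : ℕ × ℕ) => if confAt gs c p.1 then p.1+1 else p.2)
    (const 0) hg.to₂
  exact H.of_eq fun c u => (lastConf_eq_rec gs c u).symm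

lemma succC_primrec (hgs : Primrec fun p : ℕ × ℕ × ℕ => gs p.1 p.2.1 p.2.2) : Primrec fun p : ℕ × ℕ => succC gs p.1 p.2 := by
  unfold succC
  have J : Primrec fun p : ℕ × ℕ => p.2 := snd
  have C : Primrec fun p : ℕ × ℕ => p.1 := fst
  have H2 : Primrec fun p : ℕ × ℕ => p.2 / 2 := nat_div.comp snd (const 2)
  have hca : Primrec fun p : ℕ × ℕ => confAt gs p.1 (p.2/2) :=
    (confAt_primrec gs hgs).comp (C.pair H2)
  have hlc : Primrec fun p : ℕ × ℕ => lastConf gs p.1 (p.2/2) :=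
    (lastConf_primrec gs hgs).comp (C.pair H2)
  have hcaP : PrimrecPred fun p : ℕ × ℕ => confAt gs p.1 (p.2/2) = true :=
    PrimrecRel.comp (Primrec.eq (α := Bool)) hca (const true)
  apply Primrec.ite
  · exact PrimrecRel.comp (Primrec.eq (α := ℕ)) (nat_mod.comp J (const 2)) (const 0)
  · apply Primrec.ite hcaP
    · exact nat_add.comp J (const 2)
    · exact nat_add.comp J (const 1)
  · apply Primrec.ite hcaP
    · apply Primrec.ite
      · exact PrimrecRel.comp (Primrec.eq (α := ℕ)) hlc (const 0)
      · exact const 0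
      · exact nat_add.comp
          (nat_mul.comp (const 2) (nat_sub.comp hlc (const 1))) (const 1)
    · exact nat_add.comp J (const 1)

lemma fB_primrec (hgs : Primrec fun p : ℕ × ℕ × ℕ => gs p.1 p.2.1 p.2.2) : Primrec (fB gs) := by
  unfold fB
  exact Primrec₂.natPair.comp (fst.comp unpair)
    ((succC_primrec gs hgs).comp ((fst.comp unpair).pair (snd.comp unpair)))

end PRC3

-- Turing reduction machinery
namespace PRC3
open Function

lemma partrec_recursiveIn {o f : ℕ →. ℕ} (hf : Nat.Partrec f) : RecursiveIn' o f := by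
  induction hf with
  | zero => exact .zero
  | succ => exact .succ
  | left => exact .left
  | right => exact .right
  | pair _ _ ih1 ih2 => exact .pair ih1 ih2
  | comp _ _ ih1 ih2 => exact .comp ih1 ih2
  | prec _ _ ih1 ih2 => exact .prec ih1 ih2
  | rfind _ ih => exact .rfind ih

lemma primrec_recursiveIn {o : ℕ →. ℕ} {f : ℕ → ℕ} (hf : Primrec f) : RecursiveIn' o ↑f :=
  partrec_recursiveIn (Partrec.nat_iff.mp hf.to_comp.partrec)

lemma oracle_query {o : ℕ → ℕ} {e post : ℕ → ℕ} (he : Primrec e) (hpost : Primrec post) :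
    RecursiveIn' (↑o) ↑(fun n => post (o (e n))) := by
  have h1 : RecursiveIn' (↑o : ℕ →. ℕ) fun n => (↑e : ℕ →. ℕ) n >>= (↑o : ℕ →. ℕ) :=
    RecursiveIn'.comp .oracle (primrec_recursiveIn he)
  have heq1 : (fun n => (↑e : ℕ →. ℕ) n >>= (↑o : ℕ →. ℕ)) = (↑(fun n => o (e n)) : ℕ →. ℕ) := by
    funext n
    exact Part.bind_some _ _
  rw [heq1] at h1
  have h2 : RecursiveIn' (↑o : ℕ →. ℕ) fun n => (↑(fun n => o (e n)) : ℕ →. ℕ) n >>= (↑post : ℕ →. ℕ) :=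
    RecursiveIn'.comp (primrec_recursiveIn hpost) h1
  have heq2 : (fun n => (↑(fun n => o (e n)) : ℕ →. ℕ) n >>= (↑post : ℕ →. ℕ)) =
      (↑(fun n => post (o (e n))) : ℕ →. ℕ) := by
    funext n
    exact Part.bind_some _ _
  rw [heq2] at h2
  exact h2

lemma rfind_total {q : ℕ → ℕ} {x m₀ : ℕ} (h0 : q (Nat.pair x m₀) = 0)
    (hmin : ∀ k < m₀, q (Nat.pair x k) ≠ 0) :
    (Nat.rfind fun n => (fun m => m = 0) <$> (↑q : ℕ →. ℕ) (Nat.pair x n)) = Part.some m₀ := by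
  rw [Part.eq_some_iff]
  apply Nat.mem_rfind.mpr
  constructor
  · simp [PFun.coe_val, h0]
  · intro k hk
    simp [PFun.coe_val, hmin k hk]

end PRC3

namespace PRC3
open Function

lemma reduce_of_query {o q g : ℕ → ℕ} (hq : RecursiveIn' (↑o : ℕ →. ℕ) ↑q)
    (hex : ∀ x, ∃ m, q (Nat.pair x m) = 0)
    (hval : ∀ x m, q (Nat.pair x m) = 0 → m.unpair.2 = g x) :
    RecursiveIn' (↑o : ℕ →. ℕ) ↑g := by
  classical
  have hrf := RecursiveIn'.rfind (g := (↑o : ℕ →. ℕ)) hq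
  have hpost2 : RecursiveIn' (↑o : ℕ →. ℕ) ↑(fun m : ℕ => m.unpair.2) :=
    primrec_recursiveIn (Primrec.snd.comp Primrec.unpair)
  have hG := RecursiveIn'.comp hpost2 hrf
  have hfinal : (fun a => (Nat.rfind fun n => (fun m => m = 0) <$>
      (↑q : ℕ →. ℕ) (Nat.pair a n)) >>= (↑(fun m : ℕ => m.unpair.2) : ℕ →. ℕ)) =
      (↑g : ℕ →. ℕ) := by
    funext x
    have hx := hex x
    have h0 : q (Nat.pair x (Nat.find hx)) = 0 := Nat.find_spec hx
    have hmin : ∀ k < Nat.find hx, q (Nat.pair x k) ≠ 0 := fun k hk => Nat.find_min hx hk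
    rw [rfind_total h0 hmin]
    have := hval x (Nat.find hx) h0
    exact (Part.bind_some _ _).trans (congrArg Part.some this)
  rw [hfinal] at hG
  exact hG

end PRC3

theorem prcat_delta3_injection (g : ℕ → ℕ) (gs : ℕ → ℕ → ℕ → ℕ) (L : ℕ → ℕ → ℕ)
    (hgs : Primrec fun p : ℕ × ℕ × ℕ => gs p.1 p.2.1 p.2.2)
    (hL : ∀ x s : ℕ, ∃ t₀ : ℕ, ∀ t ≥ t₀, gs x s t = L x s)
    (hlim : ∀ x : ℕ, ∃ s₀ : ℕ, ∀ s ≥ s₀, L x s = g x) :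
    ∃ fA fB : ℕ → ℕ,
      Primrec fA ∧ Primrec fB ∧ Function.Injective fA ∧ Function.Injective fB ∧
      (∀ n : ℕ, (Orbit fA n).Infinite) ∧
      {O : Set ℕ | ∃ n : ℕ, O = Orbit fA n ∧ IsOmegaChain fA n}.Infinite ∧
      {O : Set ℕ | ∃ n : ℕ, O = Orbit fA n ∧ IsZetaChain fA n}.Infinite ∧
      (∃ h : ℕ → ℕ, IsInjIso fA fB h) ∧
      (∀ h hinv : ℕ → ℕ, IsInjIso fA fB h →
        Function.LeftInverse hinv h → Function.RightInverse hinv h →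
        TuringReducible' ↑g ↑(join h hinv)) := by
  classical
  refine ⟨PRC3.fA, PRC3.fB gs, PRC3.fA_primrec, PRC3.fB_primrec gs hgs,
    PRC3.fA_injective, PRC3.fB_injective gs, PRC3.orbitA_infinite,
    PRC3.omegaA_orbits_infinite, PRC3.zetaA_orbits_infinite, PRC3.exists_iso gs, ?_⟩
  intro h hinv hiso hli hri
  unfold TuringReducible'
  set o : ℕ → ℕ := join h hinv with hodef
  -- the oracle query function
  have he : Primrec (fun p : ℕ => 2 * Nat.pair (3 * p + 2) 0 + 1) :=
    Primrec.nat_add.comp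
      (Primrec.nat_mul.comp (.const 2)
        (Primrec₂.natPair.comp
          (Primrec.nat_add.comp (Primrec.nat_mul.comp (.const 3) .id) (.const 2))
          (.const 0))) (.const 1)
  have hpost : Primrec (fun v : ℕ => 1 - v % 2) :=
    Primrec.nat_sub.comp (.const 1) (Primrec.nat_mod.comp .id (.const 2))
  have hq : RecursiveIn' (↑o : ℕ →. ℕ)
      ↑(fun p : ℕ => 1 - (o (2 * Nat.pair (3 * p + 2) 0 + 1)) % 2) :=
    PRC3.oracle_query he hpost
  -- correctness of the query
  have key : ∀ x m : ℕ, (1 - (o (2 * Nat.pair (3 * Nat.pair x m + 2) 0 + 1)) % 2 = 0) ↔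
      ((∀ s' ≥ m.unpair.1, L x s' = L x m.unpair.1) ∧ L x m.unpair.1 = m.unpair.2) := by
    intro x m
    have ho : o (2 * Nat.pair (3 * Nat.pair x m + 2) 0 + 1) =
        hinv (Nat.pair (3 * Nat.pair x m + 2) 0) := by
      rw [hodef]
      unfold join
      rw [if_neg (by omega), show (2 * Nat.pair (3 * Nat.pair x m + 2) 0 + 1)/2 =
        Nat.pair (3 * Nat.pair x m + 2) 0 by omega]
    rw [ho]
    have hq0 : (1 - (hinv (Nat.pair (3 * Nat.pair x m + 2) 0)) % 2 = 0) ↔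
        hinv (Nat.pair (3 * Nat.pair x m + 2) 0) % 2 = 1 := by
      have := Nat.mod_two_eq_zero_or_one (hinv (Nat.pair (3 * Nat.pair x m + 2) 0))
      omega
    rw [hq0]
    rw [← PRC3.zetaA_iff]
    have hz2 : IsZetaChain PRC3.fA (hinv (Nat.pair (3 * Nat.pair x m + 2) 0)) ↔
        IsZetaChain (PRC3.fB gs) (Nat.pair (3 * Nat.pair x m + 2) 0) := by
      have := PRC3.iso_zeta hiso (hinv (Nat.pair (3 * Nat.pair x m + 2) 0))
      rw [hri (Nat.pair (3 * Nat.pair x m + 2) 0)] at this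
      exact this
    rw [hz2, PRC3.zetaB_iff]
    have hcode : PRC3.code x m.unpair.1 m.unpair.2 = 3 * Nat.pair x m + 2 := by
      unfold PRC3.code
      rw [Nat.pair_unpair]
    rw [← hcode]
    exact PRC3.zeta_code_iff gs L hL x m.unpair.1 m.unpair.2
  apply PRC3.reduce_of_query hq
  · -- existence
    intro x
    obtain ⟨s₀, hs₀⟩ := hlim x
    refine ⟨Nat.pair s₀ (g x), ?_⟩
    rw [key x (Nat.pair s₀ (g x))]
    simp only [Nat.unpair_pair]
    constructor
    · intro s' hs'
      rw [hs₀ s' hs', hs₀ s₀ le_rfl]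
    · exact hs₀ s₀ le_rfl
  · -- value correctness
    intro x m hm
    rw [key x m] at hm
    obtain ⟨hstab, hk⟩ := hm
    obtain ⟨s₀, hs₀⟩ := hlim x
    have h1 : L x (max m.unpair.1 s₀) = L x m.unpair.1 := hstab _ (le_max_left _ _)
    have h2 : L x (max m.unpair.1 s₀) = g x := hs₀ _ (le_max_right _ _)
    omega
end
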